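/- arXiv:1907.07447 — 5 statements merged into one kernel-verified Lean document; each statement's English description precedes it below -/
import Mathlib

section
/- Under the stated hypotheses, the monic MVOPs satisfy the lowering relation: for every n ≥ 0 and every x ∈ ℝ, P'(x,n) + P(x,n)A = A·P(x,n) + Σ_{j=1}^{min(n,k−1)} A_{−j}(n) P(x,n−j), where P' denotes the derivative in x and A_{−j}(n) := ⟨v'(·)P(·,n), P(·,n−j)⟩ ℋ(n−j)⁻¹ ∈ M_N(ℂ). In particular the difference operator realizing P·𝒟 has order at most k−1 in the lowering direction. -/
open MeasureTheory Matrix Finset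
open scoped ComplexOrder

/-- Entrywise integral of a matrix-valued function on `ℝ`. -/
noncomputable def matInt (N : ℕ) (F : ℝ → Matrix (Fin N) (Fin N) ℂ) :
    Matrix (Fin N) (Fin N) ℂ :=
  Matrix.of fun i j => ∫ y : ℝ, F y i j

/-- Entrywise derivative of a matrix-valued function on `ℝ`. -/
noncomputable def matDeriv (N : ℕ) (F : ℝ → Matrix (Fin N) (Fin N) ℂ) (x : ℝ) :
    Matrix (Fin N) (Fin N) ℂ :=
  Matrix.of fun i j => deriv (fun y => F y i j) x

/-- `F` is (the evaluation of) a matrix polynomial. -/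
def IsMatPoly (N : ℕ) (F : ℝ → Matrix (Fin N) (Fin N) ℂ) : Prop :=
  ∃ (d : ℕ) (c : ℕ → Matrix (Fin N) (Fin N) ℂ),
    ∀ x : ℝ, F x = ∑ k ∈ Finset.range (d + 1), ((x : ℂ) ^ k) • c k

/-- `F` is a matrix polynomial of degree `n` with leading coefficient the identity. -/
def IsMonicMatPoly (N n : ℕ) (F : ℝ → Matrix (Fin N) (Fin N) ℂ) : Prop :=
  ∃ c : ℕ → Matrix (Fin N) (Fin N) ℂ, c n = 1 ∧
    ∀ x : ℝ, F x = ∑ k ∈ Finset.range (n + 1), ((x : ℂ) ^ k) • c k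

/-- The matrix-valued inner product `⟨H, G⟩ = ∫ H(y) W(y) G(y)* dy`. -/
noncomputable def matIP (N : ℕ) (W H G : ℝ → Matrix (Fin N) (Fin N) ℂ) :
    Matrix (Fin N) (Fin N) ℂ :=
  matInt N fun y => H y * W y * (G y)ᴴ

namespace MVOPAux

variable {N : ℕ}

/-- `F` is (the evaluation of) a matrix polynomial of degree `< d`. -/
def PolyLT (N d : ℕ) (F : ℝ → Matrix (Fin N) (Fin N) ℂ) : Prop :=
  ∃ c : ℕ → Matrix (Fin N) (Fin N) ℂ,
    ∀ x : ℝ, F x = ∑ k ∈ Finset.range d, ((x : ℂ) ^ k) • c k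

lemma polyLT_congr {d : ℕ} {F G : ℝ → Matrix (Fin N) (Fin N) ℂ}
    (h : ∀ x, F x = G x) (hF : PolyLT N d F) : PolyLT N d G := by
  obtain ⟨c, hc⟩ := hF
  exact ⟨c, fun x => by rw [← h x, hc x]⟩

lemma polyLT_zero (d : ℕ) : PolyLT N d (fun _ => (0 : Matrix (Fin N) (Fin N) ℂ)) :=
  ⟨fun _ => 0, fun x => by simp⟩

lemma polyLT_mono {d e : ℕ} (h : d ≤ e) {F : ℝ → Matrix (Fin N) (Fin N) ℂ}
    (hF : PolyLT N d F) : PolyLT N e F := by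
  obtain ⟨c, hc⟩ := hF
  refine ⟨fun k => if k < d then c k else 0, fun x => ?_⟩
  rw [hc x, ← Finset.sum_subset (Finset.range_subset_range.2 h)
    (fun k _ hk => by
      have : ¬ k < d := by simpa using hk
      simp [this])]
  exact Finset.sum_congr rfl fun k hk => by
    have : k < d := Finset.mem_range.1 hk
    simp [this]

lemma polyLT_add {d : ℕ} {F G : ℝ → Matrix (Fin N) (Fin N) ℂ}
    (hF : PolyLT N d F) (hG : PolyLT N d G) :
    PolyLT N d (fun x => F x + G x) := by
  obtain ⟨c, hc⟩ := hF; obtain ⟨c', hc'⟩ := hG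
  refine ⟨fun k => c k + c' k, fun x => ?_⟩
  simp [hc x, hc' x, smul_add, Finset.sum_add_distrib]

lemma polyLT_constMul {d : ℕ} (C : Matrix (Fin N) (Fin N) ℂ)
    {F : ℝ → Matrix (Fin N) (Fin N) ℂ} (hF : PolyLT N d F) :
    PolyLT N d (fun x => C * F x) := by
  obtain ⟨c, hc⟩ := hF
  refine ⟨fun k => C * c k, fun x => ?_⟩
  dsimp only
  rw [hc x, Finset.mul_sum]
  exact Finset.sum_congr rfl fun k _ => (mul_smul_comm _ _ _)

lemma polyLT_mulConst {d : ℕ} (C : Matrix (Fin N) (Fin N) ℂ)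
    {F : ℝ → Matrix (Fin N) (Fin N) ℂ} (hF : PolyLT N d F) :
    PolyLT N d (fun x => F x * C) := by
  obtain ⟨c, hc⟩ := hF
  refine ⟨fun k => c k * C, fun x => ?_⟩
  dsimp only
  rw [hc x, Finset.sum_mul]
  exact Finset.sum_congr rfl fun k _ => (smul_mul_assoc _ _ _)

lemma polyLT_smul {d : ℕ} (a : ℂ) {F : ℝ → Matrix (Fin N) (Fin N) ℂ}
    (hF : PolyLT N d F) : PolyLT N d (fun x => a • F x) := by
  obtain ⟨c, hc⟩ := hF
  refine ⟨fun k => a • c k, fun x => ?_⟩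
  dsimp only
  rw [hc x, Finset.smul_sum]
  exact Finset.sum_congr rfl fun k _ => (smul_comm _ _ _)

lemma polyLT_finsetSum {ι : Type*} {d : ℕ} (s : Finset ι)
    (f : ι → ℝ → Matrix (Fin N) (Fin N) ℂ) (h : ∀ i ∈ s, PolyLT N d (f i)) :
    PolyLT N d (fun x => ∑ i ∈ s, f i x) := by
  classical
  induction s using Finset.induction_on with
  | empty => exact polyLT_congr (fun x => by simp) (polyLT_zero d)
  | insert a s hni ih =>
    refine polyLT_congr (fun x => ?_)
      (polyLT_add (h a (Finset.mem_insert_self a s))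
        (ih fun i hi => h i (Finset.mem_insert_of_mem hi)))
    rw [Finset.sum_insert hni]

lemma polyLT_X {d : ℕ} {F : ℝ → Matrix (Fin N) (Fin N) ℂ}
    (hF : PolyLT N d F) : PolyLT N (d + 1) (fun x => (x : ℂ) • F x) := by
  obtain ⟨c, hc⟩ := hF
  refine ⟨fun k => Nat.rec 0 (fun k _ => c k) k, fun x => ?_⟩
  dsimp only
  rw [hc x, Finset.smul_sum, Finset.sum_range_succ']
  simp only [pow_succ', smul_smul]
  simp

lemma polyLT_Xpow {d : ℕ} (l : ℕ) {F : ℝ → Matrix (Fin N) (Fin N) ℂ}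
    (hF : PolyLT N d F) : PolyLT N (d + l) (fun x => ((x : ℂ) ^ l) • F x) := by
  induction l with
  | zero => exact polyLT_congr (fun x => by simp) hF
  | succ l ih =>
    refine polyLT_congr (fun x => ?_) (polyLT_X ih)
    rw [smul_smul, ← pow_succ']

lemma polyLT_polySmul {d : ℕ} (p : Polynomial ℝ) {F : ℝ → Matrix (Fin N) (Fin N) ℂ}
    (hF : PolyLT N d F) :
    PolyLT N (d + p.natDegree) (fun x => ((p.eval x : ℝ) : ℂ) • F x) := by
  refine polyLT_congr (fun x => ?_)
    (polyLT_finsetSum (Finset.range (p.natDegree + 1))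
      (fun l x => ((p.coeff l : ℂ)) • (((x : ℂ) ^ l) • F x)) (fun l hl => ?_))
  · have : ((p.eval x : ℝ) : ℂ) = ∑ l ∈ Finset.range (p.natDegree + 1),
        (p.coeff l : ℂ) * (x : ℂ) ^ l := by
      rw [Polynomial.eval_eq_sum_range]
      push_cast
      ring
    rw [this, Finset.sum_smul]
    exact Finset.sum_congr rfl fun l _ => by
      rw [smul_smul]
  · have hl' : l ≤ p.natDegree := Nat.lt_succ_iff.1 (Finset.mem_range.1 hl)
    exact polyLT_mono (by omega) (polyLT_smul _ (polyLT_Xpow l hF))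

lemma matDeriv_eq {d : ℕ} {F : ℝ → Matrix (Fin N) (Fin N) ℂ}
    {c : ℕ → Matrix (Fin N) (Fin N) ℂ}
    (hF : ∀ x : ℝ, F x = ∑ k ∈ Finset.range (d + 1), ((x : ℂ) ^ k) • c k) (x : ℝ) :
    matDeriv N F x
      = ∑ k ∈ Finset.range d, ((x : ℂ) ^ k) • ((((k : ℕ) + 1 : ℕ) : ℂ) • c (k + 1)) := by
  ext i j
  have hfun : (fun y : ℝ => F y i j)
      = fun y : ℝ => ∑ k ∈ Finset.range (d + 1), ((y : ℂ) ^ k) * c k i j := by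
    funext y
    rw [hF y]
    simp [Matrix.sum_apply, Matrix.smul_apply, smul_eq_mul]
  have hder : HasDerivAt
      (fun y : ℝ => ∑ k ∈ Finset.range (d + 1), ((y : ℂ) ^ k) * c k i j)
      (∑ k ∈ Finset.range (d + 1), (((k : ℝ) * x ^ (k - 1) : ℝ) : ℂ) * c k i j) x := by
    refine HasDerivAt.fun_sum fun k _ => ?_
    have h1 : HasDerivAt (fun y : ℝ => ((y : ℂ) ^ k))
        (((k : ℝ) * x ^ (k - 1) : ℝ) : ℂ) x := by
      have := (hasDerivAt_pow k x).ofReal_comp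
      simpa [Complex.ofReal_pow] using this
    exact h1.mul_const _
  have hmd : matDeriv N F x i j = deriv (fun y : ℝ => F y i j) x := rfl
  rw [hmd, hfun, hder.deriv]
  rw [Finset.sum_range_succ']
  have h0 : (((0 : ℕ) : ℝ) * x ^ ((0 : ℕ) - 1) : ℝ) = 0 := by simp
  rw [show ((((0 : ℕ) : ℝ) * x ^ ((0:ℕ) - 1) : ℝ) : ℂ) * c 0 i j = 0 by
    rw [h0]; simp]
  rw [add_zero, Matrix.sum_apply]
  refine Finset.sum_congr rfl fun k _ => ?_
  simp only [Matrix.smul_apply, smul_eq_mul, Nat.add_sub_cancel]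
  push_cast
  ring

lemma polyLT_matDeriv {d : ℕ} {F : ℝ → Matrix (Fin N) (Fin N) ℂ}
    {c : ℕ → Matrix (Fin N) (Fin N) ℂ}
    (hF : ∀ x : ℝ, F x = ∑ k ∈ Finset.range (d + 1), ((x : ℂ) ^ k) • c k) :
    PolyLT N d (matDeriv N F) :=
  ⟨fun k => (((k : ℕ) + 1 : ℕ) : ℂ) • c (k + 1), fun x => matDeriv_eq hF x⟩

section Int

variable {W : ℝ → Matrix (Fin N) (Fin N) ℂ}
variable (hWmeas : ∀ i j : Fin N, Measurable fun x => W x i j)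
variable (hWmom : ∀ (m : ℕ) (i j : Fin N),
  Integrable fun x : ℝ => |x| ^ m * ‖W x i j‖)

include hWmeas hWmom in
lemma integrable_pow_W (m : ℕ) (a b : Fin N) (z : ℂ) :
    Integrable fun y : ℝ => ((y : ℂ) ^ m) * W y a b * z := by
  have hmeas : AEStronglyMeasurable (fun y : ℝ => ((y : ℂ) ^ m) * W y a b * z) volume :=
    (((Complex.measurable_ofReal.pow_const m).mul (hWmeas a b)).mul_const z).aestronglyMeasurable
  refine ((hWmom m a b).mul_const ‖z‖).mono' hmeas ?_
  filter_upwards with y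
  simp [_root_.map_mul, map_pow, abs_pow]

include hWmeas hWmom in
lemma integrable_polyEntry (dF dG : ℕ) (α β : ℕ → ℂ) (a b : Fin N) :
    Integrable fun y : ℝ =>
      (∑ k ∈ Finset.range dF, ((y : ℂ) ^ k) * α k) * W y a b *
      (∑ l ∈ Finset.range dG, ((y : ℂ) ^ l) * β l) := by
  have hpt : (fun y : ℝ =>
      (∑ k ∈ Finset.range dF, ((y : ℂ) ^ k) * α k) * W y a b *
      (∑ l ∈ Finset.range dG, ((y : ℂ) ^ l) * β l))
      = fun y : ℝ => ∑ k ∈ Finset.range dF, ∑ l ∈ Finset.range dG,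
          ((y : ℂ) ^ (k + l)) * W y a b * (α k * β l) := by
    funext y
    rw [Finset.sum_mul, Finset.sum_mul]
    refine Finset.sum_congr rfl fun k _ => ?_
    rw [Finset.mul_sum]
    refine Finset.sum_congr rfl fun l _ => ?_
    rw [pow_add]; ring
  rw [hpt]
  exact integrable_finset_sum _ fun k _ => integrable_finset_sum _ fun l _ =>
    integrable_pow_W hWmeas hWmom (k + l) a b (α k * β l)

include hWmeas hWmom in
lemma integrable_entry {dF dG : ℕ} {F G : ℝ → Matrix (Fin N) (Fin N) ℂ}
    (hF : PolyLT N dF F) (hG : PolyLT N dG G) (i j : Fin N) :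
    Integrable fun y : ℝ => (F y * W y * (G y)ᴴ) i j := by
  obtain ⟨cF, hcF⟩ := hF
  obtain ⟨cG, hcG⟩ := hG
  have hpt : ∀ y : ℝ, (F y * W y * (G y)ᴴ) i j
      = ∑ b : Fin N, ∑ a : Fin N,
          (∑ k ∈ Finset.range dF, ((y : ℂ) ^ k) * cF k i a) * W y a b *
          (∑ l ∈ Finset.range dG, ((y : ℂ) ^ l) * (starRingEnd ℂ) (cG l j b)) := by
    intro y
    rw [Matrix.mul_apply]
    refine Finset.sum_congr rfl fun b _ => ?_
    rw [Matrix.conjTranspose_apply, Matrix.mul_apply, Finset.sum_mul]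
    refine Finset.sum_congr rfl fun a _ => ?_
    have h1 : F y i a = ∑ k ∈ Finset.range dF, ((y : ℂ) ^ k) * cF k i a := by
      rw [hcF y]; simp [Matrix.sum_apply, Matrix.smul_apply, smul_eq_mul]
    have h2 : star (G y j b)
        = ∑ l ∈ Finset.range dG, ((y : ℂ) ^ l) * (starRingEnd ℂ) (cG l j b) := by
      rw [hcG y]
      simp only [Matrix.sum_apply, Matrix.smul_apply, smul_eq_mul]
      rw [show (star : ℂ → ℂ) = (starRingEnd ℂ) from rfl]
      rw [map_sum]
      refine Finset.sum_congr rfl fun l _ => ?_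
      rw [(starRingEnd ℂ).map_mul, map_pow, Complex.conj_ofReal]
    rw [h1, h2]
  have hInt : Integrable (fun y : ℝ => ∑ b : Fin N, ∑ a : Fin N,
      (∑ k ∈ Finset.range dF, ((y : ℂ) ^ k) * cF k i a) * W y a b *
      (∑ l ∈ Finset.range dG, ((y : ℂ) ^ l) * (starRingEnd ℂ) (cG l j b))) volume :=
    integrable_finset_sum _ fun b _ => integrable_finset_sum _ fun a _ =>
      integrable_polyEntry hWmeas hWmom dF dG _ _ a b
  exact hInt.congr (Filter.Eventually.of_forall fun y => (hpt y).symm)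

end Int

lemma matInt_congr {F G : ℝ → Matrix (Fin N) (Fin N) ℂ}
    (h : ∀ y, F y = G y) : matInt N F = matInt N G := by
  rw [show F = G from funext h]

lemma matInt_add {F G : ℝ → Matrix (Fin N) (Fin N) ℂ}
    (hF : ∀ i j, Integrable fun y => F y i j) (hG : ∀ i j, Integrable fun y => G y i j) :
    matInt N (fun y => F y + G y) = matInt N F + matInt N G := by
  ext i j
  simp only [matInt, Matrix.of_apply, Matrix.add_apply]
  exact integral_add (hF i j) (hG i j)

lemma matInt_neg (F : ℝ → Matrix (Fin N) (Fin N) ℂ) :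
    matInt N (fun y => -(F y)) = -(matInt N F) := by
  ext i j
  simp only [matInt, Matrix.of_apply, Matrix.neg_apply]
  exact integral_neg _

lemma matInt_sub {F G : ℝ → Matrix (Fin N) (Fin N) ℂ}
    (hF : ∀ i j, Integrable fun y => F y i j) (hG : ∀ i j, Integrable fun y => G y i j) :
    matInt N (fun y => F y - G y) = matInt N F - matInt N G := by
  ext i j
  simp only [matInt, Matrix.of_apply, Matrix.sub_apply]
  exact integral_sub (hF i j) (hG i j)

lemma matInt_finsetSum {ι : Type*} (s : Finset ι) (F : ι → ℝ → Matrix (Fin N) (Fin N) ℂ)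
    (h : ∀ i ∈ s, ∀ a b, Integrable fun y => F i y a b) :
    matInt N (fun y => ∑ i ∈ s, F i y) = ∑ i ∈ s, matInt N (F i) := by
  ext a b
  simp only [matInt, Matrix.of_apply, Matrix.sum_apply]
  exact integral_finset_sum s fun i hi => h i hi a b

lemma matInt_constMul (C : Matrix (Fin N) (Fin N) ℂ) {F : ℝ → Matrix (Fin N) (Fin N) ℂ}
    (h : ∀ i j, Integrable fun y => F y i j) :
    matInt N (fun y => C * F y) = C * matInt N F := by
  ext i j
  simp only [matInt, Matrix.of_apply, Matrix.mul_apply]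
  rw [integral_finset_sum _ fun a _ => (h a j).const_mul _]
  exact Finset.sum_congr rfl fun a _ => integral_const_mul _ _

lemma matInt_mulConst (C : Matrix (Fin N) (Fin N) ℂ) {F : ℝ → Matrix (Fin N) (Fin N) ℂ}
    (h : ∀ i j, Integrable fun y => F y i j) :
    matInt N (fun y => F y * C) = matInt N F * C := by
  ext i j
  simp only [matInt, Matrix.of_apply, Matrix.mul_apply]
  rw [integral_finset_sum _ fun a _ => (h i a).mul_const _]
  exact Finset.sum_congr rfl fun a _ => integral_mul_const _ _

lemma expand (P : ℕ → ℝ → Matrix (Fin N) (Fin N) ℂ)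
    (hPmonic : ∀ n, IsMonicMatPoly N n (P n)) :
    ∀ (d : ℕ) (F : ℝ → Matrix (Fin N) (Fin N) ℂ), PolyLT N d F →
      ∃ B : ℕ → Matrix (Fin N) (Fin N) ℂ,
        ∀ x : ℝ, F x = ∑ m ∈ Finset.range d, B m * P m x := by
  intro d
  induction d with
  | zero =>
    rintro F ⟨c, hc⟩
    exact ⟨0, fun x => by simpa using hc x⟩
  | succ d ih =>
    rintro F ⟨c, hc⟩
    obtain ⟨cP, hcPd, hcP⟩ := hPmonic d
    have hG : PolyLT N d (fun x => F x - c d * P d x) := by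
      refine ⟨fun kk => c kk - c d * cP kk, fun x => ?_⟩
      dsimp only
      rw [hc x, hcP x, Finset.mul_sum]
      have heq : ∑ k ∈ Finset.range (d+1), ((x:ℂ)^k) • c k
            - ∑ k ∈ Finset.range (d+1), (c d * (((x:ℂ)^k) • cP k))
          = ∑ k ∈ Finset.range (d+1), ((x:ℂ)^k) • (c k - c d * cP k) := by
        rw [← Finset.sum_sub_distrib]
        exact Finset.sum_congr rfl fun kk _ => by rw [mul_smul_comm, ← smul_sub]
      rw [heq, Finset.sum_range_succ, hcPd, mul_one, sub_self, smul_zero, add_zero]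
    obtain ⟨B', hB'⟩ := ih _ hG
    classical
    refine ⟨fun m => if m = d then c d else B' m, fun x => ?_⟩
    dsimp only
    have h1 : ∀ m ∈ Finset.range d,
        (if m = d then c d else B' m) * P m x = B' m * P m x := fun m hm => by
      rw [if_neg (Nat.ne_of_lt (Finset.mem_range.1 hm))]
    calc F x = (F x - c d * P d x) + c d * P d x := by abel
      _ = (∑ m ∈ Finset.range d, B' m * P m x) + c d * P d x := by rw [hB' x]
      _ = (∑ m ∈ Finset.range d, (if m = d then c d else B' m) * P m x)
            + (if d = d then c d else B' d) * P d x := by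
          rw [if_pos rfl, Finset.sum_congr rfl h1]
      _ = ∑ m ∈ Finset.range (d + 1), (if m = d then c d else B' m) * P m x :=
          (Finset.sum_range_succ _ d).symm

section Main

variable {W : ℝ → Matrix (Fin N) (Fin N) ℂ}
variable (hWmeas : ∀ i j : Fin N, Measurable fun x => W x i j)
variable (hWmom : ∀ (m : ℕ) (i j : Fin N),
  Integrable fun x : ℝ => |x| ^ m * ‖W x i j‖)
variable {P : ℕ → ℝ → Matrix (Fin N) (Fin N) ℂ}
variable (hPmonic : ∀ n, IsMonicMatPoly N n (P n))
variable (hPorth : ∀ n m, n ≠ m → matIP N W (P n) (P m) = 0)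

include hPmonic in
lemma PpolyLT (n : ℕ) : PolyLT N (n + 1) (P n) :=
  ⟨(hPmonic n).choose, (hPmonic n).choose_spec.2⟩

include hWmeas hWmom hPmonic hPorth in
lemma matIP_polyLT_right_zero {n d : ℕ} (hdn : d ≤ n)
    {G : ℝ → Matrix (Fin N) (Fin N) ℂ} (hG : PolyLT N d G) :
    matIP N W (P n) G = 0 := by
  obtain ⟨B, hB⟩ := expand P hPmonic d G hG
  have h1 : matIP N W (P n) G
      = matInt N (fun y => ∑ m ∈ Finset.range d,
          (P n y * W y * (P m y)ᴴ) * (B m)ᴴ) := by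
    refine matInt_congr fun y => ?_
    rw [hB y, Matrix.conjTranspose_sum, Finset.mul_sum]
    exact Finset.sum_congr rfl fun m _ => by
      rw [Matrix.conjTranspose_mul, ← Matrix.mul_assoc]
  have hint : ∀ m ∈ Finset.range d, ∀ a b : Fin N,
      Integrable fun y => ((P n y * W y * (P m y)ᴴ) * (B m)ᴴ) a b := by
    intro m hm a b
    have h2 := integrable_entry hWmeas hWmom (PpolyLT hPmonic n) (PpolyLT hPmonic m)
    have h4 : (fun y => ((P n y * W y * (P m y)ᴴ) * (B m)ᴴ) a b)
        = fun y => ∑ c : Fin N, (P n y * W y * (P m y)ᴴ) a c * (B m)ᴴ c b := by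
      funext y; rw [Matrix.mul_apply]
    rw [h4]
    exact integrable_finset_sum _ fun c _ => (h2 a c).mul_const _
  rw [h1, matInt_finsetSum _ _ hint]
  refine Finset.sum_eq_zero fun m hm => ?_
  rw [matInt_mulConst _ (fun i j => integrable_entry hWmeas hWmom
      (PpolyLT hPmonic n) (PpolyLT hPmonic m) i j)]
  have h3 : matInt N (fun y => P n y * W y * (P m y)ᴴ) = matIP N W (P n) (P m) := rfl
  rw [h3, hPorth n m (by have := Finset.mem_range.1 hm; omega), Matrix.zero_mul]

lemma integrable_entry_constMul (C : Matrix (Fin N) (Fin N) ℂ)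
    {F : ℝ → Matrix (Fin N) (Fin N) ℂ}
    (h : ∀ i j, Integrable fun y => F y i j) (i j : Fin N) :
    Integrable fun y => (C * F y) i j := by
  have h4 : (fun y => (C * F y) i j) = fun y => ∑ a : Fin N, C i a * F y a j := by
    funext y; rw [Matrix.mul_apply]
  rw [h4]
  exact integrable_finset_sum _ fun a _ => (h a j).const_mul _

lemma integrable_entry_mulConst (C : Matrix (Fin N) (Fin N) ℂ)
    {F : ℝ → Matrix (Fin N) (Fin N) ℂ}
    (h : ∀ i j, Integrable fun y => F y i j) (i j : Fin N) :
    Integrable fun y => (F y * C) i j := by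
  have h4 : (fun y => (F y * C) i j) = fun y => ∑ a : Fin N, F y i a * C a j := by
    funext y; rw [Matrix.mul_apply]
  rw [h4]
  exact integrable_finset_sum _ fun a _ => (h i a).mul_const _

lemma integrable_entry_neg {F : ℝ → Matrix (Fin N) (Fin N) ℂ}
    (h : ∀ i j, Integrable fun y => F y i j) (i j : Fin N) :
    Integrable fun y => (-(F y)) i j := by
  have h4 : (fun y => (-(F y)) i j) = fun y => -(F y i j) := by
    funext y; rw [Matrix.neg_apply]
  rw [h4]
  exact (h i j).neg

include hWmeas hWmom hPmonic hPorth in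
lemma matIP_expandLeft {d m : ℕ} (hm : m < d) (B : ℕ → Matrix (Fin N) (Fin N) ℂ) :
    matInt N (fun y => (∑ l ∈ Finset.range d, B l * P l y) * W y * (P m y)ᴴ)
      = B m * matIP N W (P m) (P m) := by
  have h1 : matInt N (fun y => (∑ l ∈ Finset.range d, B l * P l y) * W y * (P m y)ᴴ)
      = matInt N (fun y => ∑ l ∈ Finset.range d,
          B l * (P l y * W y * (P m y)ᴴ)) := by
    refine matInt_congr fun y => ?_
    rw [Finset.sum_mul, Finset.sum_mul]
    exact Finset.sum_congr rfl fun l _ => by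
      rw [Matrix.mul_assoc, Matrix.mul_assoc, Matrix.mul_assoc]
  rw [h1, matInt_finsetSum _ _ (fun l hl a b => integrable_entry_constMul _
    (fun i j => integrable_entry hWmeas hWmom (PpolyLT hPmonic l) (PpolyLT hPmonic m) i j) a b)]
  rw [Finset.sum_eq_single_of_mem m (Finset.mem_range.2 hm) (fun l _ hlm => ?_)]
  · rw [matInt_constMul _ (fun i j => integrable_entry hWmeas hWmom
      (PpolyLT hPmonic m) (PpolyLT hPmonic m) i j)]
    rfl
  · rw [matInt_constMul _ (fun i j => integrable_entry hWmeas hWmom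
      (PpolyLT hPmonic l) (PpolyLT hPmonic m) i j)]
    have h3 : matInt N (fun y => P l y * W y * (P m y)ᴴ) = matIP N W (P l) (P m) := rfl
    rw [h3, hPorth l m hlm, Matrix.mul_zero]

end Main

lemma sum_reflect_Icc {M : Type*} [AddCommMonoid M] (n : ℕ) (g : ℕ → M) :
    ∑ m ∈ Finset.range n, g m = ∑ j ∈ Finset.Icc 1 n, g (n - j) := by
  refine Finset.sum_nbij' (fun m => n - m) (fun j => n - j) ?_ ?_ ?_ ?_ ?_
  · intro a ha; simp only [Finset.mem_range] at ha; simp only [Finset.mem_Icc]; omega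
  · intro a ha; simp only [Finset.mem_Icc] at ha; simp only [Finset.mem_range]; omega
  · intro a ha; simp only [Finset.mem_range] at ha; show n - (n - a) = a; omega
  · intro a ha; simp only [Finset.mem_Icc] at ha; show n - (n - a) = a; omega
  · intro a ha; simp only [Finset.mem_range] at ha
    show _ = _
    rw [show n - (n - a) = a by omega]

end MVOPAux

/-- **Lowering relation for monic MVOPs** (Theorem 3.2 of the paper):
if `𝒟 = ∂_x + A` has adjoint `𝒟† = −𝒟 + v'` with respect to the matrix weight `W`,
then `P'(x,n) + P(x,n)A = A P(x,n) + ∑_{j=1}^{min(n,k−1)} A_{−j}(n) P(x,n−j)`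
with `A_{−j}(n) = ⟨v' P(·,n), P(·,n−j)⟩ ℋ(n−j)⁻¹`. -/
theorem lowering_relation_for_MVOP
    (N : ℕ) (hN : 1 ≤ N)
    (W : ℝ → Matrix (Fin N) (Fin N) ℂ)
    (hWmeas : ∀ i j : Fin N, Measurable fun x => W x i j)
    (hWpos : ∀ᵐ x : ℝ, (W x).PosDef)
    (hWmom : ∀ (m : ℕ) (i j : Fin N),
      Integrable fun x : ℝ => |x| ^ m * ‖W x i j‖)
    (P : ℕ → ℝ → Matrix (Fin N) (Fin N) ℂ)
    (hPmonic : ∀ n, IsMonicMatPoly N n (P n))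
    (hPorth : ∀ n m, n ≠ m → matIP N W (P n) (P m) = 0)
    (hHpos : ∀ n, (matIP N W (P n) (P n)).PosDef)
    (v : Polynomial ℝ) (k : ℕ) (hk : 2 ≤ k) (hdeg : v.natDegree = k)
    (A : Matrix (Fin N) (Fin N) ℂ)
    (hadj : ∀ R S : ℝ → Matrix (Fin N) (Fin N) ℂ, IsMatPoly N R → IsMatPoly N S →
      matInt N (fun y => (matDeriv N R y + R y * A) * W y * (S y)ᴴ) =
      matInt N (fun y => R y * W y *
        (-(matDeriv N S y) - S y * A + ((v.derivative.eval y : ℝ) : ℂ) • S y)ᴴ)) :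
    ∀ (n : ℕ) (x : ℝ),
      matDeriv N (P n) x + P n x * A =
        A * P n x +
          ∑ j ∈ Finset.Icc 1 (min n (k - 1)),
            (matIP N W (fun y => ((v.derivative.eval y : ℝ) : ℂ) • P n y) (P (n - j)) *
                (matIP N W (P (n - j)) (P (n - j)))⁻¹) * P (n - j) x := by
  intro n x
  obtain ⟨c, hcn, hc⟩ := hPmonic n
  have hPn : MVOPAux.PolyLT N (n + 1) (P n) := ⟨c, hc⟩
  have hQ : MVOPAux.PolyLT N n
      (fun y => matDeriv N (P n) y + P n y * A - A * P n y) := by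
    refine ⟨fun kk => (((kk + 1 : ℕ)) : ℂ) • c (kk + 1) + (c kk * A - A * c kk),
      fun y => ?_⟩
    have hD := MVOPAux.matDeriv_eq hc y
    have hcomm : P n y * A - A * P n y
        = ∑ kk ∈ Finset.range n, ((y : ℂ) ^ kk) • (c kk * A - A * c kk) := by
      rw [hc y, Finset.sum_mul, Finset.mul_sum]
      have heq : ∑ kk ∈ Finset.range (n + 1), (((y : ℂ) ^ kk) • c kk) * A
            - ∑ kk ∈ Finset.range (n + 1), A * (((y : ℂ) ^ kk) • c kk)
          = ∑ kk ∈ Finset.range (n + 1), ((y : ℂ) ^ kk) • (c kk * A - A * c kk) := by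
        rw [← Finset.sum_sub_distrib]
        exact Finset.sum_congr rfl fun kk _ => by
          rw [Matrix.smul_mul, Matrix.mul_smul, ← smul_sub]
      rw [heq, Finset.sum_range_succ, hcn, Matrix.one_mul, Matrix.mul_one, sub_self,
        smul_zero, add_zero]
    dsimp only
    rw [add_sub_assoc, hD, hcomm, ← Finset.sum_add_distrib]
    exact Finset.sum_congr rfl fun kk _ => (smul_add _ _ _).symm
  obtain ⟨B, hB⟩ := MVOPAux.expand P hPmonic n _ hQ
  -- key evaluation of coefficients via the adjointness relation
  have hT : ∀ m, m < n →
      matInt N (fun y => (matDeriv N (P n) y + P n y * A - A * P n y) * W y * (P m y)ᴴ)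
        = matIP N W (fun y => ((v.derivative.eval y : ℝ) : ℂ) • P n y) (P m) := by
    intro m hmn
    obtain ⟨cm, hcmm, hcm⟩ := hPmonic m
    have hPm : MVOPAux.PolyLT N (m + 1) (P m) := ⟨cm, hcm⟩
    have hS1 : MVOPAux.PolyLT N (m + 1) (fun y => matDeriv N (P m) y + P m y * A) :=
      MVOPAux.polyLT_add (MVOPAux.polyLT_mono (Nat.le_succ m) (MVOPAux.polyLT_matDeriv hcm))
        (MVOPAux.polyLT_mulConst A hPm)
    have hF1 : MVOPAux.PolyLT N (n + 1) (fun y => matDeriv N (P n) y + P n y * A) :=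
      MVOPAux.polyLT_add (MVOPAux.polyLT_mono (Nat.le_succ n) (MVOPAux.polyLT_matDeriv hc))
        (MVOPAux.polyLT_mulConst A hPn)
    have hF2 : MVOPAux.PolyLT N (n + 1) (fun y => A * P n y) :=
      MVOPAux.polyLT_constMul A hPn
    have hsP : MVOPAux.PolyLT N ((n + 1) + v.derivative.natDegree)
        (fun y => ((v.derivative.eval y : ℝ) : ℂ) • P n y) :=
      MVOPAux.polyLT_polySmul v.derivative hPn
    have hsplit :
        matInt N (fun y => (matDeriv N (P n) y + P n y * A - A * P n y) * W y * (P m y)ᴴ)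
          = matInt N (fun y => (matDeriv N (P n) y + P n y * A) * W y * (P m y)ᴴ)
            - matInt N (fun y => (A * P n y) * W y * (P m y)ᴴ) := by
      rw [MVOPAux.matInt_congr (G := fun y =>
          (matDeriv N (P n) y + P n y * A) * W y * (P m y)ᴴ
            - (A * P n y) * W y * (P m y)ᴴ)
          (fun y => by rw [Matrix.sub_mul, Matrix.sub_mul])]
      exact MVOPAux.matInt_sub
        (fun i j => MVOPAux.integrable_entry hWmeas hWmom hF1 hPm i j)
        (fun i j => MVOPAux.integrable_entry hWmeas hWmom hF2 hPm i j)
    have hzero2 : matInt N (fun y => (A * P n y) * W y * (P m y)ᴴ) = 0 := by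
      rw [MVOPAux.matInt_congr (G := fun y => A * (P n y * W y * (P m y)ᴴ))
          (fun y => by simp only [Matrix.mul_assoc])]
      rw [MVOPAux.matInt_constMul _ (fun i j =>
        MVOPAux.integrable_entry hWmeas hWmom hPn hPm i j)]
      have h3 : matInt N (fun y => P n y * W y * (P m y)ᴴ) = matIP N W (P n) (P m) := rfl
      rw [h3, hPorth n m (by omega), Matrix.mul_zero]
    rw [hsplit]
    have hadj' := hadj (P n) (P m) ⟨n, c, hc⟩ ⟨m, cm, hcm⟩
    rw [hadj']
    have htrans : matInt N (fun y => P n y * W y *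
          (-(matDeriv N (P m) y) - P m y * A + ((v.derivative.eval y : ℝ) : ℂ) • P m y)ᴴ)
        = matInt N (fun y =>
            -(P n y * W y * ((matDeriv N (P m) y + P m y * A))ᴴ)
            + (((v.derivative.eval y : ℝ) : ℂ) • P n y) * W y * (P m y)ᴴ) := by
      refine MVOPAux.matInt_congr fun y => ?_
      have h5 : -(matDeriv N (P m) y) - P m y * A + ((v.derivative.eval y : ℝ) : ℂ) • P m y
          = -(matDeriv N (P m) y + P m y * A)
            + ((v.derivative.eval y : ℝ) : ℂ) • P m y := by abel
      rw [h5, Matrix.conjTranspose_add, Matrix.conjTranspose_neg,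
        Matrix.conjTranspose_smul, Complex.star_def, Complex.conj_ofReal,
        Matrix.mul_add, Matrix.mul_neg, Matrix.mul_smul,
        ← Matrix.smul_mul, ← Matrix.smul_mul]
    rw [htrans]
    rw [MVOPAux.matInt_add
      (MVOPAux.integrable_entry_neg (fun i j =>
        MVOPAux.integrable_entry hWmeas hWmom hPn hS1 i j))
      (fun i j => MVOPAux.integrable_entry hWmeas hWmom hsP hPm i j)]
    rw [MVOPAux.matInt_neg]
    have hzero1 : matInt N (fun y => P n y * W y * ((matDeriv N (P m) y + P m y * A))ᴴ)
        = 0 :=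
      MVOPAux.matIP_polyLT_right_zero hWmeas hWmom hPmonic hPorth (by omega) hS1
    rw [hzero1, hzero2]
    simp only [neg_zero, zero_add, sub_zero]
    rfl
  have hHunit : ∀ m : ℕ, IsUnit (matIP N W (P m) (P m)).det := fun m =>
    ((hHpos m).det_pos).ne'.isUnit
  have hBm : ∀ m, m < n → B m
      = matIP N W (fun y => ((v.derivative.eval y : ℝ) : ℂ) • P n y) (P m)
        * (matIP N W (P m) (P m))⁻¹ := by
    intro m hmn
    have hexp : matInt N
        (fun y => (matDeriv N (P n) y + P n y * A - A * P n y) * W y * (P m y)ᴴ)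
        = B m * matIP N W (P m) (P m) := by
      rw [MVOPAux.matInt_congr (G := fun y =>
          (∑ l ∈ Finset.range n, B l * P l y) * W y * (P m y)ᴴ)
          (fun y => by
            rw [show (∑ l ∈ Finset.range n, B l * P l y)
              = matDeriv N (P n) y + P n y * A - A * P n y from (hB y).symm])]
      exact MVOPAux.matIP_expandLeft hWmeas hWmom hPmonic hPorth hmn B
    calc B m = B m * (matIP N W (P m) (P m) * (matIP N W (P m) (P m))⁻¹) := by
          rw [Matrix.mul_nonsing_inv _ (hHunit m), Matrix.mul_one]
      _ = (B m * matIP N W (P m) (P m)) * (matIP N W (P m) (P m))⁻¹ := by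
          rw [Matrix.mul_assoc]
      _ = _ := by rw [← hexp, hT m hmn]
  have hTzero : ∀ m, m + k ≤ n →
      matIP N W (fun y => ((v.derivative.eval y : ℝ) : ℂ) • P n y) (P m) = 0 := by
    intro m hmk
    obtain ⟨cm, hcmm, hcm⟩ := hPmonic m
    have hPm : MVOPAux.PolyLT N (m + 1) (P m) := ⟨cm, hcm⟩
    have hcongr : matIP N W (fun y => ((v.derivative.eval y : ℝ) : ℂ) • P n y) (P m)
        = matIP N W (P n) (fun y => ((v.derivative.eval y : ℝ) : ℂ) • P m y) := by
      unfold matIP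
      refine MVOPAux.matInt_congr fun y => ?_
      rw [Matrix.smul_mul, Matrix.smul_mul, Matrix.conjTranspose_smul,
        Complex.star_def, Complex.conj_ofReal, Matrix.mul_smul]
    rw [hcongr]
    refine MVOPAux.matIP_polyLT_right_zero hWmeas hWmom hPmonic hPorth
      (show (m + 1) + v.derivative.natDegree ≤ n from ?_)
      (MVOPAux.polyLT_polySmul v.derivative hPm)
    have hvd : v.derivative.natDegree ≤ k - 1 := by
      have := Polynomial.natDegree_derivative_le v
      omega
    omega
  have hfinal : matDeriv N (P n) x + P n x * A - A * P n x
      = ∑ j ∈ Finset.Icc 1 (min n (k - 1)),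
          (matIP N W (fun y => ((v.derivative.eval y : ℝ) : ℂ) • P n y) (P (n - j)) *
              (matIP N W (P (n - j)) (P (n - j)))⁻¹) * P (n - j) x := by
    have h0' : matDeriv N (P n) x + P n x * A - A * P n x
        = ∑ m ∈ Finset.range n, B m * P m x := hB x
    rw [h0']
    have h6 : ∑ m ∈ Finset.range n, B m * P m x
        = ∑ m ∈ Finset.range n,
            (matIP N W (fun y => ((v.derivative.eval y : ℝ) : ℂ) • P n y) (P m) *
              (matIP N W (P m) (P m))⁻¹) * P m x :=
      Finset.sum_congr rfl fun m hm => by rw [hBm m (Finset.mem_range.1 hm)]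
    rw [h6, MVOPAux.sum_reflect_Icc n]
    refine (Finset.sum_subset (Finset.Icc_subset_Icc_right (min_le_left _ _)) ?_).symm
    intro j hj hj'
    have hjk : (n - j) + k ≤ n := by
      simp only [Finset.mem_Icc] at hj hj'
      omega
    rw [hTzero _ hjk, Matrix.zero_mul, Matrix.zero_mul]
  rw [show matDeriv N (P n) x + P n x * A
      = A * P n x + (matDeriv N (P n) x + P n x * A - A * P n x) from by abel, hfinal]
end

section
/- Under the stated hypotheses, the monic MVOPs satisfy the raising relation: for every n ≥ 0 and every x ∈ ℝ, −P'(x,n) − P(x,n)A + v'(x)P(x,n) = Σ_{i=0}^{k−1} ℋ(n) A_{−i}(n+i)* ℋ(n+i)⁻¹ P(x,n+i), where A_0(m) := A and, for 1 ≤ i ≤ k−1, A_{−i}(m) := ⟨v'(·)P(·,m), P(·,m−i)⟩ ℋ(m−i)⁻¹ when m ≥ i. -/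
open MeasureTheory Matrix Finset
open scoped ComplexOrder

/-- The coefficient `⟨v'(·)P(·,n), P(·,m)⟩ ℋ(m)⁻¹`. -/
noncomputable def vCoef (N : ℕ) (W : ℝ → Matrix (Fin N) (Fin N) ℂ) (v : Polynomial ℝ)
    (P : ℕ → ℝ → Matrix (Fin N) (Fin N) ℂ) (n m : ℕ) : Matrix (Fin N) (Fin N) ℂ :=
  matIP N W (fun y => ((v.derivative.eval y : ℝ) : ℂ) • P n y) (P m) *
    (matIP N W (P m) (P m))⁻¹

namespace Raising

variable {N : ℕ}

/-- `F` is represented by coefficients `c` on `range d` (degree `≤ d − 1`). -/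
def Rep (N d : ℕ) (F : ℝ → Matrix (Fin N) (Fin N) ℂ)
    (c : ℕ → Matrix (Fin N) (Fin N) ℂ) : Prop :=
  ∀ x : ℝ, F x = ∑ j ∈ Finset.range d, ((x : ℂ) ^ j) • c j

lemma rep_congr {d : ℕ} {F G : ℝ → Matrix (Fin N) (Fin N) ℂ} {c}
    (hFG : ∀ x, F x = G x) (h : Rep N d F c) : Rep N d G c := fun x => (hFG x) ▸ h x

lemma rep_pad {d d' : ℕ} {F : ℝ → Matrix (Fin N) (Fin N) ℂ} {c}
    (h : Rep N d F c) (hdd : d ≤ d') :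
    Rep N d' F (fun t => if t < d then c t else 0) := by
  intro x
  rw [h x]
  rw [show Finset.range d = Finset.range d' ∩ Finset.range d from
    (Finset.inter_eq_right.mpr (Finset.range_subset_range.mpr hdd)).symm, ← Finset.sum_ite_mem]
  exact Finset.sum_congr rfl fun t _ => by
    by_cases htd : t < d <;> simp [htd, Finset.mem_range]

lemma rep_drop {d : ℕ} {F : ℝ → Matrix (Fin N) (Fin N) ℂ} {c}
    (h : Rep N (d + 1) F c) (hc : c d = 0) : Rep N d F c := by
  intro x
  rw [h x, Finset.sum_range_succ, hc, smul_zero, add_zero]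

lemma rep_add {d : ℕ} {F G : ℝ → Matrix (Fin N) (Fin N) ℂ} {c e}
    (hF : Rep N d F c) (hG : Rep N d G e) :
    Rep N d (fun x => F x + G x) (fun t => c t + e t) := by
  intro x
  dsimp only
  rw [hF x, hG x, ← Finset.sum_add_distrib]
  exact Finset.sum_congr rfl fun t _ => (smul_add _ _ _).symm

lemma rep_neg {d : ℕ} {F : ℝ → Matrix (Fin N) (Fin N) ℂ} {c}
    (hF : Rep N d F c) : Rep N d (fun x => -F x) (fun t => -c t) := by
  intro x
  dsimp only
  rw [hF x, ← Finset.sum_neg_distrib]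
  exact Finset.sum_congr rfl fun t _ => (smul_neg _ _).symm

lemma rep_sub {d : ℕ} {F G : ℝ → Matrix (Fin N) (Fin N) ℂ} {c e}
    (hF : Rep N d F c) (hG : Rep N d G e) :
    Rep N d (fun x => F x - G x) (fun t => c t - e t) := by
  have h := rep_add hF (rep_neg hG)
  intro x
  have := h x
  dsimp only at this ⊢
  rw [sub_eq_add_neg, this]
  exact Finset.sum_congr rfl fun t _ => by rw [sub_eq_add_neg]

lemma rep_lmul {d : ℕ} {F : ℝ → Matrix (Fin N) (Fin N) ℂ} {c}
    (B : Matrix (Fin N) (Fin N) ℂ) (hF : Rep N d F c) :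
    Rep N d (fun x => B * F x) (fun t => B * c t) := by
  intro x
  dsimp only
  rw [hF x, Finset.mul_sum]
  exact Finset.sum_congr rfl fun t _ => (Matrix.mul_smul _ _ _)

lemma rep_rmul {d : ℕ} {F : ℝ → Matrix (Fin N) (Fin N) ℂ} {c}
    (B : Matrix (Fin N) (Fin N) ℂ) (hF : Rep N d F c) :
    Rep N d (fun x => F x * B) (fun t => c t * B) := by
  intro x
  dsimp only
  rw [hF x, Finset.sum_mul]
  exact Finset.sum_congr rfl fun t _ => (Matrix.smul_mul _ _ _)

lemma rep_csmul {d : ℕ} {F : ℝ → Matrix (Fin N) (Fin N) ℂ} {c} (z : ℂ)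
    (hF : Rep N d F c) : Rep N d (fun x => z • F x) (fun t => z • c t) := by
  intro x
  dsimp only
  rw [hF x, Finset.smul_sum]
  exact Finset.sum_congr rfl fun t _ => smul_comm _ _ _

lemma rep_xsmul {d : ℕ} {F : ℝ → Matrix (Fin N) (Fin N) ℂ} {c}
    (hF : Rep N d F c) :
    Rep N (d + 1) (fun x => (x : ℂ) • F x) (fun t => if t = 0 then 0 else c (t - 1)) := by
  intro x
  dsimp only
  rw [hF x, Finset.smul_sum, Finset.sum_range_succ']
  have h1 : ∀ i ∈ Finset.range d,
      ((x : ℂ) ^ (i + 1)) • (if i + 1 = 0 then (0 : Matrix (Fin N) (Fin N) ℂ) else c (i + 1 - 1))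
        = (x : ℂ) • (((x : ℂ) ^ i) • c i) := by
    intro i _
    rw [if_neg (Nat.succ_ne_zero i), Nat.add_sub_cancel, smul_smul, pow_succ']
  rw [Finset.sum_congr rfl h1]
  simp

lemma rep_pow_smul {d : ℕ} {F : ℝ → Matrix (Fin N) (Fin N) ℂ} {c} (K : ℕ)
    (hF : Rep N d F c) :
    ∃ e, Rep N (K + d) (fun x => ((x : ℂ) ^ K) • F x) e := by
  induction K with
  | zero =>
    refine ⟨c, ?_⟩
    rw [Nat.zero_add]
    exact rep_congr (fun x => by simp) hF
  | succ K ih =>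
    obtain ⟨e, he⟩ := ih
    have h := rep_xsmul he
    have hKd : K + d + 1 = K + 1 + d := by omega
    rw [hKd] at h
    refine ⟨_, rep_congr (fun x => ?_) h⟩
    rw [smul_smul, ← pow_succ']

lemma rep_scalar_smul {d : ℕ} {F : ℝ → Matrix (Fin N) (Fin N) ℂ} {c}
    (K : ℕ) (f : ℝ → ℂ) (a : ℕ → ℂ)
    (hf : ∀ x : ℝ, f x = ∑ m ∈ Finset.range K, (x : ℂ) ^ m * a m)
    (hF : Rep N (d + 1) F c) :
    ∃ e, Rep N (K + d) (fun x => f x • F x) e := by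
  induction K generalizing f a with
  | zero =>
    refine ⟨fun _ => 0, fun x => ?_⟩
    simp [hf x]
  | succ K ih =>
    obtain ⟨e₁, he₁⟩ := ih (fun x => ∑ m ∈ Finset.range K, (x : ℂ) ^ m * a m) a fun _ => rfl
    obtain ⟨e₂, he₂⟩ := rep_pow_smul (c := c) K hF
    have h₂ : Rep N (K + (d + 1)) (fun x => a K • (((x : ℂ) ^ K) • F x)) _ :=
      rep_csmul (a K) he₂
    have h₁ : Rep N (K + d + 1) (fun x => (∑ m ∈ Finset.range K, (x : ℂ) ^ m * a m) • F x)
        (fun t => if t < K + d then e₁ t else 0) :=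
      rep_pad he₁ (Nat.le_succ _)
    have hKd : K + (d + 1) = K + d + 1 := by omega
    rw [hKd] at h₂
    have h3 := rep_add h₁ h₂
    have hKd2 : K + d + 1 = K + 1 + d := by omega
    rw [hKd2] at h3
    refine ⟨_, rep_congr (fun x => ?_) h3⟩
    rw [hf x, Finset.sum_range_succ, add_smul, smul_smul, mul_comm (a K) ((x : ℂ) ^ K)]

lemma rep_deriv {d : ℕ} {F : ℝ → Matrix (Fin N) (Fin N) ℂ} {c}
    (hF : Rep N d F c) (hc : ∀ t, d ≤ t → c t = 0) :
    Rep N d (matDeriv N F) (fun t => (((t + 1 : ℕ) : ℂ)) • c (t + 1)) := by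
  intro x
  have hent : ∀ i j, HasDerivAt (fun y : ℝ => F y i j)
      (∑ t ∈ Finset.range d, (t : ℂ) * (x : ℂ) ^ (t - 1) * c t i j) x := by
    intro i j
    have hfun : (fun y : ℝ => F y i j)
        = fun y : ℝ => ∑ t ∈ Finset.range d, (y : ℂ) ^ t * c t i j := by
      funext y
      rw [hF y]
      simp [Matrix.sum_apply, Matrix.smul_apply, smul_eq_mul]
    rw [hfun]
    apply HasDerivAt.fun_sum
    intro t _
    have h1 : HasDerivAt (fun y : ℝ => ((y : ℂ)) ^ t) ((t : ℂ) * (x : ℂ) ^ (t - 1)) x :=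
      (hasDerivAt_pow t ((x : ℂ))).comp_ofReal
    simpa using h1.mul_const (c t i j)
  have hmd : matDeriv N F x = ∑ t ∈ Finset.range d, ((t : ℂ) * (x : ℂ) ^ (t - 1)) • c t := by
    ext i j
    simp only [matDeriv, Matrix.of_apply, Matrix.sum_apply, Matrix.smul_apply, smul_eq_mul]
    rw [(hent i j).deriv]
  rw [hmd]
  rcases d with _ | e
  · simp
  · rw [Finset.sum_range_succ', Finset.sum_range_succ]
    have htop : c (e + 1) = 0 := hc _ le_rfl
    dsimp only
    rw [htop]
    simp only [smul_zero, Nat.cast_zero, zero_mul, zero_smul, add_zero]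
    refine Finset.sum_congr rfl fun t _ => ?_
    rw [smul_smul, Nat.add_sub_cancel]
    congr 1
    push_cast
    ring

lemma rep_isMatPoly {d : ℕ} {F : ℝ → Matrix (Fin N) (Fin N) ℂ} {c}
    (hF : Rep N d F c) : IsMatPoly N F :=
  ⟨d, _, rep_pad hF (Nat.le_succ d)⟩

lemma rep_P {P : ℕ → ℝ → Matrix (Fin N) (Fin N) ℂ}
    (hPmonic : ∀ n, IsMonicMatPoly N n (P n)) (n : ℕ) :
    ∃ p : ℕ → Matrix (Fin N) (Fin N) ℂ,
      Rep N (n + 1) (P n) p ∧ p n = 1 ∧ ∀ t, n + 1 ≤ t → p t = 0 := by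
  obtain ⟨c, hc1, hc⟩ := hPmonic n
  refine ⟨fun t => if t < n + 1 then c t else 0, rep_pad (d := n + 1) hc le_rfl, ?_, ?_⟩
  · simp [hc1]
  · intro t ht
    simp [show ¬ t < n + 1 from by omega]

lemma sum_range_split {M : Type*} [AddCommMonoid M] (f : ℕ → M) (a b : ℕ) :
    ∑ i ∈ Finset.range (a + b), f i
      = (∑ i ∈ Finset.range a, f i) + ∑ i ∈ Finset.range b, f (a + i) := by
  induction b with
  | zero => simp
  | succ b ih =>
    rw [← Nat.add_assoc, Finset.sum_range_succ, ih, Finset.sum_range_succ, add_assoc]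



variable {N : ℕ}

/-- Expansion of a matrix polynomial in the monic orthogonal basis (existence form). -/
lemma span {P : ℕ → ℝ → Matrix (Fin N) (Fin N) ℂ}
    (hPmonic : ∀ n, IsMonicMatPoly N n (P n)) :
    ∀ (d : ℕ) (F : ℝ → Matrix (Fin N) (Fin N) ℂ) (c : ℕ → Matrix (Fin N) (Fin N) ℂ),
      Rep N d F c → ∃ C : ℕ → Matrix (Fin N) (Fin N) ℂ,
        ∀ x, F x = ∑ m ∈ Finset.range d, C m * P m x := by
  intro d
  induction d with
  | zero =>
    intro F c h
    exact ⟨0, fun x => by simpa using h x⟩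
  | succ d ih =>
    intro F c h
    obtain ⟨p, hp, hp1, _⟩ := rep_P hPmonic d
    have hG : Rep N d (fun x => F x - c d * P d x) (fun t => c t - c d * p t) := by
      refine rep_drop (rep_sub h (rep_lmul (c d) hp)) ?_
      rw [hp1, mul_one, sub_self]
    obtain ⟨C', hC'⟩ := ih _ _ hG
    refine ⟨fun m => if m = d then c d else C' m, fun x => ?_⟩
    rw [Finset.sum_range_succ]
    have : ∀ m ∈ Finset.range d,
        (if m = d then c d else C' m) * P m x = C' m * P m x := by
      intro m hm
      rw [if_neg (Nat.ne_of_lt (Finset.mem_range.mp hm))]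
    rw [Finset.sum_congr rfl this]
    dsimp only
    rw [if_pos rfl, ← hC' x]
    abel

section Integration

variable {W : ℝ → Matrix (Fin N) (Fin N) ℂ}

lemma integrable_pow_W (hWmeas : ∀ i j : Fin N, Measurable fun x => W x i j)
    (hWmom : ∀ (m : ℕ) (i j : Fin N),
      MeasureTheory.Integrable fun x : ℝ => |x| ^ m * ‖W x i j‖)
    (m : ℕ) (a b : Fin N) :
    MeasureTheory.Integrable fun y : ℝ => (y : ℂ) ^ m * W y a b := by
  have hm : MeasureTheory.AEStronglyMeasurable (fun y : ℝ => (y : ℂ) ^ m * W y a b)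
      MeasureTheory.volume :=
    ((Complex.measurable_ofReal.pow_const m).mul (hWmeas a b)).aestronglyMeasurable
  refine (MeasureTheory.integrable_norm_iff hm).mp ?_
  have heq : (fun y : ℝ => ‖(y : ℂ) ^ m * W y a b‖)
      = fun y => |y| ^ m * ‖W y a b‖ := by
    funext y
    simp [norm_mul, norm_pow]
  rw [heq]
  exact hWmom m a b

lemma integrable_entry (hWmeas : ∀ i j : Fin N, Measurable fun x => W x i j)
    (hWmom : ∀ (m : ℕ) (i j : Fin N),
      MeasureTheory.Integrable fun x : ℝ => |x| ^ m * ‖W x i j‖)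
    {d e : ℕ} {F G : ℝ → Matrix (Fin N) (Fin N) ℂ} {c u}
    (hF : Rep N d F c) (hG : Rep N e G u) (i j : Fin N) :
    MeasureTheory.Integrable fun y => (F y * W y * (G y)ᴴ) i j := by
  have hFe : ∀ (y : ℝ) (i a : Fin N), F y i a = ∑ s ∈ Finset.range d, (y : ℂ) ^ s * c s i a := by
    intro y i a
    rw [hF y]
    simp [Matrix.sum_apply, Matrix.smul_apply, smul_eq_mul]
  have hGe : ∀ (y : ℝ) (j b : Fin N), (starRingEnd ℂ) (G y j b)
      = ∑ t ∈ Finset.range e, (y : ℂ) ^ t * (starRingEnd ℂ) (u t j b) := by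
    intro y j b
    have h1 : G y j b = ∑ t ∈ Finset.range e, (y : ℂ) ^ t * u t j b := by
      rw [hG y]
      simp [Matrix.sum_apply, Matrix.smul_apply, smul_eq_mul]
    rw [h1, map_sum]
    refine Finset.sum_congr rfl fun t _ => ?_
    rw [_root_.map_mul, map_pow, Complex.conj_ofReal]
  have heq : (fun y => (F y * W y * (G y)ᴴ) i j)
      = fun y : ℝ => ∑ b : Fin N, ∑ a : Fin N, ∑ s ∈ Finset.range d, ∑ t ∈ Finset.range e,
          (c s i a * (starRingEnd ℂ) (u t j b)) * ((y : ℂ) ^ (s + t) * W y a b) := by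
    funext y
    simp only [Matrix.mul_apply, Matrix.conjTranspose_apply, Complex.star_def]
    refine Finset.sum_congr rfl fun b _ => ?_
    rw [Finset.sum_mul]
    refine Finset.sum_congr rfl fun a _ => ?_
    rw [hFe y i a, hGe y j b, Finset.sum_mul, Finset.sum_mul]
    refine Finset.sum_congr rfl fun s _ => ?_
    rw [Finset.mul_sum]
    refine Finset.sum_congr rfl fun t _ => ?_
    rw [pow_add]
    ring
  rw [heq]
  apply MeasureTheory.integrable_finset_sum
  intro b _
  apply MeasureTheory.integrable_finset_sum
  intro a _
  apply MeasureTheory.integrable_finset_sum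
  intro s _
  apply MeasureTheory.integrable_finset_sum
  intro t _
  exact (integrable_pow_W hWmeas hWmom (s + t) a b).const_mul _

lemma matInt_add {F G : ℝ → Matrix (Fin N) (Fin N) ℂ}
    (hF : ∀ i j, MeasureTheory.Integrable fun y => F y i j)
    (hG : ∀ i j, MeasureTheory.Integrable fun y => G y i j) :
    matInt N (fun y => F y + G y) = matInt N F + matInt N G := by
  ext i j
  simp only [matInt, Matrix.of_apply, Matrix.add_apply]
  exact MeasureTheory.integral_add (hF i j) (hG i j)

lemma matInt_neg {F : ℝ → Matrix (Fin N) (Fin N) ℂ} :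
    matInt N (fun y => -F y) = -matInt N F := by
  ext i j
  simp only [matInt, Matrix.of_apply, Matrix.neg_apply]
  exact MeasureTheory.integral_neg _

lemma matInt_congr {F G : ℝ → Matrix (Fin N) (Fin N) ℂ} (h : ∀ y, F y = G y) :
    matInt N F = matInt N G := by
  ext i j
  simp only [matInt, Matrix.of_apply]
  congr 1
  funext y
  rw [h y]

lemma matInt_congr_ae {F G : ℝ → Matrix (Fin N) (Fin N) ℂ} (h : ∀ᵐ y : ℝ, F y = G y) :
    matInt N F = matInt N G := by
  ext i j
  simp only [matInt, Matrix.of_apply]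
  exact MeasureTheory.integral_congr_ae (h.mono fun y hy => show F y i j = G y i j by rw [hy])

lemma matInt_sum {ι : Type*} (s : Finset ι) (F : ι → ℝ → Matrix (Fin N) (Fin N) ℂ)
    (h : ∀ i ∈ s, ∀ a b, MeasureTheory.Integrable fun y => F i y a b) :
    matInt N (fun y => ∑ i ∈ s, F i y) = ∑ i ∈ s, matInt N (F i) := by
  ext a b
  simp only [matInt, Matrix.of_apply, Matrix.sum_apply]
  exact MeasureTheory.integral_finset_sum s fun i hi => h i hi a b

lemma matInt_lmul {F : ℝ → Matrix (Fin N) (Fin N) ℂ} (C : Matrix (Fin N) (Fin N) ℂ)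
    (h : ∀ i j, MeasureTheory.Integrable fun y => F y i j) :
    matInt N (fun y => C * F y) = C * matInt N F := by
  ext i j
  simp only [matInt, Matrix.of_apply, Matrix.mul_apply]
  rw [MeasureTheory.integral_finset_sum _ fun a _ => (h a j).const_mul (C i a)]
  exact Finset.sum_congr rfl fun a _ => MeasureTheory.integral_const_mul _ _

lemma matInt_conjT (F : ℝ → Matrix (Fin N) (Fin N) ℂ) :
    (matInt N F)ᴴ = matInt N (fun y => (F y)ᴴ) := by
  ext i j
  simp only [matInt, Matrix.of_apply, Matrix.conjTranspose_apply]
  exact integral_conj.symm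

end Integration



variable {N : ℕ} {W : ℝ → Matrix (Fin N) (Fin N) ℂ}

lemma matIP_def (F G : ℝ → Matrix (Fin N) (Fin N) ℂ) :
    matIP N W F G = matInt N (fun y => F y * W y * (G y)ᴴ) := rfl

lemma integrable_lmul_entry {M : ℝ → Matrix (Fin N) (Fin N) ℂ}
    (h : ∀ a b, MeasureTheory.Integrable fun y => M y a b) (C : Matrix (Fin N) (Fin N) ℂ)
    (i j : Fin N) : MeasureTheory.Integrable fun y => (C * M y) i j := by
  have heq : (fun y => (C * M y) i j) = fun y => ∑ a : Fin N, C i a * M y a j := by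
    funext y
    rw [Matrix.mul_apply]
  rw [heq]
  exact MeasureTheory.integrable_finset_sum _ fun a _ => (h a j).const_mul _

lemma matIP_symm (hWh : ∀ᵐ y : ℝ, (W y).IsHermitian)
    (F G : ℝ → Matrix (Fin N) (Fin N) ℂ) :
    (matIP N W F G)ᴴ = matIP N W G F := by
  rw [matIP_def, matIP_def, matInt_conjT]
  apply matInt_congr_ae
  filter_upwards [hWh] with y hy
  rw [Matrix.conjTranspose_mul, Matrix.conjTranspose_mul, Matrix.conjTranspose_conjTranspose,
    hy, ← Matrix.mul_assoc]

section OP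

variable {P : ℕ → ℝ → Matrix (Fin N) (Fin N) ℂ}
variable (hWmeas : ∀ i j : Fin N, Measurable fun x => W x i j)
variable (hWmom : ∀ (m : ℕ) (i j : Fin N),
    MeasureTheory.Integrable fun x : ℝ => |x| ^ m * ‖W x i j‖)
variable (hPmonic : ∀ n, IsMonicMatPoly N n (P n))
variable (hPorth : ∀ n m, n ≠ m → matIP N W (P n) (P m) = 0)

include hWmeas hWmom hPmonic in
lemma matIP_expandsum {d : ℕ} {F : ℝ → Matrix (Fin N) (Fin N) ℂ}
    {C : ℕ → Matrix (Fin N) (Fin N) ℂ}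
    (hC : ∀ x, F x = ∑ m ∈ Finset.range d, C m * P m x) (j : ℕ) :
    matIP N W F (P j) = ∑ m ∈ Finset.range d, C m * matIP N W (P m) (P j) := by
  obtain ⟨pj, hpj, _, _⟩ := rep_P hPmonic j
  have h1 : matIP N W F (P j)
      = matInt N (fun y => ∑ m ∈ Finset.range d,
          C m * (P m y * W y * (P j y)ᴴ)) := by
    rw [matIP_def]
    apply matInt_congr
    intro y
    rw [hC y, Finset.sum_mul, Finset.sum_mul]
    exact Finset.sum_congr rfl fun m _ => by simp only [Matrix.mul_assoc]
  rw [h1, matInt_sum]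
  · refine Finset.sum_congr rfl fun m _ => ?_
    obtain ⟨pm, hpm, _, _⟩ := rep_P hPmonic m
    exact matInt_lmul (C m) (integrable_entry hWmeas hWmom hpm hpj)
  · intro m _ a b
    obtain ⟨pm, hpm, _, _⟩ := rep_P hPmonic m
    exact integrable_lmul_entry (integrable_entry hWmeas hWmom hpm hpj) (C m) a b

include hWmeas hWmom hPmonic hPorth in
lemma matIP_zero_of_le {d j : ℕ} {F : ℝ → Matrix (Fin N) (Fin N) ℂ} {c}
    (hF : Rep N d F c) (hdj : d ≤ j) : matIP N W F (P j) = 0 := by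
  obtain ⟨C, hC⟩ := span hPmonic d F c hF
  rw [matIP_expandsum hWmeas hWmom hPmonic hC j]
  refine Finset.sum_eq_zero fun m hm => ?_
  rw [hPorth m j (by have := Finset.mem_range.mp hm; omega), mul_zero]

include hWmeas hWmom hPmonic hPorth in
lemma expand (hHpos : ∀ n, (matIP N W (P n) (P n)).PosDef)
    {d : ℕ} {F : ℝ → Matrix (Fin N) (Fin N) ℂ} {c}
    (hF : Rep N d F c) (x : ℝ) :
    F x = ∑ m ∈ Finset.range d,
      matIP N W F (P m) * (matIP N W (P m) (P m))⁻¹ * P m x := by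
  obtain ⟨C, hC⟩ := span hPmonic d F c hF
  rw [hC x]
  refine Finset.sum_congr rfl fun m hm => ?_
  have h1 : matIP N W F (P m) = C m * matIP N W (P m) (P m) := by
    rw [matIP_expandsum hWmeas hWmom hPmonic hC m]
    rw [Finset.sum_eq_single m (fun b _ hb => by rw [hPorth b m hb, mul_zero])
      (fun hm' => absurd hm hm')]
  have hdet : IsUnit (matIP N W (P m) (P m)).det := (hHpos m).det_pos.ne'.isUnit
  rw [h1, Matrix.mul_nonsing_inv_cancel_right _ _ hdet]

end OP


end Raising

open Raising

/-- **Raising relation for monic MVOPs** (Corollary 3.3 of the paper):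
`−P'(x,n) − P(x,n)A + v'(x)P(x,n) = ∑_{i=0}^{k−1} ℋ(n) A_{−i}(n+i)* ℋ(n+i)⁻¹ P(x,n+i)`. -/
theorem raising_relation_for_MVOP
    (N : ℕ) (hN : 1 ≤ N)
    (W : ℝ → Matrix (Fin N) (Fin N) ℂ)
    (hWmeas : ∀ i j : Fin N, Measurable fun x => W x i j)
    (hWpos : ∀ᵐ x : ℝ, (W x).PosDef)
    (hWmom : ∀ (m : ℕ) (i j : Fin N),
      Integrable fun x : ℝ => |x| ^ m * ‖W x i j‖)
    (P : ℕ → ℝ → Matrix (Fin N) (Fin N) ℂ)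
    (hPmonic : ∀ n, IsMonicMatPoly N n (P n))
    (hPorth : ∀ n m, n ≠ m → matIP N W (P n) (P m) = 0)
    (hHpos : ∀ n, (matIP N W (P n) (P n)).PosDef)
    (v : Polynomial ℝ) (k : ℕ) (hk : 2 ≤ k) (hdeg : v.natDegree = k)
    (A : Matrix (Fin N) (Fin N) ℂ)
    (hadj : ∀ R S : ℝ → Matrix (Fin N) (Fin N) ℂ, IsMatPoly N R → IsMatPoly N S →
      matInt N (fun y => (matDeriv N R y + R y * A) * W y * (S y)ᴴ) =
      matInt N (fun y => R y * W y *
        (-(matDeriv N S y) - S y * A + ((v.derivative.eval y : ℝ) : ℂ) • S y)ᴴ))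
    :
    ∀ (n : ℕ) (x : ℝ),
      -(matDeriv N (P n) x) - P n x * A + ((v.derivative.eval x : ℝ) : ℂ) • P n x =
        ∑ i ∈ Finset.range k,
          matIP N W (P n) (P n) *
            (if i = 0 then A else vCoef N W v P (n + i) n)ᴴ *
            (matIP N W (P (n + i)) (P (n + i)))⁻¹ * P (n + i) x := by
  intro n x
  have hWh : ∀ᵐ y : ℝ, (W y).IsHermitian := hWpos.mono fun y hy => hy.1
  obtain ⟨p, hp, hp1, hp0⟩ := rep_P hPmonic n
  let Gn : ℝ → Matrix (Fin N) (Fin N) ℂ :=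
    fun y => -(matDeriv N (P n) y) - P n y * A + ((v.derivative.eval y : ℝ) : ℂ) • P n y
  let Q : ℕ → ℝ → Matrix (Fin N) (Fin N) ℂ := fun m y => matDeriv N (P m) y + P m y * A
  let vP : ℝ → Matrix (Fin N) (Fin N) ℂ :=
    fun y => ((v.derivative.eval y : ℝ) : ℂ) • P n y
  -- the derivative of v, as a scalar polynomial of length k
  have hvd : v.derivative.natDegree < k := by
    have h1 := Polynomial.natDegree_derivative_lt (p := v) (by rw [hdeg]; omega)
    rw [hdeg] at h1
    exact h1
  have hv' : ∀ y : ℝ, ((v.derivative.eval y : ℝ) : ℂ)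
      = ∑ m ∈ Finset.range k, (y : ℂ) ^ m * ((v.derivative.coeff m : ℝ) : ℂ) := by
    intro y
    rw [Polynomial.eval_eq_sum_range' hvd]
    push_cast
    exact Finset.sum_congr rfl fun m _ => by ring
  obtain ⟨evp, hevp⟩ : ∃ e, Rep N (k + n) vP e := rep_scalar_smul k _ _ hv' hp
  -- representations of the Q m
  have hQrep : ∀ m, ∃ q, Rep N (m + 1) (Q m) q := by
    intro m
    obtain ⟨pm, hpm, _, hpm0⟩ := rep_P hPmonic m
    exact ⟨_, rep_add (rep_deriv hpm hpm0) (rep_rmul A hpm)⟩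
  -- the key adjointness consequence
  have hkey : ∀ m, matIP N W Gn (P m) = (matIP N W (Q m) (P n))ᴴ := by
    intro m
    obtain ⟨pm, hpm, _, _⟩ := rep_P hPmonic m
    have hadjm := hadj (P m) (P n) (rep_isMatPoly hpm) (rep_isMatPoly hp)
    have e1 : matIP N W (Q m) (P n) = matIP N W (P m) Gn := hadjm
    rw [e1, matIP_symm hWh]
  have hQzero : ∀ m j, m + 1 ≤ j → matIP N W (Q m) (P j) = 0 := by
    intro m j hmj
    obtain ⟨q, hq⟩ := hQrep m
    exact matIP_zero_of_le hWmeas hWmom hPmonic hPorth hq hmj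
  have hcoeff_lt : ∀ m, m < n → matIP N W Gn (P m) = 0 := by
    intro m hm
    rw [hkey m, hQzero m n (by omega), Matrix.conjTranspose_zero]
  -- the coefficient at m = n
  have hD : Rep N n (fun y => Q n y - A * P n y)
      (fun t => ((((t + 1 : ℕ) : ℂ)) • p (t + 1) + p t * A) - A * p t) := by
    refine rep_drop (rep_sub (rep_add (rep_deriv hp hp0) (rep_rmul A hp)) (rep_lmul A hp)) ?_
    rw [hp0 (n + 1) le_rfl, hp1]
    simp
  have hQn : matIP N W (Q n) (P n) = A * matIP N W (P n) (P n) := by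
    have hDzero : matIP N W (fun y => Q n y - A * P n y) (P n) = 0 :=
      matIP_zero_of_le hWmeas hWmom hPmonic hPorth hD le_rfl
    have hI1 : ∀ i j, Integrable fun y =>
        ((fun y => Q n y - A * P n y) y * W y * (P n y)ᴴ) i j :=
      fun i j => integrable_entry hWmeas hWmom hD hp i j
    have hI2 : ∀ i j, Integrable fun y => ((fun y => A * P n y) y * W y * (P n y)ᴴ) i j :=
      fun i j => integrable_entry hWmeas hWmom (rep_lmul A hp) hp i j
    have hsplit : matIP N W (Q n) (P n)
        = matIP N W (fun y => Q n y - A * P n y) (P n) + matIP N W (fun y => A * P n y) (P n) := by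
      rw [matIP_def, matIP_def, matIP_def, ← matInt_add hI1 hI2]
      apply matInt_congr
      intro y
      dsimp only
      rw [← add_mul, ← add_mul, sub_add_cancel]
    have hAP : matIP N W (fun y => A * P n y) (P n) = A * matIP N W (P n) (P n) := by
      rw [matIP_def, matIP_def, ← matInt_lmul A (integrable_entry hWmeas hWmom hp hp)]
      apply matInt_congr
      intro y
      simp only [Matrix.mul_assoc]
    rw [hsplit, hDzero, zero_add, hAP]
  have hcoeff_n : matIP N W Gn (P n) = matIP N W (P n) (P n) * Aᴴ := by
    rw [hkey n, hQn, Matrix.conjTranspose_mul, (hHpos n).1]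
  -- the coefficients at m > n
  have hcoeff_gt : ∀ m, n + 1 ≤ m → matIP N W Gn (P m) = matIP N W vP (P m) := by
    intro m hm
    obtain ⟨pm, hpm, _, _⟩ := rep_P hPmonic m
    obtain ⟨q, hq⟩ := hQrep n
    have hI1 : ∀ i j, Integrable fun y =>
        ((fun y => -(Q n y)) y * W y * (P m y)ᴴ) i j :=
      fun i j => integrable_entry hWmeas hWmom (rep_neg hq) hpm i j
    have hI2 : ∀ i j, Integrable fun y => (vP y * W y * (P m y)ᴴ) i j :=
      fun i j => integrable_entry hWmeas hWmom hevp hpm i j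
    have hsplit : matIP N W Gn (P m)
        = matIP N W (fun y => -(Q n y)) (P m) + matIP N W vP (P m) := by
      rw [matIP_def, matIP_def, matIP_def, ← matInt_add hI1 hI2]
      apply matInt_congr
      intro y
      dsimp only
      have hGy : Gn y = -(Q n y) + vP y := by
        show -(matDeriv N (P n) y) - P n y * A + ((v.derivative.eval y : ℝ) : ℂ) • P n y
          = -(matDeriv N (P n) y + P n y * A) + ((v.derivative.eval y : ℝ) : ℂ) • P n y
        abel
      rw [hGy, add_mul, add_mul]
    have h0 : matIP N W (fun y => -(Q n y)) (P m) = 0 := by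
      have e2 : matIP N W (fun y => -(Q n y)) (P m) = -(matIP N W (Q n) (P m)) := by
        rw [matIP_def, matIP_def, ← matInt_neg]
        apply matInt_congr
        intro y
        rw [neg_mul, neg_mul]
      rw [e2, hQzero n m hm, neg_zero]
    rw [hsplit, h0, zero_add]
  -- identification with vCoef
  have hvsymm : ∀ m, matIP N W vP (P m)
      = matIP N W (P n) (P n) * (vCoef N W v P m n)ᴴ := by
    intro m
    have e1 : matIP N W vP (P m)
        = matIP N W (P n) (fun y => ((v.derivative.eval y : ℝ) : ℂ) • P m y) := by
      rw [matIP_def, matIP_def]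
      apply matInt_congr
      intro y
      show (((v.derivative.eval y : ℝ) : ℂ) • P n y) * W y * (P m y)ᴴ = _
      rw [Matrix.conjTranspose_smul, Complex.star_def, Complex.conj_ofReal]
      simp only [Matrix.smul_mul, Matrix.mul_smul]
    have e2 : matIP N W (P n) (fun y => ((v.derivative.eval y : ℝ) : ℂ) • P m y)
        = (matIP N W (fun y => ((v.derivative.eval y : ℝ) : ℂ) • P m y) (P n))ᴴ :=
      (matIP_symm hWh _ _).symm
    rw [e1, e2]
    show _ = matIP N W (P n) (P n) *
      (matIP N W (fun y => ((v.derivative.eval y : ℝ) : ℂ) • P m y) (P n) *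
        (matIP N W (P n) (P n))⁻¹)ᴴ
    have hdetn : IsUnit (matIP N W (P n) (P n)).det := (hHpos n).det_pos.ne'.isUnit
    rw [Matrix.conjTranspose_mul, Matrix.conjTranspose_nonsing_inv, (hHpos n).1,
      ← Matrix.mul_assoc, Matrix.mul_nonsing_inv _ hdetn, one_mul]
  -- representation of Gn and expansion
  have hGnrep : ∃ g, Rep N (n + k) Gn g := by
    have h1 : Rep N (k + n) (fun y => -(matDeriv N (P n) y)) _ :=
      rep_pad (rep_neg (rep_deriv hp hp0)) (by omega)
    have h2 : Rep N (k + n) (fun y => -(P n y * A)) _ :=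
      rep_pad (rep_neg (rep_rmul A hp)) (by omega)
    have h3 := rep_add (rep_add h1 h2) hevp
    rw [show k + n = n + k from by omega] at h3
    refine ⟨_, rep_congr (G := Gn) (fun y => ?_) h3⟩
    show -(matDeriv N (P n) y) + -(P n y * A) + ((v.derivative.eval y : ℝ) : ℂ) • P n y
      = -(matDeriv N (P n) y) - P n y * A + ((v.derivative.eval y : ℝ) : ℂ) • P n y
    rw [sub_eq_add_neg]
  obtain ⟨g, hg⟩ := hGnrep
  have hexp := expand hWmeas hWmom hPmonic hPorth hHpos hg x
  rw [sum_range_split (fun m => matIP N W Gn (P m) * (matIP N W (P m) (P m))⁻¹ * P m x) n k]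
    at hexp
  have hzero : ∑ m ∈ Finset.range n,
      matIP N W Gn (P m) * (matIP N W (P m) (P m))⁻¹ * P m x = 0 :=
    Finset.sum_eq_zero fun m hm => by
      rw [hcoeff_lt m (Finset.mem_range.mp hm), Matrix.zero_mul, Matrix.zero_mul]
  rw [hzero, zero_add] at hexp
  have hfinal : ∀ i ∈ Finset.range k,
      matIP N W Gn (P (n + i)) * (matIP N W (P (n + i)) (P (n + i)))⁻¹ * P (n + i) x
        = matIP N W (P n) (P n) * (if i = 0 then A else vCoef N W v P (n + i) n)ᴴ *
            (matIP N W (P (n + i)) (P (n + i)))⁻¹ * P (n + i) x := by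
    intro i _
    rcases Nat.eq_zero_or_pos i with hi | hi
    · subst hi
      rw [if_pos rfl, Nat.add_zero, hcoeff_n]
    · rw [if_neg (by omega), hcoeff_gt (n + i) (by omega), hvsymm (n + i)]
  calc -(matDeriv N (P n) x) - P n x * A + ((v.derivative.eval x : ℝ) : ℂ) • P n x
      = Gn x := rfl
    _ = _ := hexp.trans (Finset.sum_congr rfl hfinal)
end

section
/- Under the stated hypotheses, for every n ≥ 0 one has the identity ⟨v'(·)P(·,n), P(·,n)⟩ ℋ(n)⁻¹ = A + ℋ(n) A* ℋ(n)⁻¹, i.e. the zeroth coefficient of the difference operator v'(L) applied to the monic MVOPs equals A + ℋ(n)A*ℋ(n)⁻¹. -/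
open MeasureTheory Matrix Finset
open scoped ComplexOrder

namespace ZerothAux

variable {N : ℕ}

/-- evaluation of a matrix polynomial with coefficients `c` and degree bound `d`. -/
noncomputable def polyF (d : ℕ) (c : ℕ → Matrix (Fin N) (Fin N) ℂ) (x : ℝ) :
    Matrix (Fin N) (Fin N) ℂ :=
  ∑ k ∈ Finset.range (d + 1), ((x : ℂ) ^ k) • c k

variable (W : ℝ → Matrix (Fin N) (Fin N) ℂ)
variable (hWmeas : ∀ i j : Fin N, Measurable fun x => W x i j)
variable (hWmom : ∀ (m : ℕ) (i j : Fin N),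
  Integrable fun x : ℝ => |x| ^ m * ‖W x i j‖)

include hWmeas hWmom in
lemma integ_mom (m : ℕ) (a b : Fin N) :
    Integrable (fun y : ℝ => (y : ℂ) ^ m * W y a b) := by
  refine (hWmom m a b).mono' ?_ ?_
  · exact ((Complex.measurable_ofReal.pow_const m).mul (hWmeas a b)).aestronglyMeasurable
  · refine Filter.Eventually.of_forall fun y => ?_
    simp

lemma polyF_mul_W_mul (d1 d2 : ℕ) (c e : ℕ → Matrix (Fin N) (Fin N) ℂ) (y : ℝ) :
    polyF d1 c y * W y * (polyF d2 e y)ᴴ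
      = ∑ k ∈ Finset.range (d1 + 1), ∑ l ∈ Finset.range (d2 + 1),
          ((y : ℂ) ^ (k + l)) • (c k * W y * (e l)ᴴ) := by
  simp only [polyF, Finset.sum_mul, Matrix.conjTranspose_sum, Finset.mul_sum,
    Matrix.conjTranspose_smul, smul_mul_assoc, mul_smul_comm, smul_smul,
    Finset.smul_sum, star_pow, Complex.star_def, Complex.conj_ofReal, pow_add,
    Matrix.mul_assoc]
  rw [Finset.sum_comm]
  exact Finset.sum_congr rfl fun k _ => Finset.sum_congr rfl fun l _ => by
    rw [mul_comm]

lemma entry_expand (m d1 d2 : ℕ) (c e : ℕ → Matrix (Fin N) (Fin N) ℂ)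
    (i j : Fin N) (y : ℝ) :
    (y : ℂ) ^ m * ((polyF d1 c y * W y * (polyF d2 e y)ᴴ) i j)
      = ∑ k ∈ Finset.range (d1 + 1), ∑ l ∈ Finset.range (d2 + 1), ∑ b, ∑ a,
          (c k i a * star (e l j b)) * ((y : ℂ) ^ (m + k + l) * W y a b) := by
  rw [polyF_mul_W_mul]
  simp only [Matrix.sum_apply, Matrix.smul_apply, smul_eq_mul, Finset.mul_sum,
    Matrix.mul_apply, Matrix.conjTranspose_apply, Finset.sum_mul]
  refine Finset.sum_congr rfl fun k _ => Finset.sum_congr rfl fun l _ =>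
    Finset.sum_congr rfl fun b _ => Finset.sum_congr rfl fun a _ => ?_
  ring

include hWmeas hWmom in
lemma entry_int (m d1 d2 : ℕ) (c e : ℕ → Matrix (Fin N) (Fin N) ℂ) (i j : Fin N) :
    Integrable (fun y : ℝ =>
      (y : ℂ) ^ m * ((polyF d1 c y * W y * (polyF d2 e y)ᴴ) i j)) := by
  have h : (fun y : ℝ => (y : ℂ) ^ m * ((polyF d1 c y * W y * (polyF d2 e y)ᴴ) i j))
      = fun y : ℝ => ∑ k ∈ Finset.range (d1 + 1), ∑ l ∈ Finset.range (d2 + 1), ∑ b, ∑ a,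
          (c k i a * star (e l j b)) * ((y : ℂ) ^ (m + k + l) * W y a b) :=
    funext fun y => entry_expand W m d1 d2 c e i j y
  rw [h]
  exact integrable_finset_sum _ fun k _ => integrable_finset_sum _ fun l _ =>
    integrable_finset_sum _ fun b _ => integrable_finset_sum _ fun a _ =>
      (integ_mom W hWmeas hWmom _ a b).const_mul _

include hWmeas hWmom in
lemma entry_int0 (d1 d2 : ℕ) (c e : ℕ → Matrix (Fin N) (Fin N) ℂ) (i j : Fin N) :
    Integrable (fun y : ℝ => (polyF d1 c y * W y * (polyF d2 e y)ᴴ) i j) := by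
  have := entry_int W hWmeas hWmom 0 d1 d2 c e i j
  simpa using this

/-! ### Linearity of `matInt` / `matIP` -/

lemma matInt_congr {F G : ℝ → Matrix (Fin N) (Fin N) ℂ} (h : ∀ y, F y = G y) :
    matInt N F = matInt N G := congrArg (matInt N) (funext h)

lemma matIP_congr {F F' G G' : ℝ → Matrix (Fin N) (Fin N) ℂ}
    (hF : ∀ y, F y = F' y) (hG : ∀ y, G y = G' y) :
    matIP N W F G = matIP N W F' G' :=
  matInt_congr fun y => by rw [hF y, hG y]

lemma matInt_add {F G : ℝ → Matrix (Fin N) (Fin N) ℂ}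
    (hF : ∀ i j, Integrable fun y => F y i j)
    (hG : ∀ i j, Integrable fun y => G y i j) :
    matInt N (fun y => F y + G y) = matInt N F + matInt N G := by
  ext i j
  simp only [matInt, Matrix.of_apply, Matrix.add_apply]
  exact integral_add (hF i j) (hG i j)

lemma matInt_neg (F : ℝ → Matrix (Fin N) (Fin N) ℂ) :
    matInt N (fun y => -(F y)) = -(matInt N F) := by
  ext i j
  simp only [matInt, Matrix.of_apply, Matrix.neg_apply]
  exact integral_neg _

/-- entrywise integrability of `F W Gᴴ`. -/
def EInt (F G : ℝ → Matrix (Fin N) (Fin N) ℂ) : Prop :=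
  ∀ i j, Integrable fun y => (F y * W y * (G y)ᴴ) i j

lemma EInt_congr {F F' G G' : ℝ → Matrix (Fin N) (Fin N) ℂ}
    (hF : ∀ y, F y = F' y) (hG : ∀ y, G y = G' y) (h : EInt W F' G') : EInt W F G := by
  intro i j
  have : (fun y => (F y * W y * (G y)ᴴ) i j) = fun y => (F' y * W y * (G' y)ᴴ) i j :=
    funext fun y => by rw [hF y, hG y]
  rw [this]; exact h i j

/-- `F` agrees pointwise with some `polyF`. -/
def Rep (F : ℝ → Matrix (Fin N) (Fin N) ℂ) : Prop :=
  ∃ d c, ∀ y : ℝ, F y = polyF d c y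

lemma rep_polyF (d : ℕ) (c : ℕ → Matrix (Fin N) (Fin N) ℂ) : Rep (polyF d c) :=
  ⟨d, c, fun _ => rfl⟩

lemma poly_mul_left (C : Matrix (Fin N) (Fin N) ℂ) (d : ℕ)
    (c : ℕ → Matrix (Fin N) (Fin N) ℂ) (y : ℝ) :
    C * polyF d c y = polyF d (fun k => C * c k) y := by
  simp only [polyF, Finset.mul_sum, mul_smul_comm]

lemma rep_const_mul {F : ℝ → Matrix (Fin N) (Fin N) ℂ} (C : Matrix (Fin N) (Fin N) ℂ)
    (h : Rep F) : Rep (fun y => C * F y) := by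
  obtain ⟨d, c, hc⟩ := h
  exact ⟨d, fun k => C * c k, fun y => by show C * F y = _; rw [hc y, poly_mul_left]⟩

include hWmeas hWmom in
lemma EInt_of_rep {F G : ℝ → Matrix (Fin N) (Fin N) ℂ} (hF : Rep F) (hG : Rep G) :
    EInt W F G := by
  obtain ⟨d1, c, hc⟩ := hF
  obtain ⟨d2, e, he⟩ := hG
  exact EInt_congr W hc he fun i j => entry_int0 W hWmeas hWmom d1 d2 c e i j

include hWmeas hWmom in
lemma EInt_vsmul {F G : ℝ → Matrix (Fin N) (Fin N) ℂ} (hF : Rep F) (hG : Rep G)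
    (p : Polynomial ℝ) :
    EInt W (fun y => ((p.eval y : ℝ) : ℂ) • F y) G := by
  obtain ⟨d1, c, hc⟩ := hF
  obtain ⟨d2, e, he⟩ := hG
  intro i j
  have key : (fun y : ℝ => ((((p.eval y : ℝ) : ℂ) • F y) * W y * (G y)ᴴ) i j)
      = fun y : ℝ => ∑ m ∈ Finset.range (p.natDegree + 1),
          (p.coeff m : ℂ) * ((y : ℂ) ^ m * ((polyF d1 c y * W y * (polyF d2 e y)ᴴ) i j)) := by
    funext y
    rw [hc y, he y]
    have h1 : (((p.eval y : ℝ) : ℂ) • polyF d1 c y) * W y * (polyF d2 e y)ᴴ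
        = ((p.eval y : ℝ) : ℂ) • (polyF d1 c y * W y * (polyF d2 e y)ᴴ) := by
      rw [smul_mul_assoc, smul_mul_assoc]
    rw [h1, Matrix.smul_apply, smul_eq_mul]
    rw [Polynomial.eval_eq_sum_range]
    push_cast
    rw [Finset.sum_mul]
    exact Finset.sum_congr rfl fun m _ => by ring
  rw [key]
  exact integrable_finset_sum _ fun m _ =>
    (entry_int W hWmeas hWmom m d1 d2 c e i j).const_mul _

lemma matIP_add_left {F1 F2 G : ℝ → Matrix (Fin N) (Fin N) ℂ}
    (h1 : EInt W F1 G) (h2 : EInt W F2 G) :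
    matIP N W (fun y => F1 y + F2 y) G = matIP N W F1 G + matIP N W F2 G := by
  have hpt : ∀ y, (F1 y + F2 y) * W y * (G y)ᴴ
      = F1 y * W y * (G y)ᴴ + F2 y * W y * (G y)ᴴ := fun y => by rw [add_mul, add_mul]
  calc matIP N W (fun y => F1 y + F2 y) G
      = matInt N (fun y => F1 y * W y * (G y)ᴴ + F2 y * W y * (G y)ᴴ) :=
        matInt_congr hpt
    _ = matIP N W F1 G + matIP N W F2 G := matInt_add (fun i j => h1 i j) (fun i j => h2 i j)

lemma matIP_const_mul_left {F G : ℝ → Matrix (Fin N) (Fin N) ℂ}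
    (h : EInt W F G) (C : Matrix (Fin N) (Fin N) ℂ) :
    matIP N W (fun y => C * F y) G = C * matIP N W F G := by
  ext i j
  have hpt : ∀ y : ℝ, ((C * F y) * W y * (G y)ᴴ) i j
      = ∑ a, C i a * (F y * W y * (G y)ᴴ) a j := fun y => by
    rw [Matrix.mul_assoc, Matrix.mul_assoc, Matrix.mul_apply]
    simp only [Matrix.mul_assoc]
  show (∫ y : ℝ, ((C * F y) * W y * (G y)ᴴ) i j) = _
  calc (∫ y : ℝ, ((C * F y) * W y * (G y)ᴴ) i j)
      = ∫ y : ℝ, ∑ a, C i a * (F y * W y * (G y)ᴴ) a j := by simp only [hpt]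
    _ = ∑ a, ∫ y : ℝ, C i a * (F y * W y * (G y)ᴴ) a j :=
        integral_finset_sum _ fun a _ => (h a j).const_mul _
    _ = ∑ a, C i a * ∫ y : ℝ, (F y * W y * (G y)ᴴ) a j :=
        Finset.sum_congr rfl fun a _ => integral_const_mul _ _
    _ = (C * matIP N W F G) i j := by
        simp only [matIP, matInt, Matrix.mul_apply, Matrix.of_apply]

lemma matIP_const_mul_right {F G : ℝ → Matrix (Fin N) (Fin N) ℂ}
    (h : EInt W F G) (C : Matrix (Fin N) (Fin N) ℂ) :
    matIP N W F (fun y => C * G y) = matIP N W F G * Cᴴ := by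
  ext i j
  have hpt : ∀ y : ℝ, (F y * W y * (C * G y)ᴴ) i j
      = ∑ a, (F y * W y * (G y)ᴴ) i a * Cᴴ a j := fun y => by
    rw [Matrix.conjTranspose_mul, ← Matrix.mul_assoc, Matrix.mul_apply]
  show (∫ y : ℝ, (F y * W y * (C * G y)ᴴ) i j) = _
  calc (∫ y : ℝ, (F y * W y * (C * G y)ᴴ) i j)
      = ∫ y : ℝ, ∑ a, (F y * W y * (G y)ᴴ) i a * Cᴴ a j := by simp only [hpt]
    _ = ∑ a, ∫ y : ℝ, (F y * W y * (G y)ᴴ) i a * Cᴴ a j :=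
        integral_finset_sum _ fun a _ => (h i a).mul_const _
    _ = ∑ a, (∫ y : ℝ, (F y * W y * (G y)ᴴ) i a) * Cᴴ a j :=
        Finset.sum_congr rfl fun a _ => integral_mul_const _ _
    _ = (matIP N W F G * Cᴴ) i j := by
        simp only [matIP, matInt, Matrix.mul_apply, Matrix.of_apply]

lemma matIP_zero_left (G : ℝ → Matrix (Fin N) (Fin N) ℂ) :
    matIP N W (fun _ => (0 : Matrix (Fin N) (Fin N) ℂ)) G = 0 := by
  ext i j
  show (∫ y : ℝ, ((0 : Matrix (Fin N) (Fin N) ℂ) * W y * (G y)ᴴ) i j) = _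
  simp

/-! ### polyF manipulation -/

lemma polyF_top_zero {d : ℕ} {r : ℕ → Matrix (Fin N) (Fin N) ℂ} (h : r (d + 1) = 0)
    (y : ℝ) : polyF (d + 1) r y = polyF d r y := by
  rw [polyF, Finset.sum_range_succ, h, smul_zero, add_zero]; rfl

lemma polyF_zero {r : ℕ → Matrix (Fin N) (Fin N) ℂ} (h : r 0 = 0) (y : ℝ) :
    polyF 0 r y = 0 := by
  simp [polyF, h]

/-! ### Structural lemmas about the MVOPs -/

section Struct

variable (P : ℕ → ℝ → Matrix (Fin N) (Fin N) ℂ)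
variable (hPmonic : ∀ n, IsMonicMatPoly N n (P n))

include hPmonic in
lemma rep_P (m : ℕ) : Rep (P m) := by
  obtain ⟨c, _, hc⟩ := hPmonic m
  exact ⟨m, c, fun y => by rw [hc y]; rfl⟩

include hPmonic hWmeas hWmom in
/-- split off the leading `polyF` coefficient against `P d`, left slot. -/
lemma matIP_split_left (d : ℕ) (q : ℕ → Matrix (Fin N) (Fin N) ℂ) (n : ℕ) :
    ∃ r : ℕ → Matrix (Fin N) (Fin N) ℂ, r d = 0 ∧
      matIP N W (polyF d q) (P n)
        = q d * matIP N W (P d) (P n) + matIP N W (polyF d r) (P n) := by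
  obtain ⟨cd, hcd1, hcdP⟩ := hPmonic d
  have hPd : ∀ y, P d y = polyF d cd y := fun y => by rw [hcdP y]; rfl
  refine ⟨fun k => q k - q d * cd k, by simp only []; rw [hcd1, mul_one, sub_self], ?_⟩
  have hsplit : ∀ y : ℝ, polyF d q y
      = q d * P d y + polyF d (fun k => q k - q d * cd k) y := by
    intro y
    rw [hPd y, poly_mul_left]
    simp only [polyF, ← Finset.sum_add_distrib, ← smul_add]
    exact Finset.sum_congr rfl fun k _ => by
      congr 1
      abel
  rw [matIP_congr W hsplit (fun _ => rfl),
    matIP_add_left W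
      (EInt_of_rep W hWmeas hWmom (rep_const_mul (q d) (rep_P P hPmonic d))
        (rep_P P hPmonic n))
      (EInt_of_rep W hWmeas hWmom (rep_polyF _ _) (rep_P P hPmonic n)),
    matIP_const_mul_left W
      (EInt_of_rep W hWmeas hWmom (rep_P P hPmonic d) (rep_P P hPmonic n)) (q d)]

include hPmonic hWmeas hWmom in
lemma matIP_split_right (d : ℕ) (q : ℕ → Matrix (Fin N) (Fin N) ℂ) (n : ℕ) :
    ∃ r : ℕ → Matrix (Fin N) (Fin N) ℂ, r d = 0 ∧
      matIP N W (P n) (polyF d q)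
        = matIP N W (P n) (P d) * (q d)ᴴ + matIP N W (P n) (polyF d r) := by
  obtain ⟨cd, hcd1, hcdP⟩ := hPmonic d
  have hPd : ∀ y, P d y = polyF d cd y := fun y => by rw [hcdP y]; rfl
  refine ⟨fun k => q k - q d * cd k, by simp only []; rw [hcd1, mul_one, sub_self], ?_⟩
  have hsplit : ∀ y : ℝ, polyF d q y
      = q d * P d y + polyF d (fun k => q k - q d * cd k) y := by
    intro y
    rw [hPd y, poly_mul_left]
    simp only [polyF, ← Finset.sum_add_distrib, ← smul_add]
    exact Finset.sum_congr rfl fun k _ => by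
      congr 1
      abel
  have hadd : matIP N W (P n) (fun y => q d * P d y + polyF d (fun k => q k - q d * cd k) y)
      = matIP N W (P n) (fun y => q d * P d y)
        + matIP N W (P n) (polyF d (fun k => q k - q d * cd k)) := by
    have hpt : ∀ y : ℝ, P n y * W y *
        ((fun y => q d * P d y + polyF d (fun k => q k - q d * cd k) y) y)ᴴ
        = P n y * W y * (q d * P d y)ᴴ
          + P n y * W y * (polyF d (fun k => q k - q d * cd k) y)ᴴ := fun y => by
      rw [Matrix.conjTranspose_add, Matrix.mul_add]
    refine (matInt_congr hpt).trans (matInt_add ?_ ?_)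
    · exact EInt_of_rep W hWmeas hWmom (rep_P P hPmonic n)
        (rep_const_mul (q d) (rep_P P hPmonic d))
    · exact EInt_of_rep W hWmeas hWmom (rep_P P hPmonic n) (rep_polyF _ _)
  rw [matIP_congr W (fun _ => rfl) hsplit, hadd,
    matIP_const_mul_right W
      (EInt_of_rep W hWmeas hWmom (rep_P P hPmonic n) (rep_P P hPmonic d)) (q d)]

variable (hPorth : ∀ n m, n ≠ m → matIP N W (P n) (P m) = 0)

include hPmonic hPorth hWmeas hWmom in
lemma low_orth_left :
    ∀ d, ∀ q : ℕ → Matrix (Fin N) (Fin N) ℂ, ∀ n, d < n →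
      matIP N W (polyF d q) (P n) = 0 := by
  intro d
  induction d using Nat.strong_induction_on with
  | _ d IH =>
    intro q n hdn
    obtain ⟨r, hr0, hsp⟩ := matIP_split_left W hWmeas hWmom P hPmonic d q n
    rw [hsp, hPorth d n (Nat.ne_of_lt hdn), mul_zero, zero_add]
    match d, hr0, hdn, IH with
    | 0, hr0, hdn, IH =>
      rw [matIP_congr W (polyF_zero hr0) (fun _ => rfl)]
      exact matIP_zero_left W (P n)
    | (e+1), hr0, hdn, IH =>
      rw [matIP_congr W (polyF_top_zero hr0) (fun _ => rfl)]
      exact IH e (Nat.lt_succ_self e) r n (by omega)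

include hPmonic hPorth hWmeas hWmom in
lemma low_orth_right :
    ∀ d, ∀ q : ℕ → Matrix (Fin N) (Fin N) ℂ, ∀ n, d < n →
      matIP N W (P n) (polyF d q) = 0 := by
  intro d
  induction d using Nat.strong_induction_on with
  | _ d IH =>
    intro q n hdn
    obtain ⟨r, hr0, hsp⟩ := matIP_split_right W hWmeas hWmom P hPmonic d q n
    rw [hsp, hPorth n d (Nat.ne_of_lt hdn).symm, zero_mul, zero_add]
    match d, hr0, hdn, IH with
    | 0, hr0, hdn, IH =>
      rw [matIP_congr W (fun _ => rfl) (polyF_zero hr0)]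
      ext i j
      show (∫ y : ℝ, (P n y * W y * (0 : Matrix (Fin N) (Fin N) ℂ)ᴴ) i j) = _
      simp
    | (e+1), hr0, hdn, IH =>
      rw [matIP_congr W (fun _ => rfl) (polyF_top_zero hr0)]
      exact IH e (Nat.lt_succ_self e) r n (by omega)

include hPmonic hPorth hWmeas hWmom in
lemma lead_left (n : ℕ) (q : ℕ → Matrix (Fin N) (Fin N) ℂ) :
    matIP N W (polyF n q) (P n) = q n * matIP N W (P n) (P n) := by
  obtain ⟨r, hr0, hsp⟩ := matIP_split_left W hWmeas hWmom P hPmonic n q n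
  rw [hsp]
  match n, hr0 with
  | 0, hr0 =>
    rw [matIP_congr W (polyF_zero hr0) (fun _ => rfl), matIP_zero_left W, add_zero]
  | (e+1), hr0 =>
    rw [matIP_congr W (polyF_top_zero hr0) (fun _ => rfl),
      low_orth_left W hWmeas hWmom P hPmonic hPorth e r (e+1) (Nat.lt_succ_self e),
      add_zero]

include hPmonic hPorth hWmeas hWmom in
lemma lead_right (n : ℕ) (q : ℕ → Matrix (Fin N) (Fin N) ℂ) :
    matIP N W (P n) (polyF n q) = matIP N W (P n) (P n) * (q n)ᴴ := by
  obtain ⟨r, hr0, hsp⟩ := matIP_split_right W hWmeas hWmom P hPmonic n q n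
  rw [hsp]
  match n, hr0 with
  | 0, hr0 =>
    rw [matIP_congr W (fun _ => rfl) (polyF_zero hr0)]
    have : matIP N W (P 0) (fun _ : ℝ => (0 : Matrix (Fin N) (Fin N) ℂ)) = 0 := by
      ext i j
      show (∫ y : ℝ, (P 0 y * W y * (0 : Matrix (Fin N) (Fin N) ℂ)ᴴ) i j) = _
      simp
    rw [this, add_zero]
  | (e+1), hr0 =>
    rw [matIP_congr W (fun _ => rfl) (polyF_top_zero hr0),
      low_orth_right W hWmeas hWmom P hPmonic hPorth e r (e+1) (Nat.lt_succ_self e),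
      add_zero]

end Struct

lemma deriv_polyF (n : ℕ) (c : ℕ → Matrix (Fin N) (Fin N) ℂ)
    (F : ℝ → Matrix (Fin N) (Fin N) ℂ)
    (hF : ∀ x : ℝ, F x = ∑ k ∈ Finset.range (n + 1), ((x : ℂ) ^ k) • c k) (y : ℝ) :
    matDeriv N F y = ∑ k ∈ Finset.range (n + 1),
      ((y : ℂ) ^ k) • (if k < n then ((k : ℂ) + 1) • c (k + 1) else 0) := by
  ext i j
  have hfun : (fun x : ℝ => F x i j)
      = fun x : ℝ => ∑ k ∈ Finset.range (n + 1), (x : ℂ) ^ k * c k i j := by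
    funext x
    rw [hF x]
    simp [Matrix.sum_apply]
  have hd : HasDerivAt (fun x : ℝ => ∑ k ∈ Finset.range (n + 1), (x : ℂ) ^ k * c k i j)
      (∑ k ∈ Finset.range (n + 1), (k : ℂ) * (y : ℂ) ^ (k - 1) * c k i j) y :=
    HasDerivAt.fun_sum fun k _ =>
      ((hasDerivAt_pow k ((y : ℝ) : ℂ)).mul_const (c k i j)).comp_ofReal
  show deriv (fun x : ℝ => F x i j) y = _
  rw [hfun, hd.deriv]
  rw [Finset.sum_range_succ' (fun k => (k : ℂ) * (y : ℂ) ^ (k - 1) * c k i j) n]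
  simp only [Nat.cast_zero, zero_mul, add_zero, Nat.add_sub_cancel, Nat.cast_add,
    Nat.cast_one]
  rw [Matrix.sum_apply, Finset.sum_range_succ, if_neg (lt_irrefl n)]
  simp only [Matrix.smul_apply, Matrix.zero_apply, smul_zero, add_zero, mul_zero,
    smul_eq_mul]
  refine Finset.sum_congr rfl fun k hk => ?_
  rw [if_pos (Finset.mem_range.mp hk)]
  simp only [Matrix.smul_apply, smul_eq_mul]
  ring

end ZerothAux

/-- The zeroth coefficient of `v'(L)` equals `A + ℋ(n)A*ℋ(n)⁻¹` (eq. (3.4) of the paper). -/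
theorem zeroth_coefficient_identity
    (N : ℕ) (hN : 1 ≤ N)
    (W : ℝ → Matrix (Fin N) (Fin N) ℂ)
    (hWmeas : ∀ i j : Fin N, Measurable fun x => W x i j)
    (hWpos : ∀ᵐ x : ℝ, (W x).PosDef)
    (hWmom : ∀ (m : ℕ) (i j : Fin N),
      Integrable fun x : ℝ => |x| ^ m * ‖W x i j‖)
    (P : ℕ → ℝ → Matrix (Fin N) (Fin N) ℂ)
    (hPmonic : ∀ n, IsMonicMatPoly N n (P n))
    (hPorth : ∀ n m, n ≠ m → matIP N W (P n) (P m) = 0)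
    (hHpos : ∀ n, (matIP N W (P n) (P n)).PosDef)
    (v : Polynomial ℝ) (k : ℕ) (hk : 2 ≤ k) (hdeg : v.natDegree = k)
    (A : Matrix (Fin N) (Fin N) ℂ)
    (hadj : ∀ R S : ℝ → Matrix (Fin N) (Fin N) ℂ, IsMatPoly N R → IsMatPoly N S →
      matInt N (fun y => (matDeriv N R y + R y * A) * W y * (S y)ᴴ) =
      matInt N (fun y => R y * W y *
        (-(matDeriv N S y) - S y * A + ((v.derivative.eval y : ℝ) : ℂ) • S y)ᴴ))
    :
    ∀ n : ℕ,
      vCoef N W v P n n =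
        A + matIP N W (P n) (P n) * Aᴴ * (matIP N W (P n) (P n))⁻¹ := by
  open ZerothAux in
  intro n
  obtain ⟨c, hc1, hcP⟩ := hPmonic n
  have hPrep : Rep (P n) := rep_P P hPmonic n
  set q : ℕ → Matrix (Fin N) (Fin N) ℂ :=
    fun k => (if k < n then ((k : ℂ) + 1) • c (k + 1) else 0) + c k * A with hq
  have hqn : q n = A := by simp [hq, hc1]
  have hQ1 : ∀ y : ℝ, matDeriv N (P n) y + P n y * A = polyF n q y := by
    intro y
    rw [deriv_polyF n c (P n) hcP y, hcP y]
    simp only [hq, polyF, smul_add, Finset.sum_add_distrib, Finset.sum_mul,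
      smul_mul_assoc]
  have hEq := hadj (P n) (P n) ⟨n, c, hcP⟩ ⟨n, c, hcP⟩
  have hL : matInt N (fun y => (matDeriv N (P n) y + P n y * A) * W y * (P n y)ᴴ)
      = matIP N W (polyF n q) (P n) :=
    congrArg (matInt N) (funext fun y => by rw [hQ1 y])
  have hpt : ∀ y : ℝ, P n y * W y *
        (-(matDeriv N (P n) y) - P n y * A + ((v.derivative.eval y : ℝ) : ℂ) • P n y)ᴴ
      = -(P n y * W y * (polyF n q y)ᴴ)
        + (((v.derivative.eval y : ℝ) : ℂ) • P n y) * W y * (P n y)ᴴ := by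
    intro y
    have h1 : -(matDeriv N (P n) y) - P n y * A + ((v.derivative.eval y : ℝ) : ℂ) • P n y
        = -(polyF n q y) + ((v.derivative.eval y : ℝ) : ℂ) • P n y := by
      rw [← hQ1 y]; abel
    rw [h1, Matrix.conjTranspose_add, Matrix.conjTranspose_neg, Matrix.mul_add,
      Matrix.mul_neg]
    congr 1
    rw [Matrix.conjTranspose_smul]
    have h2 : star ((v.derivative.eval y : ℝ) : ℂ) = ((v.derivative.eval y : ℝ) : ℂ) := by
      simp [Complex.star_def, Complex.conj_ofReal]
    rw [h2, mul_smul_comm, smul_mul_assoc, smul_mul_assoc]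
  have hneg : ∀ i j, Integrable fun y : ℝ => (-(P n y * W y * (polyF n q y)ᴴ)) i j := by
    intro i j
    exact (EInt_of_rep W hWmeas hWmom hPrep (rep_polyF n q) i j).neg
  have hsm : ∀ i j, Integrable fun y : ℝ =>
      ((((v.derivative.eval y : ℝ) : ℂ) • P n y) * W y * (P n y)ᴴ) i j :=
    EInt_vsmul W hWmeas hWmom hPrep hPrep v.derivative
  have hR : matInt N (fun y => P n y * W y *
        (-(matDeriv N (P n) y) - P n y * A + ((v.derivative.eval y : ℝ) : ℂ) • P n y)ᴴ)
      = -(matIP N W (P n) (polyF n q))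
        + matIP N W (fun y => ((v.derivative.eval y : ℝ) : ℂ) • P n y) (P n) := by
    rw [matInt_congr hpt, matInt_add hneg hsm, matInt_neg]
    rfl
  rw [hL, hR] at hEq
  rw [lead_left W hWmeas hWmom P hPmonic hPorth n q, hqn] at hEq
  rw [lead_right W hWmeas hWmom P hPmonic hPorth n q, hqn] at hEq
  have hX : matIP N W (fun y => ((v.derivative.eval y : ℝ) : ℂ) • P n y) (P n)
      = A * matIP N W (P n) (P n) + matIP N W (P n) (P n) * Aᴴ := by
    have h3 : matIP N W (fun y => ((v.derivative.eval y : ℝ) : ℂ) • P n y) (P n)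
        = matIP N W (P n) (P n) * Aᴴ
          + (-(matIP N W (P n) (P n) * Aᴴ)
            + matIP N W (fun y => ((v.derivative.eval y : ℝ) : ℂ) • P n y) (P n)) := by
      abel
    rw [h3, ← hEq]
    abel
  have hinv : matIP N W (P n) (P n) * (matIP N W (P n) (P n))⁻¹ = 1 :=
    Matrix.mul_nonsing_inv _ ((Matrix.isUnit_iff_isUnit_det _).mp (hHpos n).isUnit)
  simp only [vCoef]
  rw [hX, add_mul, Matrix.mul_assoc A, hinv, Matrix.mul_one]
end

section
/- Under the stated hypotheses, the recurrence coefficients of the monic MVOPs satisfy the discrete string equations: for all n ≥ 0, [B(n), A] = I + G_{−1}(n) − G_{−1}(n+1), and for all n ≥ 1, [C(n), A] = C(n) G_0(n−1) − G_0(n) C(n), where G_{−1}(n) := ⟨v'(·)P(·,n), P(·,n−1)⟩ ℋ(n−1)⁻¹ for n ≥ 1, G_{−1}(0) := 0, and G_0(n) := ⟨v'(·)P(·,n), P(·,n)⟩ ℋ(n)⁻¹. -/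
open MeasureTheory Matrix Finset
open scoped ComplexOrder

namespace StringEq

/-- coefficient representation of a matrix polynomial function -/
def Coeffs {N : ℕ} (F : ℝ → Matrix (Fin N) (Fin N) ℂ)
    (c : ℕ → Matrix (Fin N) (Fin N) ℂ) (d : ℕ) : Prop :=
  ∀ x : ℝ, F x = ∑ k ∈ Finset.range (d + 1), ((x : ℂ) ^ k) • c k

/-- every entry is a polynomial -/
def PEnt {N : ℕ} (F : ℝ → Matrix (Fin N) (Fin N) ℂ) : Prop :=
  ∀ i j, ∃ p : Polynomial ℂ, ∀ y : ℝ, F y i j = p.eval (y : ℂ)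

lemma PEnt_of_Coeffs {N : ℕ} {F : ℝ → Matrix (Fin N) (Fin N) ℂ} {c d}
    (h : Coeffs F c d) : PEnt F := by
  intro i j
  refine ⟨∑ k ∈ Finset.range (d + 1), Polynomial.C (c k i j) * Polynomial.X ^ k, ?_⟩
  intro y
  rw [h y]
  rw [Polynomial.eval_finset_sum]
  rw [Matrix.sum_apply]
  refine Finset.sum_congr rfl (fun k _ => ?_)
  simp only [Matrix.smul_apply, Polynomial.eval_mul, Polynomial.eval_C, Polynomial.eval_pow,
    Polynomial.eval_X, smul_eq_mul]
  ring

lemma PEnt_mul_const {N : ℕ} {F : ℝ → Matrix (Fin N) (Fin N) ℂ} (h : PEnt F)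
    (X : Matrix (Fin N) (Fin N) ℂ) : PEnt (fun y => F y * X) := by
  intro i j
  choose p hp using h
  refine ⟨∑ a : Fin N, p i a * Polynomial.C (X a j), fun y => ?_⟩
  rw [Polynomial.eval_finset_sum]
  simp only [Matrix.mul_apply, Polynomial.eval_mul, Polynomial.eval_C]
  exact Finset.sum_congr rfl (fun a _ => by rw [hp i a])

lemma PEnt_smul_realpoly {N : ℕ} {F : ℝ → Matrix (Fin N) (Fin N) ℂ} (h : PEnt F)
    (r : Polynomial ℝ) : PEnt (fun y => ((r.eval y : ℝ) : ℂ) • F y) := by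
  intro i j
  choose p hp using h
  refine ⟨(r.map (algebraMap ℝ ℂ)) * p i j, fun y => ?_⟩
  rw [Polynomial.eval_mul]
  have h1 : (r.map (algebraMap ℝ ℂ)).eval ((y : ℝ) : ℂ) = ((r.eval y : ℝ) : ℂ) := by
    rw [Polynomial.eval_map]
    have := Polynomial.eval₂_at_apply (p := r) (algebraMap ℝ ℂ) y
    simpa using this
  rw [h1, ← hp i j]
  simp [Matrix.smul_apply]

lemma intEnt {N : ℕ} (W : ℝ → Matrix (Fin N) (Fin N) ℂ)
    (hWmeas : ∀ i j : Fin N, Measurable fun x => W x i j)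
    (hWmom : ∀ (m : ℕ) (i j : Fin N),
      Integrable fun x : ℝ => |x| ^ m * ‖W x i j‖)
    (p : Polynomial ℂ) (a b : Fin N) :
    Integrable (fun y : ℝ => p.eval (y : ℂ) * W y a b) := by
  have : (fun y : ℝ => p.eval (y : ℂ) * W y a b) =
      fun y : ℝ => ∑ m ∈ Finset.range (p.natDegree + 1),
        p.coeff m * ((y : ℂ) ^ m * W y a b) := by
    funext y
    rw [Polynomial.eval_eq_sum_range, Finset.sum_mul]
    simp [mul_assoc]
  rw [this]
  refine integrable_finset_sum _ (fun m _ => ?_)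
  refine Integrable.const_mul ?_ _
  refine Integrable.mono' (hWmom m a b) ?_ ?_
  · exact ((Complex.measurable_ofReal.pow_const m).mul (hWmeas a b)).aestronglyMeasurable
  · refine Filter.Eventually.of_forall (fun y => ?_)
    simp [norm_mul, norm_pow, Complex.norm_real, Real.norm_eq_abs,
      le_refl]

lemma intHWG {N : ℕ} (W : ℝ → Matrix (Fin N) (Fin N) ℂ)
    (hWmeas : ∀ i j : Fin N, Measurable fun x => W x i j)
    (hWmom : ∀ (m : ℕ) (i j : Fin N),
      Integrable fun x : ℝ => |x| ^ m * ‖W x i j‖)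
    {H G : ℝ → Matrix (Fin N) (Fin N) ℂ} (hH : PEnt H) (hG : PEnt G) (i j : Fin N) :
    Integrable (fun y : ℝ => (H y * W y * (G y)ᴴ) i j) := by
  choose p hp using hH
  choose q hq using hG
  have : (fun y : ℝ => (H y * W y * (G y)ᴴ) i j) =
      fun y : ℝ => ∑ b : Fin N, ∑ a : Fin N,
        ((p i a) * ((q j b).map (starRingEnd ℂ))).eval (y : ℂ) * W y a b := by
    funext y
    simp only [Matrix.mul_apply, Matrix.conjTranspose_apply, Finset.sum_mul]
    refine Finset.sum_congr rfl (fun b _ => Finset.sum_congr rfl (fun a _ => ?_))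
    rw [hp i a, hq j b, Polynomial.eval_mul]
    have : ((q j b).map (starRingEnd ℂ)).eval (y : ℂ) =
        (starRingEnd ℂ) ((q j b).eval (y : ℂ)) := by
      rw [Polynomial.eval_map]
      have := Polynomial.eval₂_at_apply (p := q j b) (starRingEnd ℂ) (y : ℂ)
      rwa [Complex.conj_ofReal] at this
    simp only [← starRingEnd_apply]
    rw [this]; ring
  rw [this]
  exact integrable_finset_sum _ (fun b _ => integrable_finset_sum _
    (fun a _ => intEnt W hWmeas hWmom _ a b))

lemma matInt_add {N : ℕ} {F G : ℝ → Matrix (Fin N) (Fin N) ℂ}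
    (hF : ∀ i j, Integrable fun y : ℝ => F y i j)
    (hG : ∀ i j, Integrable fun y : ℝ => G y i j) :
    matInt N (fun y => F y + G y) = matInt N F + matInt N G := by
  ext i j
  simp only [matInt, Matrix.of_apply, Matrix.add_apply]
  exact integral_add (hF i j) (hG i j)

lemma matInt_neg {N : ℕ} (F : ℝ → Matrix (Fin N) (Fin N) ℂ) :
    matInt N (fun y => -F y) = -matInt N F := by
  ext i j
  simp only [matInt, Matrix.of_apply, Matrix.neg_apply]
  exact integral_neg _

lemma matInt_sum {N : ℕ} {ι : Type*} (s : Finset ι) (F : ι → ℝ → Matrix (Fin N) (Fin N) ℂ)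
    (h : ∀ t ∈ s, ∀ i j, Integrable fun y : ℝ => F t y i j) :
    matInt N (fun y => ∑ t ∈ s, F t y) = ∑ t ∈ s, matInt N (F t) := by
  ext i j
  simp only [matInt, Matrix.of_apply, Matrix.sum_apply]
  rw [integral_finset_sum s (fun t ht => h t ht i j)]

lemma matInt_const_mul {N : ℕ} (X : Matrix (Fin N) (Fin N) ℂ)
    {F : ℝ → Matrix (Fin N) (Fin N) ℂ}
    (hF : ∀ i j, Integrable fun y : ℝ => F y i j) :
    matInt N (fun y => X * F y) = X * matInt N F := by
  ext i j
  simp only [matInt, Matrix.of_apply, Matrix.mul_apply]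
  rw [integral_finset_sum _ (fun a (_ : a ∈ Finset.univ) => (hF a j).const_mul (X i a))]
  exact Finset.sum_congr rfl (fun a _ => MeasureTheory.integral_const_mul _ _)

lemma matInt_congr {N : ℕ} {F G : ℝ → Matrix (Fin N) (Fin N) ℂ} (h : ∀ y, F y = G y) :
    matInt N F = matInt N G := by
  have : F = G := funext h
  rw [this]

/-- the monomial `x^k • 1`. -/
def mono (N k : ℕ) : ℝ → Matrix (Fin N) (Fin N) ℂ := fun y => ((y : ℂ) ^ k) • 1

lemma PEnt_mono {N : ℕ} (k : ℕ) : PEnt (mono N k) := by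
  intro i j
  refine ⟨if i = j then Polynomial.X ^ k else 0, fun y => ?_⟩
  by_cases h : i = j <;> simp [mono, Matrix.smul_apply, Matrix.one_apply, h]

lemma matIP_herm {N : ℕ} (W : ℝ → Matrix (Fin N) (Fin N) ℂ)
    (hWpos : ∀ᵐ x : ℝ, (W x).PosDef)
    (H G : ℝ → Matrix (Fin N) (Fin N) ℂ) :
    matIP N W H G = (matIP N W G H)ᴴ := by
  ext i j
  simp only [matIP, matInt, Matrix.of_apply, Matrix.conjTranspose_apply]
  rw [← starRingEnd_apply, ← integral_conj]
  refine integral_congr_ae ?_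
  filter_upwards [hWpos] with y hy
  have h1 : (G y * W y * (H y)ᴴ)ᴴ = H y * W y * (G y)ᴴ := by
    rw [Matrix.conjTranspose_mul, Matrix.conjTranspose_mul, Matrix.conjTranspose_conjTranspose,
      hy.1.eq, mul_assoc]
  calc (H y * W y * (G y)ᴴ) i j = ((G y * W y * (H y)ᴴ)ᴴ) i j := by rw [h1]
    _ = (starRingEnd ℂ) ((G y * W y * (H y)ᴴ) j i) := rfl

lemma matIP_expand {N : ℕ} (W : ℝ → Matrix (Fin N) (Fin N) ℂ)
    (hWmeas : ∀ i j : Fin N, Measurable fun x => W x i j)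
    (hWmom : ∀ (m : ℕ) (i j : Fin N),
      Integrable fun x : ℝ => |x| ^ m * ‖W x i j‖)
    {Q : ℝ → Matrix (Fin N) (Fin N) ℂ} {c : ℕ → Matrix (Fin N) (Fin N) ℂ} {d : ℕ}
    {G : ℝ → Matrix (Fin N) (Fin N) ℂ} (hQ : Coeffs Q c d) (hG : PEnt G) :
    matIP N W Q G = ∑ k ∈ Finset.range (d + 1), c k * matIP N W (mono N k) G := by
  have key : (fun y => Q y * W y * (G y)ᴴ) =
      fun y => ∑ k ∈ Finset.range (d + 1), c k * (mono N k y * W y * (G y)ᴴ) := by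
    funext y
    rw [hQ y, Finset.sum_mul, Finset.sum_mul]
    refine Finset.sum_congr rfl (fun k _ => ?_)
    have : ((y : ℂ) ^ k) • c k = c k * mono N k y := by
      rw [mono, mul_smul_comm, mul_one]
    rw [this]; simp only [mul_assoc]
  have hint : ∀ t : ℕ, ∀ i j : Fin N,
      Integrable (fun y : ℝ => (mono N t y * W y * (G y)ᴴ) i j) := fun t =>
    intHWG W hWmeas hWmom (PEnt_mono t) hG
  have hsum := matInt_sum (Finset.range (d + 1))
      (fun t (y : ℝ) => c t * (mono N t y * W y * (G y)ᴴ)) ?_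
  · rw [matIP, key, hsum]
    exact Finset.sum_congr rfl (fun k _ => matInt_const_mul (c k) (hint k))
  · intro t _ i j
    have : (fun y : ℝ => (c t * (mono N t y * W y * (G y)ᴴ)) i j) =
        fun y : ℝ => ∑ a, c t i a * (mono N t y * W y * (G y)ᴴ) a j := by
      funext y; simp [Matrix.mul_apply]
    rw [this]
    exact integrable_finset_sum _ (fun a _ => (hint t a j).const_mul _)

lemma coeffs_cancel {N : ℕ} {c : ℕ → Matrix (Fin N) (Fin N) ℂ} {d : ℕ}
    (h : ∀ x : ℝ, ∑ k ∈ Finset.range (d + 1), ((x : ℂ) ^ k) • c k = 0) :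
    ∀ k, k ≤ d → c k = 0 := by
  intro k hk
  ext i j
  set q : Polynomial ℂ :=
    ∑ m ∈ Finset.range (d + 1), Polynomial.C (c m i j) * Polynomial.X ^ m with hq
  have hroot : ∀ x : ℝ, q.eval (x : ℂ) = 0 := by
    intro x
    have := congrArg (fun M => M i j) (h x)
    simp only [Matrix.sum_apply, Matrix.smul_apply, Matrix.zero_apply, smul_eq_mul] at this
    rw [hq]
    rw [Polynomial.eval_finset_sum]
    have e2 : ∀ m ∈ Finset.range (d + 1),
        Polynomial.eval (x : ℂ) (Polynomial.C (c m i j) * Polynomial.X ^ m) =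
        (x : ℂ) ^ m * c m i j := by
      intro m _
      rw [Polynomial.eval_mul, Polynomial.eval_C, Polynomial.eval_pow, Polynomial.eval_X]
      ring
    rw [Finset.sum_congr rfl e2]
    exact this
  have hq0 : q = 0 := by
    apply Polynomial.eq_zero_of_infinite_isRoot
    apply Set.Infinite.mono (s := Set.range (fun x : ℝ => (x : ℂ)))
    · rintro z ⟨x, rfl⟩
      exact hroot x
    · exact Set.infinite_range_of_injective Complex.ofReal_injective
  have : q.coeff k = c k i j := by
    rw [hq, Polynomial.finset_sum_coeff]
    simp only [Polynomial.coeff_C_mul, Polynomial.coeff_X_pow]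
    rw [Finset.sum_eq_single k]
    · simp
    · intro m _ hm; simp [Ne.symm hm]
    · intro hmem; exact absurd (Finset.mem_range.mpr (by omega)) hmem
  rw [hq0] at this
  simpa using this.symm

lemma coeffs_deriv {N : ℕ} {F : ℝ → Matrix (Fin N) (Fin N) ℂ}
    {c : ℕ → Matrix (Fin N) (Fin N) ℂ} {d : ℕ} (h : Coeffs F c d) :
    matDeriv N F = fun x : ℝ => ∑ k ∈ Finset.range (d + 1),
      ((x : ℂ) ^ k) • (if k < d then (((k : ℕ) + 1 : ℕ) : ℂ) • c (k + 1) else 0) := by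
  funext x
  ext i j
  have hentry : (fun y : ℝ => F y i j) =
      fun y : ℝ => ∑ m ∈ Finset.range (d + 1), ((y : ℂ) ^ m) * c m i j := by
    funext y
    rw [h y]
    simp [Matrix.sum_apply, Matrix.smul_apply]
  have hd : HasDerivAt (fun y : ℝ => F y i j)
      (∑ m ∈ Finset.range (d + 1), ((m : ℂ) * (x : ℂ) ^ (m - 1)) * c m i j) x := by
    rw [hentry]
    exact HasDerivAt.fun_sum (fun m _ => ((hasDerivAt_pow m (x : ℂ)).comp_ofReal).mul_const _)
  have : matDeriv N F x i j
      = ∑ m ∈ Finset.range (d + 1), ((m : ℂ) * (x : ℂ) ^ (m - 1)) * c m i j := by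
    simp only [matDeriv, Matrix.of_apply]
    exact hd.deriv
  rw [this]
  rw [Finset.sum_range_succ' (fun m => ((m : ℂ) * (x : ℂ) ^ (m - 1)) * c m i j) d]
  simp only [Matrix.sum_apply, Matrix.smul_apply]
  rw [Finset.sum_range_succ]
  simp only [lt_irrefl, if_neg (lt_irrefl d)]
  push_cast
  simp only [Nat.cast_zero, zero_mul, add_zero, Matrix.zero_apply, smul_eq_mul, mul_zero]
  refine (Finset.sum_congr rfl (fun m hm => ?_)).symm
  have hmd : m < d := Finset.mem_range.mp hm
  rw [if_pos hmd]
  simp only [Matrix.smul_apply, smul_eq_mul]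
  push_cast
  ring_nf

lemma split_left {N : ℕ} (W : ℝ → Matrix (Fin N) (Fin N) ℂ)
    (hWmeas : ∀ i j : Fin N, Measurable fun x => W x i j)
    (hWmom : ∀ (m : ℕ) (i j : Fin N),
      Integrable fun x : ℝ => |x| ^ m * ‖W x i j‖)
    {D R G : ℝ → Matrix (Fin N) (Fin N) ℂ} (hD : PEnt D) (hR : PEnt R) (hG : PEnt G)
    (A : Matrix (Fin N) (Fin N) ℂ) :
    matInt N (fun y => (D y + R y * A) * W y * (G y)ᴴ)
      = matIP N W D G + matIP N W (fun y => R y * A) G := by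
  have key : (fun y => (D y + R y * A) * W y * (G y)ᴴ)
      = fun y => D y * W y * (G y)ᴴ + (R y * A) * W y * (G y)ᴴ := by
    funext y; rw [add_mul, add_mul]
  rw [key]
  exact matInt_add (intHWG W hWmeas hWmom hD hG)
    (intHWG W hWmeas hWmom (PEnt_mul_const hR A) hG)

lemma split_right {N : ℕ} (W : ℝ → Matrix (Fin N) (Fin N) ℂ)
    (hWmeas : ∀ i j : Fin N, Measurable fun x => W x i j)
    (hWmom : ∀ (m : ℕ) (i j : Fin N),
      Integrable fun x : ℝ => |x| ^ m * ‖W x i j‖)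
    {R D S : ℝ → Matrix (Fin N) (Fin N) ℂ} (hR : PEnt R) (hD : PEnt D) (hS : PEnt S)
    (A : Matrix (Fin N) (Fin N) ℂ) (r : Polynomial ℝ) :
    matInt N (fun y => R y * W y * (-(D y) - S y * A + ((r.eval y : ℝ) : ℂ) • S y)ᴴ)
      = -(matIP N W R D) - matIP N W R (fun y => S y * A)
        + matIP N W (fun y => ((r.eval y : ℝ) : ℂ) • R y) S := by
  have key : (fun y => R y * W y * (-(D y) - S y * A + ((r.eval y : ℝ) : ℂ) • S y)ᴴ)
      = fun y => (-(R y * W y * (D y)ᴴ) + -(R y * W y * (S y * A)ᴴ))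
          + (((r.eval y : ℝ) : ℂ) • R y) * W y * (S y)ᴴ := by
    funext y
    rw [sub_eq_add_neg, conjTranspose_add, conjTranspose_add, conjTranspose_neg,
      conjTranspose_neg, conjTranspose_smul, mul_add, mul_add, mul_neg, mul_neg,
      RCLike.star_def, Complex.conj_ofReal, Matrix.mul_smul, Matrix.smul_mul, Matrix.smul_mul]
  rw [key]
  have h1 := intHWG W hWmeas hWmom hR hD
  have h2 := intHWG W hWmeas hWmom hR (PEnt_mul_const hS A)
  have h3 := intHWG W hWmeas hWmom (PEnt_smul_realpoly hR r) hS
  have h12 : ∀ i j, Integrable (fun y : ℝ =>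
      (-(R y * W y * (D y)ᴴ) + -(R y * W y * (S y * A)ᴴ)) i j) :=
    fun i j => ((h1 i j).neg).add ((h2 i j).neg)
  rw [matInt_add (F := fun y => -(R y * W y * (D y)ᴴ) + -(R y * W y * (S y * A)ᴴ))
    (G := fun y => (((r.eval y : ℝ) : ℂ) • R y) * W y * (S y)ᴴ) h12 h3,
    matInt_add (F := fun y => -(R y * W y * (D y)ᴴ))
    (G := fun y => -(R y * W y * (S y * A)ᴴ)) (fun i j => (h1 i j).neg)
    (fun i j => (h2 i j).neg),
    matInt_neg, matInt_neg, sub_eq_add_neg]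
  rfl

end StringEq
open StringEq in
/-- **Discrete string equations** (Theorem 3.6 of the paper). -/
theorem discrete_string_equations
    (N : ℕ) (hN : 1 ≤ N)
    (W : ℝ → Matrix (Fin N) (Fin N) ℂ)
    (hWmeas : ∀ i j : Fin N, Measurable fun x => W x i j)
    (hWpos : ∀ᵐ x : ℝ, (W x).PosDef)
    (hWmom : ∀ (m : ℕ) (i j : Fin N),
      Integrable fun x : ℝ => |x| ^ m * ‖W x i j‖)
    (P : ℕ → ℝ → Matrix (Fin N) (Fin N) ℂ)
    (hPmonic : ∀ n, IsMonicMatPoly N n (P n))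
    (hPorth : ∀ n m, n ≠ m → matIP N W (P n) (P m) = 0)
    (hHpos : ∀ n, (matIP N W (P n) (P n)).PosDef)
    (v : Polynomial ℝ) (k : ℕ) (hk : 2 ≤ k) (hdeg : v.natDegree = k)
    (A : Matrix (Fin N) (Fin N) ℂ)
    (hadj : ∀ R S : ℝ → Matrix (Fin N) (Fin N) ℂ, IsMatPoly N R → IsMatPoly N S →
      matInt N (fun y => (matDeriv N R y + R y * A) * W y * (S y)ᴴ) =
      matInt N (fun y => R y * W y *
        (-(matDeriv N S y) - S y * A + ((v.derivative.eval y : ℝ) : ℂ) • S y)ᴴ))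
    (B C : ℕ → Matrix (Fin N) (Fin N) ℂ)
    (hrec : ∀ (n : ℕ) (x : ℝ),
      (x : ℂ) • P n x =
        P (n + 1) x + B n * P n x + C n * (if n = 0 then 0 else P (n - 1) x))
    (hC : ∀ n, 1 ≤ n →
      C n = matIP N W (P n) (P n) * (matIP N W (P (n - 1)) (P (n - 1)))⁻¹) :
    (∀ n : ℕ,
      B n * A - A * B n =
        1 + (if n = 0 then 0 else vCoef N W v P n (n - 1))
          - vCoef N W v P (n + 1) n) ∧
    (∀ n : ℕ, 1 ≤ n →
      C n * A - A * C n =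
        C n * vCoef N W v P (n - 1) (n - 1) - vCoef N W v P n n * C n) := by
  classical
  choose c hc1 hc2 using hPmonic
  have hc2' : ∀ n, Coeffs (P n) (c n) n := hc2
  have hPent : ∀ n, PEnt (P n) := fun n => PEnt_of_Coeffs (hc2' n)
  -- orthogonality of monomials to higher P's
  have F0 : ∀ m j, j < m → matIP N W (mono N j) (P m) = 0 := by
    intro m j
    induction j using Nat.strong_induction_on with
    | _ j ih =>
      intro hjm
      have h0 := hPorth j m (by omega)
      rw [matIP_expand W hWmeas hWmom (hc2' j) (hPent m)] at h0
      rw [Finset.sum_range_succ, hc1 j, one_mul] at h0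
      have hz : ∑ i ∈ Finset.range j, c j i * matIP N W (mono N i) (P m) = 0 :=
        Finset.sum_eq_zero (fun i hi => by
          have hij := Finset.mem_range.mp hi
          rw [ih i hij (by omega), mul_zero])
      rw [hz, zero_add] at h0
      exact h0
  have F1 : ∀ m, matIP N W (mono N m) (P m) = matIP N W (P m) (P m) := by
    intro m
    have h0 := matIP_expand W hWmeas hWmom (hc2' m) (hPent m)
    rw [Finset.sum_range_succ, hc1 m, one_mul] at h0
    rw [Finset.sum_eq_zero (fun i hi => by
      rw [F0 m i (Finset.mem_range.mp hi), mul_zero]), zero_add] at h0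
    exact h0.symm
  have F2 : ∀ m, matIP N W (mono N (m + 1)) (P m)
      = -(c (m + 1) m * matIP N W (P m) (P m)) := by
    intro m
    have h0 := hPorth (m + 1) m (by omega)
    rw [matIP_expand W hWmeas hWmom (hc2' (m + 1)) (hPent m)] at h0
    rw [Finset.sum_range_succ, hc1 (m + 1), one_mul, Finset.sum_range_succ, F1 m] at h0
    rw [Finset.sum_eq_zero (fun i hi => by
      rw [F0 m i (Finset.mem_range.mp hi), mul_zero]), zero_add] at h0
    exact eq_neg_of_add_eq_zero_right h0
  -- derivative coefficients
  have hDc : ∀ n, Coeffs (matDeriv N (P n))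
      (fun j => if j < n then (((j : ℕ) + 1 : ℕ) : ℂ) • c n (j + 1) else 0) n :=
    fun n x => by rw [coeffs_deriv (hc2' n)]
  -- coefficients of P n * A
  have hPAc : ∀ n, Coeffs (fun y => P n y * A) (fun j => c n j * A) n := by
    intro n x
    show P n x * A = _
    rw [hc2' n x, Finset.sum_mul]
    exact Finset.sum_congr rfl (fun j _ => smul_mul_assoc _ _ _)
  -- adjointness, split into inner products
  have EqNM : ∀ n m,
      matIP N W (matDeriv N (P n)) (P m) + matIP N W (fun y => P n y * A) (P m)
      = -(matIP N W (P n) (matDeriv N (P m))) - matIP N W (P n) (fun y => P m y * A)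
        + matIP N W (fun y => ((v.derivative.eval y : ℝ) : ℂ) • P n y) (P m) := by
    intro n m
    have h := hadj (P n) (P m) ⟨n, c n, hc2' n⟩ ⟨m, c m, hc2' m⟩
    rw [split_left W hWmeas hWmom (PEnt_of_Coeffs (hDc n)) (hPent n) (hPent m) A] at h
    rw [split_right W hWmeas hWmom (hPent n) (PEnt_of_Coeffs (hDc m)) (hPent m) A
      v.derivative] at h
    exact h
  have compute1 : ∀ n, matIP N W (matDeriv N (P n)) (P n) = 0 := by
    intro n
    rw [matIP_expand W hWmeas hWmom (hDc n) (hPent n)]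
    refine Finset.sum_eq_zero (fun j hj => ?_)
    by_cases hjn : j < n
    · rw [F0 n j hjn, mul_zero]
    · have : j = n := by have := Finset.mem_range.mp hj; omega
      subst this
      rw [if_neg (lt_irrefl j), zero_mul]
  have compute2 : ∀ n, matIP N W (fun y => P n y * A) (P n)
      = A * matIP N W (P n) (P n) := by
    intro n
    rw [matIP_expand W hWmeas hWmom (hPAc n) (hPent n), Finset.sum_range_succ, hc1 n,
      one_mul, F1 n]
    rw [Finset.sum_eq_zero (fun i hi => by
      rw [F0 n i (Finset.mem_range.mp hi), mul_zero]), zero_add]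
  -- key identity 1 : M(n,n) = A ℋ(n) + ℋ(n) Aᴴ
  have key1 : ∀ n, matIP N W (fun y => ((v.derivative.eval y : ℝ) : ℂ) • P n y) (P n)
      = A * matIP N W (P n) (P n) + matIP N W (P n) (P n) * Aᴴ := by
    intro n
    have h := EqNM n n
    rw [compute1 n, compute2 n, zero_add] at h
    have hd : matIP N W (P n) (matDeriv N (P n)) = 0 := by
      rw [matIP_herm W hWpos, compute1 n, Matrix.conjTranspose_zero]
    have ha : matIP N W (P n) (fun y => P n y * A)
        = matIP N W (P n) (P n) * Aᴴ := by
      rw [matIP_herm W hWpos, compute2 n, Matrix.conjTranspose_mul, (hHpos n).1.eq]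
    rw [hd, ha] at h
    rw [h]
    abel
  -- computations for m+1 against m
  have compute3 : ∀ m, matIP N W (matDeriv N (P (m + 1))) (P m)
      = (((m : ℕ) + 1 : ℕ) : ℂ) • matIP N W (P m) (P m) := by
    intro m
    rw [matIP_expand W hWmeas hWmom (hDc (m + 1)) (hPent m)]
    rw [Finset.sum_range_succ, Finset.sum_range_succ]
    rw [Finset.sum_eq_zero (fun i hi => by
      rw [F0 m i (Finset.mem_range.mp hi), mul_zero]), zero_add]
    rw [if_neg (lt_irrefl (m + 1)), zero_mul, add_zero, if_pos (Nat.lt_succ_self m),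
      hc1 (m + 1), F1 m, smul_mul_assoc, one_mul]
  have compute4 : ∀ m, matIP N W (fun y => P (m + 1) y * A) (P m)
      = c (m + 1) m * A * matIP N W (P m) (P m)
        - A * (c (m + 1) m * matIP N W (P m) (P m)) := by
    intro m
    rw [matIP_expand W hWmeas hWmom (hPAc (m + 1)) (hPent m)]
    rw [Finset.sum_range_succ, Finset.sum_range_succ]
    rw [Finset.sum_eq_zero (fun i hi => by
      rw [F0 m i (Finset.mem_range.mp hi), mul_zero]), zero_add]
    rw [F1 m, F2 m, hc1 (m + 1), one_mul, mul_neg]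
    rw [sub_eq_add_neg]
  have zero3 : ∀ m, matIP N W (P (m + 1)) (matDeriv N (P m)) = 0 := by
    intro m
    rw [matIP_herm W hWpos]
    rw [matIP_expand W hWmeas hWmom (hDc m) (hPent (m + 1))]
    rw [Finset.sum_eq_zero (fun i hi => by
      rw [F0 (m + 1) i (by have := Finset.mem_range.mp hi; omega), mul_zero])]
    exact Matrix.conjTranspose_zero
  have zero4 : ∀ m, matIP N W (P (m + 1)) (fun y => P m y * A) = 0 := by
    intro m
    rw [matIP_herm W hWpos]
    rw [matIP_expand W hWmeas hWmom (hPAc m) (hPent (m + 1))]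
    rw [Finset.sum_eq_zero (fun i hi => by
      rw [F0 (m + 1) i (by have := Finset.mem_range.mp hi; omega), mul_zero])]
    exact Matrix.conjTranspose_zero
  -- key identity 2 : M(m+1,m)
  have key2 : ∀ m,
      matIP N W (fun y => ((v.derivative.eval y : ℝ) : ℂ) • P (m + 1) y) (P m)
      = (((m : ℕ) + 1 : ℕ) : ℂ) • matIP N W (P m) (P m)
        + (c (m + 1) m * A * matIP N W (P m) (P m)
          - A * (c (m + 1) m * matIP N W (P m) (P m))) := by
    intro m
    have h := EqNM (m + 1) m
    rw [compute3 m, compute4 m, zero3 m, zero4 m, neg_zero, sub_zero, zero_add] at h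
    exact h.symm
  -- invertibility of ℋ
  have hHdet : ∀ m, IsUnit (matIP N W (P m) (P m)).det :=
    fun m => (Matrix.isUnit_iff_isUnit_det _).mp (hHpos m).isUnit
  have hHinv1 : ∀ m, matIP N W (P m) (P m) * (matIP N W (P m) (P m))⁻¹ = 1 :=
    fun m => Matrix.mul_nonsing_inv _ (hHdet m)
  have hHinv2 : ∀ m, (matIP N W (P m) (P m))⁻¹ * matIP N W (P m) (P m) = 1 :=
    fun m => Matrix.nonsing_inv_mul _ (hHdet m)
  -- values of vCoef
  have hv1 : ∀ n, vCoef N W v P n n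
      = A + matIP N W (P n) (P n) * Aᴴ * (matIP N W (P n) (P n))⁻¹ := by
    intro n
    rw [vCoef, key1 n, add_mul, mul_assoc A, hHinv1 n, mul_one]
  have hv2 : ∀ m, vCoef N W v P (m + 1) m
      = (((m : ℕ) + 1 : ℕ) : ℂ) • 1 + (c (m + 1) m * A - A * c (m + 1) m) := by
    intro m
    rw [vCoef, key2 m]
    simp only [add_mul, sub_mul, smul_mul_assoc, mul_assoc, hHinv1 m, mul_one]
  -- recurrence coefficients
  have hB0 : B 0 = -(c 1 0) := by
    have hP00 : P 0 (0 : ℝ) = 1 := by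
      rw [hc2' 0 0]
      simp [hc1 0]
    have hP10 : P 1 (0 : ℝ) = c 1 0 := by
      rw [hc2' 1 0]
      simp [Finset.sum_range_succ]
    have h := hrec 0 0
    rw [hP00, hP10, if_pos rfl, mul_zero, add_zero, mul_one] at h
    simp only [Complex.ofReal_zero, zero_smul] at h
    exact eq_neg_of_add_eq_zero_right h.symm
  have hBsucc : ∀ n, B (n + 1) = c (n + 1) n - c (n + 2) (n + 1) := by
    intro n
    have hzero : ∀ x : ℝ, ∑ j ∈ Finset.range (n + 2 + 1), ((x : ℂ) ^ j) •
        ((if j ≤ n + 2 then c (n + 2) j else 0)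
          + B (n + 1) * (if j ≤ n + 1 then c (n + 1) j else 0)
          + C (n + 1) * (if j ≤ n then c n j else 0)
          - (if j = 0 then 0 else if j - 1 ≤ n + 1 then c (n + 1) (j - 1) else 0)) = 0 := by
      intro x
      have e1 : ∑ j ∈ Finset.range (n + 3), ((x : ℂ) ^ j) •
          (if j ≤ n + 2 then c (n + 2) j else 0) = P (n + 2) x := by
        rw [hc2' (n + 2) x]
        refine Finset.sum_congr rfl (fun j hj => ?_)
        rw [if_pos (by have := Finset.mem_range.mp hj; omega)]
      have e2 : ∑ j ∈ Finset.range (n + 3), ((x : ℂ) ^ j) •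
          (B (n + 1) * (if j ≤ n + 1 then c (n + 1) j else 0))
          = B (n + 1) * P (n + 1) x := by
        calc ∑ j ∈ Finset.range (n + 3), ((x : ℂ) ^ j) •
              (B (n + 1) * (if j ≤ n + 1 then c (n + 1) j else 0))
            = ∑ j ∈ Finset.range (n + 2), ((x : ℂ) ^ j) •
              (B (n + 1) * (if j ≤ n + 1 then c (n + 1) j else 0)) := by
              rw [Finset.sum_range_succ, if_neg (by omega), mul_zero, smul_zero, add_zero]
          _ = ∑ j ∈ Finset.range (n + 2), B (n + 1) * (((x : ℂ) ^ j) • c (n + 1) j) := by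
              refine Finset.sum_congr rfl (fun j hj => ?_)
              rw [if_pos (by have := Finset.mem_range.mp hj; omega), mul_smul_comm]
          _ = B (n + 1) * P (n + 1) x := by rw [hc2' (n + 1) x, Finset.mul_sum]
      have e3 : ∑ j ∈ Finset.range (n + 3), ((x : ℂ) ^ j) •
          (C (n + 1) * (if j ≤ n then c n j else 0)) = C (n + 1) * P n x := by
        calc ∑ j ∈ Finset.range (n + 3), ((x : ℂ) ^ j) •
              (C (n + 1) * (if j ≤ n then c n j else 0))
            = ∑ j ∈ Finset.range (n + 1), ((x : ℂ) ^ j) •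
              (C (n + 1) * (if j ≤ n then c n j else 0)) := by
              rw [Finset.sum_range_succ, if_neg (by omega), mul_zero, smul_zero, add_zero,
                Finset.sum_range_succ, if_neg (by omega), mul_zero, smul_zero, add_zero]
          _ = ∑ j ∈ Finset.range (n + 1), C (n + 1) * (((x : ℂ) ^ j) • c n j) := by
              refine Finset.sum_congr rfl (fun j hj => ?_)
              rw [if_pos (by have := Finset.mem_range.mp hj; omega), mul_smul_comm]
          _ = C (n + 1) * P n x := by rw [hc2' n x, Finset.mul_sum]
      have e4 : ∑ j ∈ Finset.range (n + 3), ((x : ℂ) ^ j) •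
          (if j = 0 then 0 else if j - 1 ≤ n + 1 then c (n + 1) (j - 1) else 0)
          = (x : ℂ) • P (n + 1) x := by
        rw [Finset.sum_range_succ' (fun j => ((x : ℂ) ^ j) •
          (if j = 0 then (0 : Matrix (Fin N) (Fin N) ℂ)
            else if j - 1 ≤ n + 1 then c (n + 1) (j - 1) else 0)) (n + 2)]
        rw [if_pos rfl, smul_zero, add_zero]
        rw [hc2' (n + 1) x, Finset.smul_sum]
        refine Finset.sum_congr rfl (fun j hj => ?_)
        rw [if_neg (Nat.succ_ne_zero j), Nat.add_sub_cancel,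
          if_pos (by have := Finset.mem_range.mp hj; omega)]
        rw [pow_succ, mul_comm ((x : ℂ) ^ j) (x : ℂ), ← smul_smul]
      calc ∑ j ∈ Finset.range (n + 2 + 1), ((x : ℂ) ^ j) •
            ((if j ≤ n + 2 then c (n + 2) j else 0)
              + B (n + 1) * (if j ≤ n + 1 then c (n + 1) j else 0)
              + C (n + 1) * (if j ≤ n then c n j else 0)
              - (if j = 0 then 0 else if j - 1 ≤ n + 1 then c (n + 1) (j - 1) else 0))
          = (∑ j ∈ Finset.range (n + 3), ((x : ℂ) ^ j) •
              (if j ≤ n + 2 then c (n + 2) j else 0))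
            + (∑ j ∈ Finset.range (n + 3), ((x : ℂ) ^ j) •
              (B (n + 1) * (if j ≤ n + 1 then c (n + 1) j else 0)))
            + (∑ j ∈ Finset.range (n + 3), ((x : ℂ) ^ j) •
              (C (n + 1) * (if j ≤ n then c n j else 0)))
            - (∑ j ∈ Finset.range (n + 3), ((x : ℂ) ^ j) •
              (if j = 0 then 0 else if j - 1 ≤ n + 1 then c (n + 1) (j - 1) else 0)) := by
            simp only [smul_add, smul_sub, Finset.sum_add_distrib, Finset.sum_sub_distrib]
        _ = 0 := by
            rw [e1, e2, e3, e4]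
            have hr := hrec (n + 1) x
            rw [if_neg (Nat.succ_ne_zero n), Nat.add_sub_cancel] at hr
            rw [sub_eq_zero]
            exact hr.symm
    have hEn1 := coeffs_cancel hzero (n + 1) (by omega)
    have hEn1' : (if n + 1 ≤ n + 2 then c (n + 2) (n + 1) else 0)
        + B (n + 1) * (if n + 1 ≤ n + 1 then c (n + 1) (n + 1) else 0)
        + C (n + 1) * (if n + 1 ≤ n then c n (n + 1) else 0)
        - (if n + 1 = 0 then 0
            else if n + 1 - 1 ≤ n + 1 then c (n + 1) (n + 1 - 1) else 0) = 0 := hEn1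
    rw [if_pos (by omega), if_pos (le_refl (n + 1)), hc1 (n + 1), mul_one,
      if_neg (by omega), mul_zero, add_zero, if_neg (Nat.succ_ne_zero n),
      Nat.add_sub_cancel, if_pos (by omega)] at hEn1'
    have h2 : c (n + 2) (n + 1) + B (n + 1) = c (n + 1) n := by
      have := sub_eq_zero.mp hEn1'
      exact this
    rw [← h2]
    abel
  constructor
  · intro n
    match n with
    | 0 =>
      rw [if_pos rfl, hB0, hv2 0]
      norm_num
      noncomm_ring
    | Nat.succ m =>
      rw [if_neg (Nat.succ_ne_zero m)]
      simp only [Nat.succ_eq_add_one, Nat.add_sub_cancel]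
      rw [hBsucc m, hv2 m, hv2 (m + 1)]
      have hcast : ((((m + 1 : ℕ) + 1 : ℕ) : ℂ)) • (1 : Matrix (Fin N) (Fin N) ℂ)
          = (((m : ℕ) + 1 : ℕ) : ℂ) • 1 + 1 := by
        push_cast
        rw [add_smul, one_smul]
      rw [hcast]
      noncomm_ring
  · intro n hn
    obtain ⟨m, rfl⟩ : ∃ m, n = m + 1 := ⟨n - 1, by omega⟩
    simp only [Nat.add_sub_cancel]
    have hCe := hC (m + 1) (by omega)
    simp only [Nat.add_sub_cancel] at hCe
    rw [hCe, hv1 m, hv1 (m + 1)]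
    have collapse1 : ∀ Z : Matrix (Fin N) (Fin N) ℂ,
        (matIP N W (P m) (P m))⁻¹ * (matIP N W (P m) (P m) * Z) = Z := fun Z => by
      rw [← mul_assoc, hHinv2 m, one_mul]
    have collapse2 : ∀ Z : Matrix (Fin N) (Fin N) ℂ,
        (matIP N W (P (m + 1)) (P (m + 1)))⁻¹ * (matIP N W (P (m + 1)) (P (m + 1)) * Z)
          = Z := fun Z => by
      rw [← mul_assoc, hHinv2 (m + 1), one_mul]
    simp only [mul_add, add_mul, mul_assoc, collapse1, collapse2]
    abel
end

section
/- Let t ∈ ℝ, A ∈ M_N(ℂ), and let W̃ be a matrix weight on ℝ with monic MVOPs P̃(·,n) and squared norms ℋ̃(n), satisfying the adjointness relation for v(x) = x² + tx: ∫_ℝ (R'(y)+R(y)A) W̃(y) S(y)* dy = ∫_ℝ R(y) W̃(y) (−S'(y) − S(y)A + (2y+t)S(y))* dy for all matrix polynomials R, S. Then the squared norms satisfy, for all n ≥ 1, ℋ̃(n+1) = ½ℋ̃(n) + ℋ̃(n)ℋ̃(n−1)⁻¹ℋ̃(n) − ¼ℋ̃(n)A*ℋ̃(n)⁻¹Aℋ̃(n)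 + ¼Aℋ̃(n)A*, with initial condition ℋ̃(1) = ½ℋ̃(0) − ¼ℋ̃(0)A*ℋ̃(0)⁻¹Aℋ̃(0) + ¼Aℋ̃(0)A*. -/
open MeasureTheory Matrix Finset
open scoped ComplexOrder

namespace HNR

variable {N : ℕ}

noncomputable def ev (c : ℕ → Matrix (Fin N) (Fin N) ℂ) (d : ℕ) (x : ℝ) :
    Matrix (Fin N) (Fin N) ℂ :=
  ∑ k ∈ Finset.range d, ((x : ℂ) ^ k) • c k

lemma ev_apply (c : ℕ → Matrix (Fin N) (Fin N) ℂ) (d : ℕ) (x : ℝ) (i j : Fin N) :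
    ev c d x i j = ∑ k ∈ Finset.range d, (x : ℂ) ^ k * c k i j := by
  simp [ev, Matrix.sum_apply]

lemma ev_add (a b : ℕ → Matrix (Fin N) (Fin N) ℂ) (d : ℕ) (x : ℝ) :
    ev (fun k => a k + b k) d x = ev a d x + ev b d x := by
  simp [ev, smul_add, Finset.sum_add_distrib]

lemma ev_sub (a b : ℕ → Matrix (Fin N) (Fin N) ℂ) (d : ℕ) (x : ℝ) :
    ev (fun k => a k - b k) d x = ev a d x - ev b d x := by
  simp [ev, smul_sub, Finset.sum_sub_distrib]

lemma ev_smul (z : ℂ) (c : ℕ → Matrix (Fin N) (Fin N) ℂ) (d : ℕ) (x : ℝ) :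
    ev (fun k => z • c k) d x = z • ev c d x := by
  simp [ev, Finset.smul_sum, smul_comm z]

lemma ev_mulr (c : ℕ → Matrix (Fin N) (Fin N) ℂ) (B : Matrix (Fin N) (Fin N) ℂ) (d : ℕ) (x : ℝ) :
    ev (fun k => c k * B) d x = ev c d x * B := by
  simp [ev, Finset.sum_mul, Matrix.smul_mul]

lemma ev_mull (c : ℕ → Matrix (Fin N) (Fin N) ℂ) (B : Matrix (Fin N) (Fin N) ℂ) (d : ℕ) (x : ℝ) :
    ev (fun k => B * c k) d x = B * ev c d x := by
  simp [ev, Finset.mul_sum, Matrix.mul_smul]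

lemma ev_neg (c : ℕ → Matrix (Fin N) (Fin N) ℂ) (d : ℕ) (x : ℝ) :
    ev (fun k => -(c k)) d x = -(ev c d x) := by
  simp [ev]

lemma ev_sum {ι : Type*} (s : Finset ι) (f : ι → ℕ → Matrix (Fin N) (Fin N) ℂ) (d : ℕ) (x : ℝ) :
    ev (fun k => ∑ m ∈ s, f m k) d x = ∑ m ∈ s, ev (f m) d x := by
  unfold ev
  rw [Finset.sum_comm]
  simp [Finset.smul_sum]

lemma ev_pad {c : ℕ → Matrix (Fin N) (Fin N) ℂ} {d₀ d : ℕ}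
    (h : ∀ k, d₀ ≤ k → c k = 0) (hd : d₀ ≤ d) (x : ℝ) :
    ev c d x = ev c d₀ x := by
  unfold ev
  refine (Finset.sum_subset (Finset.range_subset_range.2 hd) ?_).symm
  intro k _ hk
  rw [h k (by simpa using hk)]
  simp

lemma ev_shift (c : ℕ → Matrix (Fin N) (Fin N) ℂ) (d : ℕ) (x : ℝ) :
    ev (fun j => if j = 0 then 0 else c (j - 1)) (d + 1) x = (x : ℂ) • ev c d x := by
  unfold ev
  rw [Finset.sum_range_succ', Finset.smul_sum]
  simp only [Nat.succ_ne_zero, if_false, Nat.add_sub_cancel, pow_zero, if_true, reduceIte,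
    smul_zero, add_zero]
  refine Finset.sum_congr rfl fun i _ => ?_
  rw [pow_succ', mul_smul]

lemma ev_coeff_eq_zero {c : ℕ → Matrix (Fin N) (Fin N) ℂ} {d : ℕ}
    (h : ∀ x : ℝ, ev c d x = 0) : ∀ k, k < d → c k = 0 := by
  intro k hk
  ext i j
  have hroot : ∀ x : ℝ,
      (∑ m ∈ Finset.range d, Polynomial.C (c m i j) * Polynomial.X ^ m).eval (x : ℂ) = 0 := by
    intro x
    have := congrFun (congrFun (h x) i) j
    rw [ev_apply] at this
    simp only [Matrix.zero_apply] at this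
    simp only [Polynomial.eval_finset_sum, Polynomial.eval_mul, Polynomial.eval_C,
      Polynomial.eval_pow, Polynomial.eval_X]
    rw [← this]
    exact Finset.sum_congr rfl fun m _ => mul_comm _ _
  have hp : (∑ m ∈ Finset.range d, Polynomial.C (c m i j) * Polynomial.X ^ m) = 0 := by
    apply Polynomial.eq_zero_of_infinite_isRoot
    apply Set.Infinite.mono (s := Set.range (Complex.ofReal))
    · rintro z ⟨x, rfl⟩
      exact hroot x
    · exact Set.infinite_range_of_injective Complex.ofReal_injective
  have := congrArg (fun p => Polynomial.coeff p k) hp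
  simpa [Polynomial.finset_sum_coeff, Polynomial.coeff_C_mul, Polynomial.coeff_X_pow,
    Finset.sum_ite_eq' (Finset.range d), hk] using this

lemma ev_coeff_eq {a b : ℕ → Matrix (Fin N) (Fin N) ℂ} {d : ℕ}
    (h : ∀ x : ℝ, ev a d x = ev b d x) : ∀ k, k < d → a k = b k := by
  intro k hk
  have h0 : ∀ x : ℝ, ev (fun m => a m - b m) d x = 0 := by
    intro x; rw [ev_sub, h x, sub_self]
  have := ev_coeff_eq_zero h0 k hk
  exact sub_eq_zero.mp this


section W
variable (W : ℝ → Matrix (Fin N) (Fin N) ℂ)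

noncomputable def momM (m : ℕ) : Matrix (Fin N) (Fin N) ℂ :=
  Matrix.of fun i j => ∫ y : ℝ, (y : ℂ) ^ m * W y i j

noncomputable def ipc (c : ℕ → Matrix (Fin N) (Fin N) ℂ) (d : ℕ)
    (e : ℕ → Matrix (Fin N) (Fin N) ℂ) (d' : ℕ) : Matrix (Fin N) (Fin N) ℂ :=
  ∑ k ∈ Finset.range d, ∑ l ∈ Finset.range d', c k * momM W (k + l) * (e l)ᴴ

variable {W}

lemma ipc_addl (a b e : ℕ → Matrix (Fin N) (Fin N) ℂ) (d d' : ℕ) :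
    ipc W (fun k => a k + b k) d e d' = ipc W a d e d' + ipc W b d e d' := by
  simp [ipc, add_mul, Finset.sum_add_distrib]

lemma ipc_subl (a b e : ℕ → Matrix (Fin N) (Fin N) ℂ) (d d' : ℕ) :
    ipc W (fun k => a k - b k) d e d' = ipc W a d e d' - ipc W b d e d' := by
  simp [ipc, sub_mul, Finset.sum_sub_distrib]

lemma ipc_addr (c a b : ℕ → Matrix (Fin N) (Fin N) ℂ) (d d' : ℕ) :
    ipc W c d (fun l => a l + b l) d' = ipc W c d a d' + ipc W c d b d' := by
  simp [ipc, mul_add, Finset.sum_add_distrib]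

lemma ipc_subr (c a b : ℕ → Matrix (Fin N) (Fin N) ℂ) (d d' : ℕ) :
    ipc W c d (fun l => a l - b l) d' = ipc W c d a d' - ipc W c d b d' := by
  simp [ipc, Matrix.conjTranspose_sub, mul_sub, Finset.sum_sub_distrib]

lemma ipc_mull (c e : ℕ → Matrix (Fin N) (Fin N) ℂ) (B : Matrix (Fin N) (Fin N) ℂ) (d d' : ℕ) :
    ipc W (fun k => B * c k) d e d' = B * ipc W c d e d' := by
  simp [ipc, Finset.mul_sum, Matrix.mul_assoc]

lemma ipc_mulr (c e : ℕ → Matrix (Fin N) (Fin N) ℂ) (B : Matrix (Fin N) (Fin N) ℂ) (d d' : ℕ) :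
    ipc W c d (fun l => B * e l) d' = ipc W c d e d' * Bᴴ := by
  simp [ipc, Finset.sum_mul, Matrix.conjTranspose_mul, Matrix.mul_assoc]

lemma ipc_smull (z : ℂ) (c e : ℕ → Matrix (Fin N) (Fin N) ℂ) (d d' : ℕ) :
    ipc W (fun k => z • c k) d e d' = z • ipc W c d e d' := by
  simp [ipc, Finset.smul_sum, Matrix.smul_mul]

lemma ipc_smulr (z : ℂ) (c e : ℕ → Matrix (Fin N) (Fin N) ℂ) (d d' : ℕ) :
    ipc W c d (fun l => z • e l) d' = (starRingEnd ℂ) z • ipc W c d e d' := by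
  simp [ipc, Finset.smul_sum, Matrix.conjTranspose_smul, Matrix.mul_smul]

lemma ipc_suml {ι : Type*} (s : Finset ι) (f : ι → ℕ → Matrix (Fin N) (Fin N) ℂ)
    (e : ℕ → Matrix (Fin N) (Fin N) ℂ) (d d' : ℕ) :
    ipc W (fun k => ∑ m ∈ s, f m k) d e d' = ∑ m ∈ s, ipc W (f m) d e d' := by
  unfold ipc
  have h1 : ∀ k ∈ Finset.range d,
      ∑ l ∈ Finset.range d', (∑ m ∈ s, f m k) * momM W (k + l) * (e l)ᴴ
        = ∑ m ∈ s, ∑ l ∈ Finset.range d', f m k * momM W (k + l) * (e l)ᴴ := by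
    intro k _
    rw [Finset.sum_comm]
    refine Finset.sum_congr rfl fun l _ => ?_
    simp [Finset.sum_mul]
  rw [Finset.sum_congr rfl h1, Finset.sum_comm]

lemma ipc_sumr {ι : Type*} (s : Finset ι) (f : ι → ℕ → Matrix (Fin N) (Fin N) ℂ)
    (c : ℕ → Matrix (Fin N) (Fin N) ℂ) (d d' : ℕ) :
    ipc W c d (fun l => ∑ m ∈ s, f m l) d' = ∑ m ∈ s, ipc W c d (f m) d' := by
  unfold ipc
  have h1 : ∀ k ∈ Finset.range d,
      ∑ l ∈ Finset.range d', c k * momM W (k + l) * (∑ m ∈ s, f m l)ᴴ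
        = ∑ m ∈ s, ∑ l ∈ Finset.range d', c k * momM W (k + l) * (f m l)ᴴ := by
    intro k _
    rw [Finset.sum_comm]
    refine Finset.sum_congr rfl fun l _ => ?_
    rw [Matrix.conjTranspose_sum, Finset.mul_sum]
  rw [Finset.sum_congr rfl h1, Finset.sum_comm]

lemma ipc_padl {c : ℕ → Matrix (Fin N) (Fin N) ℂ} {d₀ d : ℕ}
    (h : ∀ k, d₀ ≤ k → c k = 0) (hd : d₀ ≤ d)
    (e : ℕ → Matrix (Fin N) (Fin N) ℂ) (d' : ℕ) :
    ipc W c d e d' = ipc W c d₀ e d' := by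
  unfold ipc
  refine (Finset.sum_subset (Finset.range_subset_range.2 hd) ?_).symm
  intro k _ hk
  rw [h k (by simpa using hk)]
  simp

lemma ipc_padr {e : ℕ → Matrix (Fin N) (Fin N) ℂ} {d₀ d' : ℕ}
    (h : ∀ l, d₀ ≤ l → e l = 0) (hd : d₀ ≤ d')
    (c : ℕ → Matrix (Fin N) (Fin N) ℂ) (d : ℕ) :
    ipc W c d e d' = ipc W c d e d₀ := by
  unfold ipc
  refine Finset.sum_congr rfl fun k _ => ?_
  refine (Finset.sum_subset (Finset.range_subset_range.2 hd) ?_).symm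
  intro l _ hl
  rw [h l (by simpa using hl)]
  simp

lemma ipc_conj (hm : ∀ m, (momM W m)ᴴ = momM W m)
    (c e : ℕ → Matrix (Fin N) (Fin N) ℂ) (d d' : ℕ) :
    (ipc W c d e d')ᴴ = ipc W e d' c d := by
  unfold ipc
  rw [Matrix.conjTranspose_sum, Finset.sum_comm]
  refine Finset.sum_congr rfl fun l _ => ?_
  rw [Matrix.conjTranspose_sum]
  refine Finset.sum_congr rfl fun k _ => ?_
  rw [Matrix.conjTranspose_mul, Matrix.conjTranspose_mul, Matrix.conjTranspose_conjTranspose,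
    hm, Matrix.mul_assoc, Nat.add_comm k l]

lemma wInt (hWmeas : ∀ i j : Fin N, Measurable fun x => W x i j)
    (hWmom : ∀ (m : ℕ) (i j : Fin N),
      Integrable fun x : ℝ => |x| ^ m * ‖W x i j‖)
    (m : ℕ) (a b : Fin N) :
    Integrable fun y : ℝ => (y : ℂ) ^ m * W y a b := by
  have hm : Measurable fun y : ℝ => (y : ℂ) ^ m * W y a b :=
    (Complex.measurable_ofReal.pow_const m).mul (hWmeas a b)
  refine (hWmom m a b).mono hm.aestronglyMeasurable ?_
  filter_upwards with y
  rw [norm_mul, norm_pow, Complex.norm_real, Real.norm_eq_abs, Real.norm_eq_abs]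
  rw [abs_mul, abs_pow, abs_abs]
  simp [abs_of_nonneg (norm_nonneg _)]

lemma momM_herm (hWpos : ∀ᵐ x : ℝ, (W x).PosDef) (m : ℕ) :
    (momM W m)ᴴ = momM W m := by
  ext i j
  rw [Matrix.conjTranspose_apply]
  show (starRingEnd ℂ) (∫ y : ℝ, (y : ℂ) ^ m * W y j i) = ∫ y : ℝ, (y : ℂ) ^ m * W y i j
  rw [← integral_conj]
  refine integral_congr_ae ?_
  filter_upwards [hWpos] with y hy
  have hh := hy.isHermitian
  have : (starRingEnd ℂ) (W y j i) = W y i j := by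
    conv_rhs => rw [← hh]
    simp [Matrix.conjTranspose_apply]
  simp only [_root_.map_mul, map_pow, Complex.conj_ofReal, this]

lemma sum_reorder4 {α : Type*} [AddCommMonoid α] (s₁ s₂ : Finset ℕ)
    (f : ℕ → ℕ → Fin N → Fin N → α) :
    ∑ b : Fin N, ∑ a : Fin N, ∑ k ∈ s₁, ∑ l ∈ s₂, f k l a b
      = ∑ k ∈ s₁, ∑ l ∈ s₂, ∑ a : Fin N, ∑ b : Fin N, f k l a b := by
  rw [Finset.sum_comm]
  calc ∑ a : Fin N, ∑ b : Fin N, ∑ k ∈ s₁, ∑ l ∈ s₂, f k l a b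
      = ∑ a : Fin N, ∑ k ∈ s₁, ∑ b : Fin N, ∑ l ∈ s₂, f k l a b :=
        Finset.sum_congr rfl fun a _ => Finset.sum_comm
    _ = ∑ a : Fin N, ∑ k ∈ s₁, ∑ l ∈ s₂, ∑ b : Fin N, f k l a b :=
        Finset.sum_congr rfl fun a _ => Finset.sum_congr rfl fun k _ => Finset.sum_comm
    _ = ∑ k ∈ s₁, ∑ a : Fin N, ∑ l ∈ s₂, ∑ b : Fin N, f k l a b := Finset.sum_comm
    _ = ∑ k ∈ s₁, ∑ l ∈ s₂, ∑ a : Fin N, ∑ b : Fin N, f k l a b :=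
        Finset.sum_congr rfl fun k _ => Finset.sum_comm

lemma ipEq (hWmeas : ∀ i j : Fin N, Measurable fun x => W x i j)
    (hWmom : ∀ (m : ℕ) (i j : Fin N),
      Integrable fun x : ℝ => |x| ^ m * ‖W x i j‖)
    (c : ℕ → Matrix (Fin N) (Fin N) ℂ) (d : ℕ)
    (e : ℕ → Matrix (Fin N) (Fin N) ℂ) (d' : ℕ) :
    matIP N W (fun x => ev c d x) (fun x => ev e d' x) = ipc W c d e d' := by
  ext i j
  show (∫ y : ℝ, (ev c d y * W y * (ev e d' y)ᴴ) i j) = ipc W c d e d' i j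
  have key : ∀ y : ℝ, (ev c d y * W y * (ev e d' y)ᴴ) i j
      = ∑ k ∈ Finset.range d, ∑ l ∈ Finset.range d', ∑ a : Fin N, ∑ b : Fin N,
          (c k i a * (starRingEnd ℂ) (e l j b)) * ((y : ℂ) ^ (k + l) * W y a b) := by
    intro y
    rw [Matrix.mul_apply]
    have expand : ∀ b : Fin N, (ev c d y * W y) i b * (ev e d' y)ᴴ b j
        = ∑ a : Fin N, ∑ k ∈ Finset.range d, ∑ l ∈ Finset.range d',
            (c k i a * (starRingEnd ℂ) (e l j b)) * ((y : ℂ) ^ (k + l) * W y a b) := by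
      intro b
      rw [Matrix.conjTranspose_apply, Matrix.mul_apply, Finset.sum_mul]
      refine Finset.sum_congr rfl fun a _ => ?_
      rw [ev_apply, ev_apply, Complex.star_def, map_sum, Finset.sum_mul, Finset.sum_mul]
      refine Finset.sum_congr rfl fun k _ => ?_
      rw [Finset.mul_sum]
      refine Finset.sum_congr rfl fun l _ => ?_
      rw [_root_.map_mul, map_pow, Complex.conj_ofReal, pow_add]
      ring
    rw [Finset.sum_congr rfl fun b _ => expand b]
    exact sum_reorder4 _ _ _
  have hint : ∀ (k l : ℕ) (a b : Fin N),
      Integrable fun y : ℝ =>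
        (c k i a * (starRingEnd ℂ) (e l j b)) * ((y : ℂ) ^ (k + l) * W y a b) :=
    fun k l a b => (wInt hWmeas hWmom (k + l) a b).const_mul _
  calc (∫ y : ℝ, (ev c d y * W y * (ev e d' y)ᴴ) i j)
      = ∫ y : ℝ, ∑ k ∈ Finset.range d, ∑ l ∈ Finset.range d', ∑ a : Fin N, ∑ b : Fin N,
          (c k i a * (starRingEnd ℂ) (e l j b)) * ((y : ℂ) ^ (k + l) * W y a b) := by
        exact integral_congr_ae (Filter.Eventually.of_forall key)
    _ = ∑ k ∈ Finset.range d, ∑ l ∈ Finset.range d', ∑ a : Fin N, ∑ b : Fin N,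
          ∫ y : ℝ, (c k i a * (starRingEnd ℂ) (e l j b)) * ((y : ℂ) ^ (k + l) * W y a b) := by
        rw [integral_finset_sum _ fun k _ => integrable_finset_sum _ fun l _ =>
          integrable_finset_sum _ fun a _ => integrable_finset_sum _ fun b _ => hint k l a b]
        refine Finset.sum_congr rfl fun k _ => ?_
        rw [integral_finset_sum _ fun l _ => integrable_finset_sum _ fun a _ =>
          integrable_finset_sum _ fun b _ => hint k l a b]
        refine Finset.sum_congr rfl fun l _ => ?_
        rw [integral_finset_sum _ fun a _ => integrable_finset_sum _ fun b _ => hint k l a b]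
        refine Finset.sum_congr rfl fun a _ => ?_
        exact integral_finset_sum _ fun b _ => hint k l a b
    _ = ipc W c d e d' i j := by
        unfold ipc
        rw [Matrix.sum_apply]
        refine Finset.sum_congr rfl fun k _ => ?_
        rw [Matrix.sum_apply]
        refine Finset.sum_congr rfl fun l _ => ?_
        have hm : ∀ a b : Fin N, (∫ y : ℝ, (y : ℂ) ^ (k + l) * W y a b) = momM W (k + l) a b :=
          fun a b => rfl
        have hr : (c k * momM W (k + l) * (e l)ᴴ) i j
            = ∑ b : Fin N, ∑ a : Fin N,
                c k i a * momM W (k + l) a b * (starRingEnd ℂ) (e l j b) := by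
          rw [Matrix.mul_apply]
          refine Finset.sum_congr rfl fun b _ => ?_
          rw [Matrix.conjTranspose_apply, Matrix.mul_apply, Finset.sum_mul]
          refine Finset.sum_congr rfl fun a _ => ?_
          rw [Complex.star_def]
        rw [hr, Finset.sum_comm]
        refine Finset.sum_congr rfl fun a _ => Finset.sum_congr rfl fun b _ => ?_
        rw [integral_const_mul, hm]
        ring

end W

lemma ev_deriv (c : ℕ → Matrix (Fin N) (Fin N) ℂ) (d : ℕ) (y : ℝ) :
    matDeriv N (fun x => ev c d x) y
      = ev (fun k => (((k : ℕ) + 1 : ℕ) : ℂ) • c (k + 1)) (d - 1) y := by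
  ext i j
  show deriv (fun x : ℝ => ev c d x i j) y = _
  have hder : HasDerivAt (fun x : ℝ => ev c d x i j)
      (∑ k ∈ Finset.range d, (k : ℂ) * (y : ℂ) ^ (k - 1) * c k i j) y := by
    have : ∀ x : ℝ, ev c d x i j = ∑ k ∈ Finset.range d, (x : ℂ) ^ k * c k i j :=
      fun x => ev_apply c d x i j
    rw [funext this]
    apply HasDerivAt.fun_sum
    intro k _
    have h1 : HasDerivAt (fun z : ℂ => z ^ k * c k i j)
        ((k : ℂ) * (y : ℂ) ^ (k - 1) * c k i j) (y : ℂ) :=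
      (hasDerivAt_pow k (y : ℂ)).mul_const _
    exact h1.comp_ofReal
  rw [hder.deriv]
  rw [ev_apply]
  rcases d with - | m
  · simp
  · rw [Finset.sum_range_succ']
    simp only [Nat.cast_zero, zero_mul, zero_add, Nat.succ_sub_one, Nat.add_sub_cancel,
      Matrix.smul_apply, smul_eq_mul, add_zero]
    refine Finset.sum_congr rfl fun k _ => ?_
    push_cast
    ring

lemma span_exists (pc : ℕ → ℕ → Matrix (Fin N) (Fin N) ℂ) (hpc1 : ∀ n, pc n n = 1) :
    ∀ (d : ℕ) (q : ℕ → Matrix (Fin N) (Fin N) ℂ), ∃ B : ℕ → Matrix (Fin N) (Fin N) ℂ,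
      ∀ x : ℝ, ev q d x = ∑ k ∈ Finset.range d, B k * ev (pc k) (k + 1) x := by
  intro d
  induction d with
  | zero => intro q; exact ⟨fun _ => 0, fun x => by simp [ev]⟩
  | succ d ih =>
    intro q
    obtain ⟨B', hB'⟩ := ih (fun j => q j - q d * pc d j)
    refine ⟨fun k => if k = d then q d else B' k, fun x => ?_⟩
    have h1 : ev q (d + 1) x
        = ev (fun j => q j - q d * pc d j) (d + 1) x + q d * ev (pc d) (d + 1) x := by
      rw [← ev_mull, ← ev_add]
      refine Finset.sum_congr rfl fun k _ => ?_
      simp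
    have h2 : ev (fun j => q j - q d * pc d j) (d + 1) x
        = ev (fun j => q j - q d * pc d j) d x := by
      unfold ev
      rw [Finset.sum_range_succ]
      simp [hpc1 d]
    rw [h1, h2, hB' x, Finset.sum_range_succ]
    simp only [if_pos rfl]
    congr 1
    refine Finset.sum_congr rfl fun k hk => ?_
    rw [if_neg (Nat.ne_of_lt (Finset.mem_range.mp hk))]

end HNR

/-- **Recursion for the squared norms in the Hermite case** (Lemma 5.1 of the paper):
if `𝒟 = ∂_x + A` has adjoint `−𝒟 + 2x + t` with respect to the matrix weight `W̃`,
then the squared norms `ℋ̃(n)` of the monic MVOPs satisfy the stated second order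
recursion with initial condition coming from `C(0) = 0`. -/
theorem hermite_norm_recursion
    (N : ℕ) (hN : 1 ≤ N) (t : ℝ)
    (A : Matrix (Fin N) (Fin N) ℂ)
    (W : ℝ → Matrix (Fin N) (Fin N) ℂ)
    (hWmeas : ∀ i j : Fin N, Measurable fun x => W x i j)
    (hWpos : ∀ᵐ x : ℝ, (W x).PosDef)
    (hWmom : ∀ (m : ℕ) (i j : Fin N),
      Integrable fun x : ℝ => |x| ^ m * ‖W x i j‖)
    (P : ℕ → ℝ → Matrix (Fin N) (Fin N) ℂ)
    (hPmonic : ∀ n, IsMonicMatPoly N n (P n))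
    (hPorth : ∀ n m, n ≠ m → matIP N W (P n) (P m) = 0)
    (hHpos : ∀ n, (matIP N W (P n) (P n)).PosDef)
    (hadj : ∀ R S : ℝ → Matrix (Fin N) (Fin N) ℂ, IsMatPoly N R → IsMatPoly N S →
      matInt N (fun y => (matDeriv N R y + R y * A) * W y * (S y)ᴴ) =
      matInt N (fun y => R y * W y *
        (-(matDeriv N S y) - S y * A + ((2 * y + t : ℝ) : ℂ) • S y)ᴴ))
    :
    (∀ n : ℕ, 1 ≤ n →
      matIP N W (P (n + 1)) (P (n + 1)) =
        (1 / 2 : ℂ) • matIP N W (P n) (P n) +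
          matIP N W (P n) (P n) * (matIP N W (P (n - 1)) (P (n - 1)))⁻¹ *
            matIP N W (P n) (P n) -
          (1 / 4 : ℂ) • (matIP N W (P n) (P n) * Aᴴ * (matIP N W (P n) (P n))⁻¹ *
            A * matIP N W (P n) (P n)) +
          (1 / 4 : ℂ) • (A * matIP N W (P n) (P n) * Aᴴ)) ∧
    matIP N W (P 1) (P 1) =
      (1 / 2 : ℂ) • matIP N W (P 0) (P 0) -
        (1 / 4 : ℂ) • (matIP N W (P 0) (P 0) * Aᴴ * (matIP N W (P 0) (P 0))⁻¹ *
          A * matIP N W (P 0) (P 0)) +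
        (1 / 4 : ℂ) • (A * matIP N W (P 0) (P 0) * Aᴴ) := by
  classical
  open HNR in
  -- ### coefficient data of the monic polynomials
  obtain ⟨pc, hpc1, hpc0, hP⟩ : ∃ pc : ℕ → ℕ → Matrix (Fin N) (Fin N) ℂ,
      (∀ n, pc n n = 1) ∧ (∀ n k, n < k → pc n k = 0) ∧
      (∀ n, P n = fun x => HNR.ev (pc n) (n + 1) x) := by
    refine ⟨fun n k => if k ≤ n then Classical.choose (hPmonic n) k else 0,
      fun n => ?_, fun n k hk => ?_, fun n => ?_⟩
    · simp [(Classical.choose_spec (hPmonic n)).1]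
    · dsimp only
      rw [if_neg (by omega)]
    · funext x
      rw [(Classical.choose_spec (hPmonic n)).2 x]
      refine Finset.sum_congr rfl fun k hk => ?_
      dsimp only
      rw [if_pos (Nat.lt_succ_iff.mp (Finset.mem_range.mp hk))]
  set Hm : ℕ → Matrix (Fin N) (Fin N) ℂ := fun n => matIP N W (P n) (P n) with hHm
  -- ### bridges to ipc
  have ipE : ∀ (c : ℕ → Matrix (Fin N) (Fin N) ℂ) (d : ℕ)
      (e : ℕ → Matrix (Fin N) (Fin N) ℂ) (d' : ℕ),
      matIP N W (fun x => HNR.ev c d x) (fun x => HNR.ev e d' x) = HNR.ipc W c d e d' :=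
    fun c d e d' => HNR.ipEq hWmeas hWmom c d e d'
  have hipP : ∀ n m, matIP N W (P n) (P m) = HNR.ipc W (pc n) (n + 1) (pc m) (m + 1) := by
    intro n m
    rw [hP n, hP m]
    exact ipE _ _ _ _
  have horthI : ∀ n m, n ≠ m → HNR.ipc W (pc n) (n + 1) (pc m) (m + 1) = 0 := by
    intro n m h
    rw [← hipP]
    exact hPorth n m h
  have hHmk : ∀ k, Hm k = matIP N W (P k) (P k) := fun k => rfl
  have hHip : ∀ n, Hm n = HNR.ipc W (pc n) (n + 1) (pc n) (n + 1) := fun n => hipP n n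
  have hHherm : ∀ n, (Hm n)ᴴ = Hm n := fun n => (hHpos n).isHermitian
  have hHunit : ∀ n, IsUnit (Hm n).det :=
    fun n => isUnit_iff_ne_zero.mpr (ne_of_gt ((hHpos n).det_pos))
  have hHinvr : ∀ n, Hm n * (Hm n)⁻¹ = 1 := fun n => Matrix.mul_nonsing_inv _ (hHunit n)
  have hHinvl : ∀ n, (Hm n)⁻¹ * Hm n = 1 := fun n => Matrix.nonsing_inv_mul _ (hHunit n)
  have hmomH : ∀ m, (HNR.momM W m)ᴴ = HNR.momM W m := HNR.momM_herm hWpos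
  -- ### expansion in the orthogonal family
  have hevP : ∀ (k d : ℕ) (x : ℝ), k + 1 ≤ d → HNR.ev (pc k) d x = HNR.ev (pc k) (k + 1) x :=
    fun k d x h => HNR.ev_pad (fun j hj => hpc0 k j (by omega)) h x
  have hqr : ∀ (q : ℕ → Matrix (Fin N) (Fin N) ℂ) (d : ℕ),
      ∃ B : ℕ → Matrix (Fin N) (Fin N) ℂ,
        ∀ j, j < d → q j = ∑ m ∈ Finset.range d, B m * pc m j := by
    intro q d
    obtain ⟨B, hB⟩ := HNR.span_exists pc hpc1 d q
    refine ⟨B, ?_⟩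
    have heq : ∀ x : ℝ,
        HNR.ev q d x = HNR.ev (fun j => ∑ m ∈ Finset.range d, B m * pc m j) d x := by
      intro x
      rw [hB x, HNR.ev_sum]
      refine Finset.sum_congr rfl fun m hm => ?_
      rw [HNR.ev_mull, hevP m d x (Finset.mem_range.mp hm)]
    exact fun j hj => HNR.ev_coeff_eq heq j hj
  have hexp : ∀ (q : ℕ → Matrix (Fin N) (Fin N) ℂ) (d : ℕ),
      ∃ B : ℕ → Matrix (Fin N) (Fin N) ℂ,
        (∀ j, j < d → q j = ∑ m ∈ Finset.range d, B m * pc m j) ∧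
        (∀ k, k < d → HNR.ipc W q d (pc k) (k + 1) = B k * Hm k) := by
    intro q d
    obtain ⟨B, hB⟩ := hqr q d
    refine ⟨B, hB, fun k hk => ?_⟩
    have h1 : HNR.ipc W q d (pc k) (k + 1)
        = HNR.ipc W (fun j => ∑ m ∈ Finset.range d, B m * pc m j) d (pc k) (k + 1) := by
      unfold HNR.ipc
      exact Finset.sum_congr rfl fun j hj => by
        rw [hB j (Finset.mem_range.mp hj)]
    rw [h1, HNR.ipc_suml]
    rw [Finset.sum_eq_single k]
    · rw [HNR.ipc_mull, HNR.ipc_padl (fun j hj => hpc0 k j (by omega))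
        (Nat.succ_le_of_lt hk), ← hHip k]
    · intro m _ hmk
      rw [HNR.ipc_mull, HNR.ipc_padl (fun j hj => hpc0 m j (by omega))
        (Nat.succ_le_of_lt (Finset.mem_range.mp ‹m ∈ Finset.range d›)), horthI m k hmk, mul_zero]
    · intro hkk
      exact absurd (Finset.mem_range.mpr hk) hkk
  have hzero : ∀ (q : ℕ → Matrix (Fin N) (Fin N) ℂ) (d : ℕ),
      (∀ k, k < d → HNR.ipc W q d (pc k) (k + 1) = 0) → ∀ j, j < d → q j = 0 := by
    intro q d h j hj
    obtain ⟨B, hB, hBip⟩ := hexp q d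
    have hB0 : ∀ m, m < d → B m = 0 := by
      intro m hm
      have h2 : B m * Hm m = 0 := (hBip m hm).symm.trans (h m hm)
      have h3 := congrArg (fun X => X * (Hm m)⁻¹) h2
      simpa [Matrix.mul_assoc, hHinvr m] using h3
    rw [hB j hj]
    exact Finset.sum_eq_zero fun m hm => by
      rw [hB0 m (Finset.mem_range.mp hm), zero_mul]
  -- ### orthogonality to lower-degree polynomials
  have horthR : ∀ (n d : ℕ) (q : ℕ → Matrix (Fin N) (Fin N) ℂ), d ≤ n →
      HNR.ipc W (pc n) (n + 1) q d = 0 := by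
    intro n d q hdn
    obtain ⟨B, hB⟩ := hqr q d
    have h1 : HNR.ipc W (pc n) (n + 1) q d
        = HNR.ipc W (pc n) (n + 1) (fun j => ∑ m ∈ Finset.range d, B m * pc m j) d := by
      unfold HNR.ipc
      refine Finset.sum_congr rfl fun k _ => Finset.sum_congr rfl fun l hl => ?_
      rw [hB l (Finset.mem_range.mp hl)]
    rw [h1, HNR.ipc_sumr]
    refine Finset.sum_eq_zero fun m hm => ?_
    have hmd : m < d := Finset.mem_range.mp hm
    rw [HNR.ipc_mulr, HNR.ipc_padr (fun j hj => hpc0 m j (by omega)) (Nat.succ_le_of_lt hmd),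
      horthI n m (by omega), zero_mul]
  have horthL : ∀ (n d : ℕ) (q : ℕ → Matrix (Fin N) (Fin N) ℂ), d ≤ n →
      HNR.ipc W q d (pc n) (n + 1) = 0 := by
    intro n d q hdn
    obtain ⟨B, hB⟩ := hqr q d
    have h1 : HNR.ipc W q d (pc n) (n + 1)
        = HNR.ipc W (fun j => ∑ m ∈ Finset.range d, B m * pc m j) d (pc n) (n + 1) := by
      unfold HNR.ipc
      refine Finset.sum_congr rfl fun k hk => Finset.sum_congr rfl fun l _ => ?_
      rw [hB k (Finset.mem_range.mp hk)]
    rw [h1, HNR.ipc_suml]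
    refine Finset.sum_eq_zero fun m hm => ?_
    have hmd : m < d := Finset.mem_range.mp hm
    rw [HNR.ipc_mull, HNR.ipc_padl (fun j hj => hpc0 m j (by omega)) (Nat.succ_le_of_lt hmd),
      horthI m n (by omega), mul_zero]
  -- ### the operators D and D-dagger on coefficients
  set dcf : ℕ → ℕ → Matrix (Fin N) (Fin N) ℂ :=
    fun n k => (((k + 1 : ℕ)) : ℂ) • pc n (k + 1) with hdcf
  set Dc : ℕ → ℕ → Matrix (Fin N) (Fin N) ℂ := fun n j => dcf n j + pc n j * A with hDcdef
  set Dg : ℕ → ℕ → Matrix (Fin N) (Fin N) ℂ := fun m j =>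
    -(dcf m j) - pc m j * A + (2 : ℂ) • (if j = 0 then 0 else pc m (j - 1))
      + (t : ℂ) • pc m j with hDgdef
  have hdcf0 : ∀ n j, n ≤ j → dcf n j = 0 := by
    intro n j hj
    rw [hdcf]
    dsimp only
    rw [hpc0 n (j + 1) (by omega), smul_zero]
  -- derivative of P n  as coefficients
  have hderP : ∀ (n : ℕ) (y : ℝ), matDeriv N (P n) y = HNR.ev (dcf n) n y := by
    intro n y
    rw [hP n, HNR.ev_deriv, hdcf]
    dsimp only
    rfl
  have eL : ∀ n : ℕ, (fun y => matDeriv N (P n) y + P n y * A)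
      = fun y => HNR.ev (Dc n) (n + 1) y := by
    intro n
    funext y
    rw [hderP n y, hP n, hDcdef]
    dsimp only
    rw [HNR.ev_add, HNR.ev_mulr]
    congr 1
    exact (HNR.ev_pad (fun j hj => hdcf0 n j hj) (Nat.le_succ n) y).symm
  have eR : ∀ m : ℕ, (fun y => -(matDeriv N (P m) y) - P m y * A + ((2 * y + t : ℝ) : ℂ) • P m y)
      = fun y => HNR.ev (Dg m) (m + 1 + 1) y := by
    intro m
    funext y
    rw [hderP m y, hP m, hDgdef]
    dsimp only
    rw [HNR.ev_add, HNR.ev_add, HNR.ev_sub, HNR.ev_neg, HNR.ev_mulr, HNR.ev_smul, HNR.ev_smul,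
      HNR.ev_shift]
    rw [HNR.ev_pad (fun j hj => hdcf0 m j hj) (show m ≤ m + 1 + 1 by omega) y]
    rw [hevP m (m + 1 + 1) y (by omega)]
    have hcast : ((2 * y + t : ℝ) : ℂ) = 2 * (y : ℂ) + (t : ℂ) := by push_cast; ring
    rw [hcast, add_smul, mul_smul]
    module
  -- ### adjointness at the coefficient level
  have hadjIP : ∀ R S : ℝ → Matrix (Fin N) (Fin N) ℂ, IsMatPoly N R → IsMatPoly N S →
      matIP N W (fun y => matDeriv N R y + R y * A) S
        = matIP N W R (fun y => -(matDeriv N S y) - S y * A + ((2 * y + t : ℝ) : ℂ) • S y) :=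
    fun R S hR hS => hadj R S hR hS
  have hPpoly : ∀ n, IsMatPoly N (P n) := by
    intro n
    exact ⟨n, pc n, fun x => by rw [hP n]; rfl⟩
  have hKey : ∀ n m : ℕ, HNR.ipc W (Dc n) (n + 1) (pc m) (m + 1)
      = HNR.ipc W (pc n) (n + 1) (Dg m) (m + 1 + 1) := by
    intro n m
    calc HNR.ipc W (Dc n) (n + 1) (pc m) (m + 1)
        = matIP N W (fun x => HNR.ev (Dc n) (n + 1) x) (fun x => HNR.ev (pc m) (m + 1) x) :=
          (ipE _ _ _ _).symm
      _ = matIP N W (fun y => matDeriv N (P n) y + P n y * A) (P m) := by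
          rw [hP m, ← eL n]
      _ = matIP N W (P n)
            (fun y => -(matDeriv N (P m) y) - P m y * A + ((2 * y + t : ℝ) : ℂ) • P m y) :=
          hadjIP (P n) (P m) (hPpoly n) (hPpoly m)
      _ = matIP N W (fun x => HNR.ev (pc n) (n + 1) x) (fun x => HNR.ev (Dg m) (m + 1 + 1) x) := by
          rw [eR m, ← hP n]
      _ = HNR.ipc W (pc n) (n + 1) (Dg m) (m + 1 + 1) := ipE _ _ _ _
  -- ### <D P_n, P_n> = A * H n
  have hDPself : ∀ n, HNR.ipc W (Dc n) (n + 1) (pc n) (n + 1) = A * Hm n := by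
    intro n
    have hc : (fun j => A * pc n j + (Dc n j - A * pc n j)) = Dc n :=
      funext fun j => by rw [add_sub_cancel]
    rw [← hc, HNR.ipc_addl, HNR.ipc_mull, ← hHip n]
    have hr0 : ∀ j, n ≤ j → Dc n j - A * pc n j = 0 := by
      intro j hj
      rcases Nat.eq_or_lt_of_le hj with h | h
      · rw [hDcdef]
        dsimp only
        rw [← h, hdcf0 n n le_rfl, hpc1 n, zero_add, one_mul, mul_one, sub_self]
      · rw [hDcdef]
        dsimp only
        rw [hdcf0 n j hj, hpc0 n j h, zero_add, zero_mul, mul_zero, sub_self]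
    rw [HNR.ipc_padl hr0 (Nat.le_succ n), horthL n n _ le_rfl, add_zero]
  have hconj2 : (starRingEnd ℂ) (2 : ℂ) = 2 := by
    rw [Complex.conj_eq_iff_im]
    norm_num
  have hstar2 : star (2 : ℂ) = 2 := by
    rw [Complex.star_def, Complex.conj_eq_iff_im]
    norm_num
  -- ### first structure relation
  have D1 : ∀ m j, j < m + 1 + 1 →
      Dc (m + 1) j = A * pc (m + 1) j + ((2 : ℂ) • (Hm (m + 1) * (Hm m)⁻¹)) * pc m j := by
    intro m
    have hqz : ∀ j, j < m + 1 + 1 →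
        Dc (m + 1) j - A * pc (m + 1) j - ((2 : ℂ) • (Hm (m + 1) * (Hm m)⁻¹)) * pc m j = 0 := by
      apply hzero _ (m + 1 + 1)
      intro k hk
      rw [HNR.ipc_subl, HNR.ipc_subl, HNR.ipc_mull, HNR.ipc_mull]
      rcases Nat.lt_succ_iff_lt_or_eq.mp hk with hk' | heq1
      · rcases Nat.lt_succ_iff_lt_or_eq.mp hk' with hk'' | heq2
        · -- k < m
          rw [hKey (m + 1) k, horthR (m + 1) (k + 1 + 1) (Dg k) (by omega),
            horthI (m + 1) k (by omega),
            HNR.ipc_padl (fun j hj => hpc0 m j (by omega)) (by omega : m + 1 ≤ m + 1 + 1)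
              (pc k) (k + 1),
            horthI m k (by omega)]
          simp
        · -- k = m
          rw [heq2]
          rw [hKey (m + 1) m]
          have hc : (fun j => (2 : ℂ) • pc (m + 1) j + (Dg m j - (2 : ℂ) • pc (m + 1) j))
              = Dg m := funext fun j => by rw [add_sub_cancel]
          rw [← hc, HNR.ipc_addr, HNR.ipc_smulr]
          have hs0 : ∀ j, m + 1 ≤ j → Dg m j - (2 : ℂ) • pc (m + 1) j = 0 := by
            intro j hj
            rw [hDgdef, hdcf]
            dsimp only
            rcases Nat.eq_or_lt_of_le hj with h | h
            · rw [← h]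
              rw [hpc0 m (m + 1 + 1) (by omega), hpc0 m (m + 1) (by omega),
                if_neg (Nat.succ_ne_zero m), Nat.add_sub_cancel, hpc1 m, hpc1 (m + 1)]
              simp
            · rw [hpc0 m (j + 1) (by omega), hpc0 m j (by omega), hpc0 (m + 1) j (by omega),
                if_neg (by omega : ¬ j = 0), hpc0 m (j - 1) (by omega)]
              simp
          rw [HNR.ipc_padr hs0 (by omega : m + 1 ≤ m + 1 + 1), horthR (m + 1) (m + 1) _ le_rfl,
            ← hHip (m + 1), horthI (m + 1) m (by omega),
            HNR.ipc_padl (fun j hj => hpc0 m j (by omega)) (by omega : m + 1 ≤ m + 1 + 1)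
              (pc m) (m + 1),
            ← hHip m]
          rw [hconj2, Matrix.smul_mul, Matrix.mul_assoc, hHinvl m, Matrix.mul_one]
          simp
      · -- k = m + 1
        rw [heq1]
        rw [hDPself (m + 1), ← hHip (m + 1),
          HNR.ipc_padl (fun j hj => hpc0 m j (by omega)) (by omega : m + 1 ≤ m + 1 + 1)
            (pc (m + 1)) (m + 1 + 1),
          horthI m (m + 1) (by omega)]
        simp
    intro j hj
    have h := hqz j hj
    rw [sub_sub, sub_eq_zero] at h
    exact h
  -- ### second structure relation
  have D2 : ∀ n j, j < n + 1 + 1 →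
      Dg n j = (2 : ℂ) • pc (n + 1) j + (Hm n * Aᴴ * (Hm n)⁻¹) * pc n j := by
    intro n
    have hqz : ∀ j, j < n + 1 + 1 →
        Dg n j - (2 : ℂ) • pc (n + 1) j - (Hm n * Aᴴ * (Hm n)⁻¹) * pc n j = 0 := by
      apply hzero _ (n + 1 + 1)
      intro k hk
      rw [HNR.ipc_subl, HNR.ipc_subl, HNR.ipc_mull, HNR.ipc_smull]
      rw [← HNR.ipc_conj hmomH (pc k) (Dg n) (k + 1) (n + 1 + 1), ← hKey k n]
      rcases Nat.lt_succ_iff_lt_or_eq.mp hk with hk' | heq1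
      · rcases Nat.lt_succ_iff_lt_or_eq.mp hk' with hk'' | heq2
        · -- k < n
          rw [horthL n (k + 1) (Dc k) (by omega), horthI (n + 1) k (by omega),
            HNR.ipc_padl (fun j hj => hpc0 n j (by omega)) (by omega : n + 1 ≤ n + 1 + 1)
              (pc k) (k + 1),
            horthI n k (by omega)]
          simp
        · -- k = n
          rw [heq2]
          rw [hDPself n, horthI (n + 1) n (by omega),
            HNR.ipc_padl (fun j hj => hpc0 n j (by omega)) (by omega : n + 1 ≤ n + 1 + 1)
              (pc n) (n + 1),
            ← hHip n]
          rw [Matrix.conjTranspose_mul, hHherm n]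
          rw [Matrix.mul_assoc (Hm n * Aᴴ) ((Hm n)⁻¹) (Hm n), hHinvl n, Matrix.mul_one]
          simp
      · -- k = n + 1
        rw [heq1]
        have hcoe : HNR.ipc W (Dc (n + 1)) (n + 1 + 1) (pc n) (n + 1)
            = HNR.ipc W (fun j => A * pc (n + 1) j
                + ((2 : ℂ) • (Hm (n + 1) * (Hm n)⁻¹)) * pc n j) (n + 1 + 1) (pc n) (n + 1) := by
          unfold HNR.ipc
          refine Finset.sum_congr rfl fun j hj => Finset.sum_congr rfl fun l _ => ?_
          rw [D1 n j (Finset.mem_range.mp hj)]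
        rw [hcoe, HNR.ipc_addl, HNR.ipc_mull, HNR.ipc_mull,
          horthI (n + 1) n (by omega),
          HNR.ipc_padl (fun j hj => hpc0 n j (by omega)) (by omega : n + 1 ≤ n + 1 + 1)
            (pc n) (n + 1),
          ← hHip n, ← hHip (n + 1)]
        rw [Matrix.smul_mul, Matrix.mul_assoc, hHinvl n, Matrix.mul_one]
        rw [mul_zero, zero_add, Matrix.conjTranspose_smul, hHherm (n + 1), hstar2,
          HNR.ipc_padl (fun j hj => hpc0 n j (by omega)) (by omega : n + 1 ≤ n + 1 + 1)
            (pc (n + 1)) (n + 1 + 1),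
          horthI n (n + 1) (by omega)]
        simp
    intro j hj
    have h := hqz j hj
    rw [sub_sub, sub_eq_zero] at h
    exact h
  -- ### coefficient identities
  have alpha : ∀ m : ℕ, (2 : ℂ) • (Hm (m + 1) * (Hm m)⁻¹)
      = ((m + 1 : ℕ) : ℂ) • 1 + pc (m + 1) m * A - A * pc (m + 1) m := by
    intro m
    have h := D1 m m (by omega)
    rw [hDcdef, hdcf] at h
    dsimp only at h
    rw [hpc1 (m + 1), hpc1 m, mul_one] at h
    rw [h]
    abel
  have beta : ∀ n : ℕ, -A + (2 : ℂ) • (if n = 0 then 0 else pc n (n - 1)) + (t : ℂ) • 1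
      = (2 : ℂ) • pc (n + 1) n + Hm n * Aᴴ * (Hm n)⁻¹ := by
    intro n
    have h := D2 n n (by omega)
    rw [hDgdef, hdcf] at h
    dsimp only at h
    rw [hpc0 n (n + 1) (by omega), smul_zero, neg_zero, zero_sub, hpc1 n, one_mul, mul_one] at h
    exact h
  -- ### the recursion and the initial condition
  constructor
  · intro n hn
    obtain ⟨m, rfl⟩ : ∃ m, n = m + 1 := ⟨n - 1, by omega⟩
    simp only [Nat.add_sub_cancel]
    have hb := beta (m + 1)
    rw [if_neg (Nat.succ_ne_zero m), Nat.add_sub_cancel] at hb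
    -- hb : -A + 2 • pc (m+1) m + t • 1 = 2 • pc (m+1+1) (m+1) + Hm (m+1) * Aᴴ * (Hm (m+1))⁻¹
    have hX2 : pc (m + 1 + 1) (m + 1)
        = pc (m + 1) m - (1/2 : ℂ) • A - (1/2 : ℂ) • (Hm (m + 1) * Aᴴ * (Hm (m + 1))⁻¹)
          + ((t : ℂ)/2) • 1 := by
      have h2 : (2 : ℂ) • pc (m + 1 + 1) (m + 1)
          = (2 : ℂ) • (pc (m + 1) m - (1/2 : ℂ) • A
            - (1/2 : ℂ) • (Hm (m + 1) * Aᴴ * (Hm (m + 1))⁻¹) + ((t : ℂ)/2) • 1) := by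
        linear_combination (norm := module) -hb
      have h3 := congrArg (fun X => (1/2 : ℂ) • X) h2
      simpa [smul_smul] using h3
    have hC2C1 : (2 : ℂ) • (Hm (m + 1 + 1) * (Hm (m + 1))⁻¹)
        = (2 : ℂ) • (Hm (m + 1) * (Hm m)⁻¹) + 1
          - (1/2 : ℂ) • (Hm (m + 1) * Aᴴ * (Hm (m + 1))⁻¹ * A)
          + (1/2 : ℂ) • (A * (Hm (m + 1) * Aᴴ * (Hm (m + 1))⁻¹)) := by
      rw [alpha (m + 1), alpha m, hX2]
      have hcast : ((m + 1 + 1 : ℕ) : ℂ) = ((m + 1 : ℕ) : ℂ) + 1 := by push_cast; ring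
      rw [hcast]
      simp only [sub_mul, mul_sub, add_mul, mul_add, Matrix.smul_mul, Matrix.mul_smul,
        Matrix.mul_one, Matrix.one_mul, add_smul, one_smul]
      module
    have h2H : (2 : ℂ) • Hm (m + 1 + 1)
        = ((2 : ℂ) • (Hm (m + 1) * (Hm m)⁻¹) + 1
          - (1/2 : ℂ) • (Hm (m + 1) * Aᴴ * (Hm (m + 1))⁻¹ * A)
          + (1/2 : ℂ) • (A * (Hm (m + 1) * Aᴴ * (Hm (m + 1))⁻¹))) * Hm (m + 1) := by
      rw [← hC2C1, Matrix.smul_mul, Matrix.mul_assoc, hHinvl (m + 1), Matrix.mul_one]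
    have hAF : A * (Hm (m + 1) * Aᴴ * (Hm (m + 1))⁻¹) * Hm (m + 1)
        = A * Hm (m + 1) * Aᴴ := by
      rw [Matrix.mul_assoc A (Hm (m + 1) * Aᴴ * (Hm (m + 1))⁻¹) (Hm (m + 1)),
        Matrix.mul_assoc (Hm (m + 1) * Aᴴ) ((Hm (m + 1))⁻¹) (Hm (m + 1)), hHinvl (m + 1),
        Matrix.mul_one, ← Matrix.mul_assoc]
    have hfin := congrArg (fun X => (1/2 : ℂ) • X) h2H
    rw [smul_smul] at hfin
    norm_num at hfin
    rw [← hHmk (m + 1 + 1), ← hHmk (m + 1), ← hHmk m]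
    rw [hfin]
    simp only [add_mul, sub_mul, Matrix.smul_mul, Matrix.one_mul]
    rw [hAF]
    module
  · -- initial condition
    have hb := beta 0
    rw [if_pos rfl, smul_zero, add_zero] at hb
    have hX1 : pc 1 0 = - (1/2 : ℂ) • A - (1/2 : ℂ) • (Hm 0 * Aᴴ * (Hm 0)⁻¹)
        + ((t : ℂ)/2) • 1 := by
      have h2 : (2 : ℂ) • pc 1 0
          = (2 : ℂ) • (- (1/2 : ℂ) • A - (1/2 : ℂ) • (Hm 0 * Aᴴ * (Hm 0)⁻¹)
            + ((t : ℂ)/2) • 1) := by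
        linear_combination (norm := module) -hb
      have h3 := congrArg (fun X => (1/2 : ℂ) • X) h2
      simpa [smul_smul] using h3
    have hC1 : (2 : ℂ) • (Hm 1 * (Hm 0)⁻¹)
        = 1 - (1/2 : ℂ) • (Hm 0 * Aᴴ * (Hm 0)⁻¹ * A)
          + (1/2 : ℂ) • (A * (Hm 0 * Aᴴ * (Hm 0)⁻¹)) := by
      rw [alpha 0, hX1]
      norm_num
      simp only [sub_mul, mul_sub, add_mul, mul_add, Matrix.smul_mul, Matrix.mul_smul,
        Matrix.mul_one, Matrix.one_mul, add_smul, one_smul, neg_mul, mul_neg, smul_neg]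
      module
    have h2H : (2 : ℂ) • Hm 1
        = (1 - (1/2 : ℂ) • (Hm 0 * Aᴴ * (Hm 0)⁻¹ * A)
          + (1/2 : ℂ) • (A * (Hm 0 * Aᴴ * (Hm 0)⁻¹))) * Hm 0 := by
      rw [← hC1, Matrix.smul_mul, Matrix.mul_assoc, hHinvl 0, Matrix.mul_one]
    have hAF : A * (Hm 0 * Aᴴ * (Hm 0)⁻¹) * Hm 0 = A * Hm 0 * Aᴴ := by
      rw [Matrix.mul_assoc A (Hm 0 * Aᴴ * (Hm 0)⁻¹) (Hm 0),
        Matrix.mul_assoc (Hm 0 * Aᴴ) ((Hm 0)⁻¹) (Hm 0), hHinvl 0,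
        Matrix.mul_one, ← Matrix.mul_assoc]
    have hfin := congrArg (fun X => (1/2 : ℂ) • X) h2H
    rw [smul_smul] at hfin
    norm_num at hfin
    rw [← hHmk 1, ← hHmk 0]
    rw [hfin]
    simp only [add_mul, sub_mul, Matrix.smul_mul, Matrix.one_mul]
    rw [hAF]
    module
end
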